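/- arXiv:1612.03793 — 4 statements merged into one kernel-verified Lean document; each statement's English description precedes it below -/
import Mathlib

section
/- Let M(λ) = M_0 + M_1λ + ⋯ + M_dλ^d ∈ F[λ]^{m×(m+n)} be a polynomial matrix of degree at most d, let α_k be the number of right minimal indices of M(λ) equal to k, and let k' = ⌈md/n⌉ and t = nk' − md. Then M(λ) has full-Sylvester-rank if and only if M(λ) has full row normal rank m and its right minimal indices satisfy α_{k'−1} = t, α_{k'} = n − t, and α_j = 0 for all j ∉ {k'−1, k'}. -/
open Polynomial Matrix

set_option synthInstance.maxHeartbeats 400000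
set_option maxHeartbeats 1000000

noncomputable section

variable {F : Type*} [Field F]

/-- The rows of a polynomial matrix, viewed as vectors of rational functions. -/
def ratRow {p q : ℕ} (M : Matrix (Fin p) (Fin q) F[X]) (i : Fin p) :
    Fin q → RatFunc F :=
  fun j => algebraMap F[X] (RatFunc F) (M i j)

/-- The rational vector subspace spanned by the rows of a polynomial matrix. -/
def rowSpan {p q : ℕ} (M : Matrix (Fin p) (Fin q) F[X]) :
    Submodule (RatFunc F) (Fin q → RatFunc F) :=
  Submodule.span (RatFunc F) (Set.range (ratRow M))

/-- The degree of the `i`-th row of a polynomial matrix. -/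
def rowDeg {p q : ℕ} (M : Matrix (Fin p) (Fin q) F[X]) (i : Fin p) : ℕ :=
  Finset.univ.sup fun j => (M i j).natDegree

/-- The rows of `M` form a polynomial basis of the rational subspace `V` whose sum of
row degrees is minimal among all polynomial bases of `V`. -/
def IsMinimalBasisOf {p q : ℕ} (V : Submodule (RatFunc F) (Fin q → RatFunc F))
    (M : Matrix (Fin p) (Fin q) F[X]) : Prop :=
  LinearIndependent (RatFunc F) (ratRow M) ∧ rowSpan M = V ∧
    ∀ M' : Matrix (Fin p) (Fin q) F[X],
      LinearIndependent (RatFunc F) (ratRow M') → rowSpan M' = V →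
        ∑ i, rowDeg M i ≤ ∑ i, rowDeg M' i

/-- A polynomial matrix is a minimal basis if its rows form a minimal basis of the
rational subspace they span. -/
def IsMinimalBasis {p q : ℕ} (M : Matrix (Fin p) (Fin q) F[X]) : Prop :=
  IsMinimalBasisOf (rowSpan M) M

/-- A polynomial matrix viewed as a matrix of rational functions. -/
def ratMat {p q : ℕ} (M : Matrix (Fin p) (Fin q) F[X]) :
    Matrix (Fin p) (Fin q) (RatFunc F) :=
  M.map (algebraMap F[X] (RatFunc F))

/-- The right null-space over `F(λ)` of a polynomial matrix. -/
def rightNullSpace {p q : ℕ} (M : Matrix (Fin p) (Fin q) F[X]) :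
    Submodule (RatFunc F) (Fin q → RatFunc F) :=
  LinearMap.ker (Matrix.mulVecLin (ratMat M))

/-- The `k`-th Sylvester matrix of a polynomial matrix regarded as having degree at
most `e`: the block-Toeplitz matrix with `k` block columns whose `j`-th block column
carries the coefficients `M_0, …, M_e` in block rows `j, …, j+e` and zeros elsewhere. -/
def sylv {p q : ℕ} (e k : ℕ) (M : Matrix (Fin p) (Fin q) F[X]) :
    Matrix (Fin (k + e) × Fin p) (Fin k × Fin q) F :=
  fun r c =>
    if (c.1 : ℕ) ≤ (r.1 : ℕ) ∧ (r.1 : ℕ) ≤ (c.1 : ℕ) + e then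
      (M r.2 c.2).coeff ((r.1 : ℕ) - (c.1 : ℕ))
    else 0

/-- `M`, regarded as a polynomial matrix of degree at most `e`, has
full-Sylvester-rank if every Sylvester matrix `S_k`, `k ≥ 1`, has full rank. -/
def HasFullSylvesterRank {p q : ℕ} (e : ℕ) (M : Matrix (Fin p) (Fin q) F[X]) : Prop :=
  ∀ k : ℕ, 1 ≤ k → (sylv e k M).rank = min ((k + e) * p) (k * q)

/-- The `k`-th coefficient matrix of a polynomial matrix. -/
def coeffMat {p q : ℕ} (k : ℕ) (M : Matrix (Fin p) (Fin q) F[X]) :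
    Matrix (Fin p) (Fin q) F :=
  fun i j => (M i j).coeff k

/-- The highest-row-degree coefficient matrix: its `i`-th row is the coefficient of
`λ^{d_i}` in the `i`-th row of `M`, where `d_i` is the `i`-th row degree. -/
def highRowMat {p q : ℕ} (M : Matrix (Fin p) (Fin q) F[X]) :
    Matrix (Fin p) (Fin q) F :=
  fun i j => (M i j).coeff (rowDeg M i)

/-- The `e`-reversal of a polynomial matrix: `rev_e P(λ) = λ^e P(1/λ)`. -/
def revMat {p q : ℕ} (e : ℕ) (P : Matrix (Fin p) (Fin q) F[X]) :
    Matrix (Fin p) (Fin q) F[X] :=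
  fun i j => (P i j).reflect e


namespace FS

/-- polynomial vector to rational vector -/
def ratVec {q : ℕ} (x : Fin q → F[X]) : Fin q → RatFunc F :=
  fun j => algebraMap F[X] (RatFunc F) (x j)

lemma algMap_injective : Function.Injective (algebraMap F[X] (RatFunc F)) :=
  IsFractionRing.injective _ _

lemma algMap_eq_zero_iff {p : F[X]} : algebraMap F[X] (RatFunc F) p = 0 ↔ p = 0 := by
  constructor
  · intro h; exact algMap_injective (by simpa using h)
  · rintro rfl; simp

/-- vector degree -/
def vdeg {q : ℕ} (x : Fin q → F[X]) : ℕ := Finset.univ.sup fun j => (x j).natDegree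

lemma rowDeg_eq_vdeg {p q : ℕ} (M : Matrix (Fin p) (Fin q) F[X]) (i : Fin p) :
    rowDeg M i = vdeg (M i) := rfl

lemma natDegree_le_vdeg {q : ℕ} (x : Fin q → F[X]) (j : Fin q) :
    (x j).natDegree ≤ vdeg x := Finset.le_sup (f := fun j => (x j).natDegree) (Finset.mem_univ j)

lemma ratRow_eq_ratVec {p q : ℕ} (M : Matrix (Fin p) (Fin q) F[X]) (i : Fin p) :
    ratRow M i = ratVec (M i) := rfl

/-- clearing denominators -/
lemma clear_denoms {ι : Type*} [Fintype ι] (c : ι → RatFunc F) :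
    ∃ (s : F[X]) (p : ι → F[X]), s ≠ 0 ∧
      ∀ i, algebraMap F[X] (RatFunc F) (p i) = algebraMap F[X] (RatFunc F) s * c i := by
  classical
  set s : F[X] := ∏ i, (c i).denom with hs
  have hsne : s ≠ 0 := Finset.prod_ne_zero_iff.2 fun i _ => RatFunc.denom_ne_zero _
  have hdvd : ∀ i, (c i).denom ∣ s := fun i => Finset.dvd_prod_of_mem _ (Finset.mem_univ i)
  choose w hw using hdvd
  refine ⟨s, fun i => (c i).num * w i, hsne, fun i => ?_⟩
  have hne : algebraMap F[X] (RatFunc F) (c i).denom ≠ 0 := by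
    simpa [algMap_eq_zero_iff] using RatFunc.denom_ne_zero (c i)
  have h1 : (algebraMap F[X] (RatFunc F) (c i).num : RatFunc F)
      = c i * algebraMap F[X] (RatFunc F) (c i).denom :=
    (div_eq_iff hne).mp (RatFunc.num_div_denom (c i))
  rw [_root_.map_mul, h1, hw i, _root_.map_mul]; ring



variable {n q : ℕ}

lemma finrank_of_basis {N : Matrix (Fin n) (Fin q) F[X]}
    {V : Submodule (RatFunc F) (Fin q → RatFunc F)}
    (hind : LinearIndependent (RatFunc F) (ratRow N)) (hspan : rowSpan N = V) :
    Module.finrank (RatFunc F) V = n := by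
  rw [← hspan]
  rw [show (rowSpan N : Submodule (RatFunc F) _)
    = Submodule.span (RatFunc F) (Set.range (ratRow N)) from rfl]
  rw [finrank_span_eq_card hind, Fintype.card_fin]

lemma exchange {N : Matrix (Fin n) (Fin q) F[X]}
    {V : Submodule (RatFunc F) (Fin q → RatFunc F)}
    (hind : LinearIndependent (RatFunc F) (ratRow N)) (hspan : rowSpan N = V)
    {x : Fin q → F[X]} {c : Fin n → RatFunc F}
    (hx : ratVec x = ∑ i, c i • ratRow N i) {j : Fin n} (hcj : c j ≠ 0) :
    LinearIndependent (RatFunc F) (ratRow (N.updateRow j x)) ∧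
      rowSpan (N.updateRow j x) = V := by
  classical
  have hrow : ∀ i, ratRow (N.updateRow j x) i = if i = j then ratVec x else ratRow N i := by
    intro i
    funext col
    by_cases h : i = j
    · simp [ratRow, ratVec, h, Matrix.updateRow_apply]
    · simp [ratRow, ratVec, h, Matrix.updateRow_apply]
  have hmemV : ∀ i, ratRow N i ∈ V := by
    intro i
    rw [← hspan]
    exact Submodule.subset_span (Set.mem_range_self i)
  have hxV : ratVec x ∈ V := by
    rw [hx]; exact Submodule.sum_mem _ fun i _ => Submodule.smul_mem _ _ (hmemV i)
  have hspan' : rowSpan (N.updateRow j x) = V := by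
    apply le_antisymm
    · rw [rowSpan, Submodule.span_le]
      rintro y ⟨i, rfl⟩
      rw [hrow i]
      by_cases h : i = j
      · simpa [h] using hxV
      · simpa [h] using hmemV i
    · rw [← hspan, rowSpan, Submodule.span_le]
      rintro y ⟨i, rfl⟩
      by_cases h : i = j
      · rw [h]
        have hsum : ratVec x = c j • ratRow N j + ∑ i ∈ Finset.univ.erase j, c i • ratRow N i := by
          rw [hx, ← Finset.add_sum_erase _ _ (Finset.mem_univ j)]
        have hexpr : ratRow N j
            = (c j)⁻¹ • (ratVec x - ∑ i ∈ Finset.univ.erase j, c i • ratRow N i) := by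
          rw [hsum]; rw [add_sub_cancel_right, smul_smul, inv_mul_cancel₀ hcj, one_smul]
        rw [hexpr]
        apply Submodule.smul_mem
        apply Submodule.sub_mem
        · have : ratVec x = ratRow (N.updateRow j x) j := by rw [hrow j]; simp
          rw [this]
          exact Submodule.subset_span (Set.mem_range_self j)
        · apply Submodule.sum_mem
          intro i hi
          apply Submodule.smul_mem
          have : ratRow N i = ratRow (N.updateRow j x) i := by
            rw [hrow i, if_neg (Finset.ne_of_mem_erase hi)]
          rw [this]
          exact Submodule.subset_span (Set.mem_range_self i)
      · have : ratRow N i = ratRow (N.updateRow j x) i := by rw [hrow i, if_neg h]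
        rw [this]
        exact Submodule.subset_span (Set.mem_range_self i)
  refine ⟨?_, hspan'⟩
  rw [linearIndependent_iff_card_eq_finrank_span]
  rw [Fintype.card_fin]
  have : Set.finrank (RatFunc F) (Set.range (ratRow (N.updateRow j x)))
      = Module.finrank (RatFunc F) V := by
    rw [Set.finrank]
    rw [show Submodule.span (RatFunc F) (Set.range (ratRow (N.updateRow j x)))
      = rowSpan (N.updateRow j x) from rfl, hspan']
  rw [this, finrank_of_basis hind hspan]

lemma min_exchange {N : Matrix (Fin n) (Fin q) F[X]}
    {V : Submodule (RatFunc F) (Fin q → RatFunc F)}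
    (hmin : IsMinimalBasisOf V N)
    {x : Fin q → F[X]} {c : Fin n → RatFunc F}
    (hx : ratVec x = ∑ i, c i • ratRow N i) {j : Fin n} (hcj : c j ≠ 0) :
    rowDeg N j ≤ vdeg x := by
  classical
  obtain ⟨hind, hspan, hminimal⟩ := hmin
  obtain ⟨hind', hspan'⟩ := exchange hind hspan hx hcj
  have hle := hminimal _ hind' hspan'
  have hdeg : ∀ i, rowDeg (N.updateRow j x) i = if i = j then vdeg x else rowDeg N i := by
    intro i
    by_cases h : i = j
    · subst h; rw [rowDeg_eq_vdeg]; simp [Matrix.updateRow_self]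
    · rw [rowDeg_eq_vdeg, rowDeg_eq_vdeg]; rw [Matrix.updateRow_ne h]; simp [h]
  rw [Finset.sum_congr rfl fun i _ => hdeg i] at hle
  have e1 : ∑ i, (if i = j then vdeg x else rowDeg N i)
      = ∑ i, Function.update (rowDeg N) j (vdeg x) i :=
    Finset.sum_congr rfl fun i _ => (Function.update_apply (rowDeg N) j (vdeg x) i).symm
  rw [e1, Finset.sum_update_of_mem (Finset.mem_univ j)] at hle
  have e2 : ∑ i, rowDeg N i = rowDeg N j + ∑ i ∈ Finset.univ \ {j}, rowDeg N i := by
    rw [Finset.sdiff_singleton_eq_erase, ← Finset.add_sum_erase _ _ (Finset.mem_univ j)]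
  omega

variable {m : ℕ}

/-- The space of polynomial null vectors of degree < k. -/
def PK (M : Matrix (Fin m) (Fin q) F[X]) (k : ℕ) : Submodule F (Fin q → F[X]) where
  carrier := {x | (∀ j, (x j).degree < (k : ℕ)) ∧ ∀ i, ∑ j, M i j * x j = 0}
  add_mem' := by
    rintro x y ⟨hx1, hx2⟩ ⟨hy1, hy2⟩
    refine ⟨fun j => lt_of_le_of_lt (Polynomial.degree_add_le _ _) (max_lt (hx1 j) (hy1 j)),
      fun i => ?_⟩
    simp only [Pi.add_apply, mul_add]
    rw [Finset.sum_add_distrib, hx2 i, hy2 i, add_zero]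
  zero_mem' := by
    refine ⟨fun j => ?_, fun i => by simp⟩
    simp only [Pi.zero_apply, Polynomial.degree_zero]
    exact WithBot.bot_lt_coe (k : ℕ)
  smul_mem' := by
    rintro a x ⟨hx1, hx2⟩
    refine ⟨fun j => lt_of_le_of_lt (Polynomial.degree_smul_le _ _) (hx1 j), fun i => ?_⟩
    simp only [Pi.smul_apply]
    have : ∀ j, M i j * (a • x j) = a • (M i j * x j) := fun j => mul_smul_comm a _ _
    rw [Finset.sum_congr rfl fun j _ => this j, ← Finset.smul_sum, hx2 i, smul_zero]

lemma mem_PK {M : Matrix (Fin m) (Fin q) F[X]} {k : ℕ} {x : Fin q → F[X]} :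
    x ∈ PK M k ↔ (∀ j, (x j).degree < (k : ℕ)) ∧ ∀ i, ∑ j, M i j * x j = 0 := Iff.rfl

lemma ratVec_mem_rightNullSpace {M : Matrix (Fin m) (Fin q) F[X]} {x : Fin q → F[X]}
    (hx : ∀ i, ∑ j, M i j * x j = 0) : ratVec x ∈ rightNullSpace M := by
  rw [rightNullSpace, LinearMap.mem_ker]
  funext i
  rw [Matrix.mulVecLin_apply]
  show ((ratMat M).mulVec (ratVec x)) i = (0 : Fin m → RatFunc F) i
  have h1 : ((ratMat M).mulVec (ratVec x)) i
      = algebraMap F[X] (RatFunc F) (∑ j, M i j * x j) := by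
    rw [map_sum]
    simp only [Matrix.mulVec, dotProduct, ratMat, Matrix.map_apply, ratVec, _root_.map_mul]
  rw [h1, hx i, map_zero]
  rfl

/-- from coefficients to polynomial vectors -/
def toPoly (k : ℕ) (c : Fin k × Fin q → F) : Fin q → F[X] :=
  fun j => ∑ a : Fin k, Polynomial.monomial (a : ℕ) (c (a, j))

lemma coeff_sum_monomial {k : ℕ} (f : Fin k → F) (r : ℕ) :
    (∑ a : Fin k, Polynomial.monomial (a : ℕ) (f a)).coeff r
      = if h : r < k then f ⟨r, h⟩ else 0 := by
  rw [Polynomial.finset_sum_coeff]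
  simp only [Polynomial.coeff_monomial]
  by_cases h : r < k
  · rw [dif_pos h, Finset.sum_eq_single (⟨r, h⟩ : Fin k)]
    · simp
    · intro a _ ha
      rw [if_neg]
      intro hc
      exact ha (by ext; simp [hc])
    · intro habs; exact absurd (Finset.mem_univ _) habs
  · rw [dif_neg h]
    apply Finset.sum_eq_zero
    intro a _
    rw [if_neg]
    exact fun hc => h (hc ▸ a.isLt)

lemma coeff_toPoly {k : ℕ} (c : Fin k × Fin q → F) (j : Fin q) (r : ℕ) :
    (toPoly k c j).coeff r = if h : r < k then c (⟨r, h⟩, j) else 0 :=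
  coeff_sum_monomial (fun a => c (a, j)) r

/-- toPoly as a linear map -/
def toPolyLin (k : ℕ) : (Fin k × Fin q → F) →ₗ[F] (Fin q → F[X]) where
  toFun := toPoly k
  map_add' := by
    intro c c'
    funext j
    show (∑ a : Fin k, Polynomial.monomial (a:ℕ) ((c + c') (a, j))) = _
    simp only [Pi.add_apply, map_add, Finset.sum_add_distrib]
    rfl
  map_smul' := by
    intro t c
    funext j
    show (∑ a : Fin k, Polynomial.monomial (a:ℕ) ((t • c) (a, j)))
      = t • (∑ a : Fin k, Polynomial.monomial (a:ℕ) (c (a, j)))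
    rw [Finset.smul_sum]
    apply Finset.sum_congr rfl
    intro a _
    rw [Polynomial.smul_monomial, smul_eq_mul]
    rfl

lemma toPolyLin_injective (k : ℕ) :
    Function.Injective (toPolyLin k (q := q) (F := F)) := by
  intro c c' h
  funext p
  obtain ⟨a, j⟩ := p
  have := congrArg (fun y => (y j).coeff (a : ℕ)) h
  rw [show toPolyLin k c j = toPoly k c j from rfl,
      show toPolyLin k c' j = toPoly k c' j from rfl] at this
  rw [coeff_toPoly, coeff_toPoly, dif_pos a.isLt, dif_pos a.isLt] at this
  simpa using this

lemma coeff_ker_high {k d : ℕ} {M : Matrix (Fin m) (Fin q) F[X]}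
    (hdeg : ∀ i j, (M i j).natDegree ≤ d) (x : Fin q → F[X])
    (hx : ∀ j, (x j).degree < (k : ℕ)) (i : Fin m) (r : ℕ) (hr : k + d ≤ r) :
    (∑ j, M i j * x j).coeff r = 0 := by
  rw [Polynomial.finset_sum_coeff]
  apply Finset.sum_eq_zero
  intro j _
  by_cases h0 : x j = 0
  · simp [h0]
  apply Polynomial.coeff_eq_zero_of_natDegree_lt
  have h1 : (x j).natDegree < k := (Polynomial.natDegree_lt_iff_degree_lt h0).2 (hx j)
  have h2 := Polynomial.natDegree_mul_le (p := M i j) (q := x j)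
  have h3 := hdeg i j
  omega

lemma key_col {k : ℕ} (d : ℕ) (P : F[X]) (hP : P.natDegree ≤ d) (f : Fin k → F) (r : ℕ) :
    ∑ a : Fin k, (if (a : ℕ) ≤ r ∧ r ≤ (a : ℕ) + d then P.coeff (r - (a : ℕ)) else 0) * f a
      = (P * (∑ a : Fin k, Polynomial.monomial (a : ℕ) (f a))).coeff r := by
  classical
  set g : ℕ → F := fun v => if h : v < k then f ⟨v, h⟩ else 0 with hg
  have hcoe : ∀ v, (∑ a : Fin k, Polynomial.monomial (a : ℕ) (f a)).coeff v = g v := by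
    intro v; rw [coeff_sum_monomial]
  rw [mul_comm, Polynomial.coeff_mul, Finset.Nat.sum_antidiagonal_eq_sum_range_succ_mk]
  simp only [hcoe]
  set R := max (r + 1) k with hR
  have hRHS : ∑ v ∈ Finset.range (r + 1), g v * P.coeff (r - v)
      = ∑ v ∈ Finset.range R, (if v ≤ r then g v * P.coeff (r - v) else 0) := by
    rw [Finset.sum_congr rfl (fun v hv => ?_), Finset.sum_subset
      (Finset.range_subset_range.2 (le_max_left _ _))]
    · intro v _ hv
      rw [if_neg]
      rw [Finset.mem_range] at hv
      omega
    · rw [if_pos]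
      rw [Finset.mem_range] at hv
      omega
  have hLHS : ∑ a : Fin k, (if (a : ℕ) ≤ r ∧ r ≤ (a : ℕ) + d then P.coeff (r - (a : ℕ)) else 0) * f a
      = ∑ v ∈ Finset.range R, (if v ≤ r ∧ r ≤ v + d then P.coeff (r - v) else 0) * g v := by
    have e1 : ∀ a : Fin k,
        (if (a : ℕ) ≤ r ∧ r ≤ (a : ℕ) + d then P.coeff (r - (a : ℕ)) else 0) * f a
        = (fun v => (if v ≤ r ∧ r ≤ v + d then P.coeff (r - v) else 0) * g v) (a : ℕ) := by
      intro a
      simp only [hg]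
      rw [dif_pos a.isLt]
    rw [Finset.sum_congr rfl fun a _ => e1 a,
      Fin.sum_univ_eq_sum_range (fun v => (if v ≤ r ∧ r ≤ v + d then P.coeff (r - v) else 0) * g v) k]
    apply Finset.sum_subset (Finset.range_subset_range.2 (le_max_right _ _))
    intro v _ hv
    rw [Finset.mem_range] at hv
    have : g v = 0 := by rw [hg]; exact dif_neg (by omega)
    rw [this, mul_zero]
  rw [hLHS, hRHS]
  apply Finset.sum_congr rfl
  intro v _
  by_cases h1 : v ≤ r
  · by_cases h2 : r ≤ v + d
    · rw [if_pos h1, if_pos ⟨h1, h2⟩, mul_comm]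
    · rw [if_pos h1, if_neg (by tauto)]
      have : P.coeff (r - v) = 0 := Polynomial.coeff_eq_zero_of_natDegree_lt (by omega)
      rw [this, mul_zero, zero_mul]
  · rw [if_neg h1, if_neg (by tauto), zero_mul]

lemma sylv_mulVec {d k : ℕ} (M : Matrix (Fin m) (Fin q) F[X])
    (hdeg : ∀ i j, (M i j).natDegree ≤ d) (c : Fin k × Fin q → F)
    (r : Fin (k + d)) (i : Fin m) :
    (sylv d k M).mulVec c (r, i) = (∑ j, M i j * toPoly k c j).coeff (r : ℕ) := by
  rw [Polynomial.finset_sum_coeff]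
  simp only [Matrix.mulVec, dotProduct]
  rw [Fintype.sum_prod_type]
  rw [Finset.sum_comm]
  apply Finset.sum_congr rfl
  intro j _
  show _ = (M i j * ∑ a : Fin k, Polynomial.monomial (a : ℕ) (c (a, j))).coeff (r : ℕ)
  rw [← key_col d (M i j) (hdeg i j) (fun a => c (a, j)) (r : ℕ)]
  apply Finset.sum_congr rfl
  intro a _
  rfl

lemma degree_toPoly_lt {k : ℕ} (c : Fin k × Fin q → F) (j : Fin q) :
    (toPoly k c j).degree < (k : ℕ) := by
  apply lt_of_le_of_lt (Polynomial.degree_sum_le _ _)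
  rw [Finset.sup_lt_iff (by exact WithBot.bot_lt_coe k)]
  intro a _
  exact lt_of_le_of_lt (Polynomial.degree_monomial_le _ _)
    (by exact_mod_cast Nat.cast_lt.2 a.isLt)

lemma map_ker_sylv (d k : ℕ) (M : Matrix (Fin m) (Fin q) F[X])
    (hdeg : ∀ i j, (M i j).natDegree ≤ d) :
    Submodule.map (toPolyLin k (q := q) (F := F)) (LinearMap.ker (sylv d k M).mulVecLin)
      = PK M k := by
  apply le_antisymm
  · rintro x ⟨c, hc, rfl⟩
    have hc0 : (sylv d k M).mulVec c = 0 := by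
      have := LinearMap.mem_ker.1 hc
      rwa [Matrix.mulVecLin_apply] at this
    constructor
    · intro j
      exact degree_toPoly_lt c j
    · intro i
      apply Polynomial.ext
      intro r
      rw [Polynomial.coeff_zero]
      by_cases hr : r < k + d
      · have h2 := congrFun hc0 (⟨r, hr⟩, i)
        rw [sylv_mulVec M hdeg c ⟨r, hr⟩ i] at h2
        exact h2
      · exact coeff_ker_high hdeg _ (fun j => degree_toPoly_lt c j) i r (by omega)
  · intro x hx
    obtain ⟨hx1, hx2⟩ := hx
    have hEq : toPolyLin k (q := q) (F := F) (fun p : Fin k × Fin q => (x p.2).coeff (p.1 : ℕ))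
        = x := by
      funext j
      apply Polynomial.ext
      intro r
      change (toPoly k (fun p : Fin k × Fin q => (x p.2).coeff (p.1 : ℕ)) j).coeff r
        = (x j).coeff r
      rw [coeff_toPoly]
      by_cases h : r < k
      · rw [dif_pos h]
      · rw [dif_neg h]
        exact (Polynomial.coeff_eq_zero_of_degree_lt
          (lt_of_lt_of_le (hx1 j) (by exact_mod_cast Nat.cast_le.2 (by omega)))).symm
    refine ⟨fun p : Fin k × Fin q => (x p.2).coeff (p.1 : ℕ), ?_, hEq⟩
    show (fun p : Fin k × Fin q => (x p.2).coeff (p.1 : ℕ))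
      ∈ LinearMap.ker (sylv d k M).mulVecLin
    rw [LinearMap.mem_ker, Matrix.mulVecLin_apply]
    funext ri
    obtain ⟨r, i⟩ := ri
    show (sylv d k M).mulVec _ (r, i) = 0
    rw [sylv_mulVec M hdeg _ r i]
    have h3 : (∑ j, M i j * toPoly k (fun p : Fin k × Fin q => (x p.2).coeff (p.1 : ℕ)) j)
        = ∑ j, M i j * x j := by
      rw [show toPoly k (fun p : Fin k × Fin q => (x p.2).coeff (p.1 : ℕ)) = x from hEq]
    rw [h3, hx2 i, Polynomial.coeff_zero]

lemma rank_sylv_add_finrank_PK (d k : ℕ) (M : Matrix (Fin m) (Fin q) F[X])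
    (hdeg : ∀ i j, (M i j).natDegree ≤ d) :
    (sylv d k M).rank + Module.finrank F (PK M k) = k * q := by
  have h1 : Module.finrank F (LinearMap.ker (sylv d k M).mulVecLin)
      = Module.finrank F (PK M k) := by
    rw [← map_ker_sylv d k M hdeg]
    exact LinearEquiv.finrank_eq
      (Submodule.equivMapOfInjective _ (toPolyLin_injective k) _)
  rw [← h1]
  have h2 := LinearMap.finrank_range_add_finrank_ker ((sylv d k M).mulVecLin)
  rw [Module.finrank_fintype_fun_eq_card, Fintype.card_prod, Fintype.card_fin,
    Fintype.card_fin] at h2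
  exact h2

lemma coeff_mul_of_deg_le {P Q : F[X]} {a b D : ℕ} (hP : P.natDegree ≤ a)
    (hQ : Q.natDegree ≤ b) (hD : a + b = D) :
    (P * Q).coeff D = P.coeff a * Q.coeff b := by
  rw [Polynomial.coeff_mul]
  apply Finset.sum_eq_single (a, b)
  · rintro ⟨u, v⟩ huv hne
    rw [Finset.HasAntidiagonal.mem_antidiagonal] at huv
    simp only [ne_eq, Prod.mk.injEq, not_and] at hne
    by_cases hu : a < u
    · rw [Polynomial.coeff_eq_zero_of_natDegree_lt (lt_of_le_of_lt hP hu), zero_mul]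
    · have hv : b < v := by
        rcases Nat.lt_or_ge u a with h | h
        · omega
        · exfalso; exact hne (by omega) (by omega)
      rw [Polynomial.coeff_eq_zero_of_natDegree_lt (lt_of_le_of_lt hQ hv), mul_zero]
  · intro h
    exact absurd (Finset.HasAntidiagonal.mem_antidiagonal.2 hD) h

lemma highRow_linearIndependent {N : Matrix (Fin n) (Fin q) F[X]}
    {V : Submodule (RatFunc F) (Fin q → RatFunc F)} (hmin : IsMinimalBasisOf V N) :
    LinearIndependent F (fun i => highRowMat N i) := by
  classical
  by_contra hdep
  rw [Fintype.linearIndependent_iff] at hdep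
  push_neg at hdep
  obtain ⟨g, hg0, i0, hgi0⟩ := hdep
  set S : Finset (Fin n) := Finset.univ.filter (fun i => g i ≠ 0) with hS
  have hSne : S.Nonempty := ⟨i0, by simp [hS, hgi0]⟩
  obtain ⟨j, hjS, hjmax⟩ := Finset.exists_max_image S (rowDeg N) hSne
  have hgj : g j ≠ 0 := (Finset.mem_filter.1 hjS).2
  have hjle : ∀ i, g i ≠ 0 → rowDeg N i ≤ rowDeg N j := by
    intro i hi; exact hjmax i (by simp [hS, hi])
  set E := rowDeg N j with hE
  set w : Fin q → F[X] :=
    fun col => ∑ i, g i • (N i col * X ^ (E - rowDeg N i)) with hw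
  set c : Fin n → RatFunc F :=
    fun i => algebraMap F[X] (RatFunc F) (Polynomial.C (g i) * X ^ (E - rowDeg N i)) with hc
  have hx : ratVec w = ∑ i, c i • ratRow N i := by
    funext col
    rw [show (∑ i, c i • ratRow N i) col = ∑ i, c i * ratRow N i col by
      rw [Finset.sum_apply]; rfl]
    rw [show ratVec w col = algebraMap F[X] (RatFunc F) (w col) from rfl, hw]
    rw [map_sum]
    apply Finset.sum_congr rfl
    intro i _
    rw [hc]
    rw [show ratRow N i col = algebraMap F[X] (RatFunc F) (N i col) from rfl]
    rw [← _root_.map_mul]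
    congr 1
    rw [Polynomial.smul_eq_C_mul]
    ring
  have hcj : c j ≠ 0 := by
    show algebraMap F[X] (RatFunc F) (Polynomial.C (g j) * X ^ (E - rowDeg N j)) ≠ 0
    rw [Ne, algMap_eq_zero_iff]
    exact mul_ne_zero (Polynomial.C_ne_zero.2 hgj) (pow_ne_zero _ Polynomial.X_ne_zero)
  have hcoeffE : ∀ col, (w col).coeff E = 0 := by
    intro col
    rw [hw]
    rw [Polynomial.finset_sum_coeff]
    have hterm : ∀ i, (g i • (N i col * X ^ (E - rowDeg N i))).coeff E
        = g i * highRowMat N i col := by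
      intro i
      rw [Polynomial.coeff_smul, smul_eq_mul]
      by_cases hgi : g i = 0
      · rw [hgi, zero_mul, zero_mul]
      · have hle : rowDeg N i ≤ E := hjle i hgi
        rw [Polynomial.coeff_mul_X_pow']
        rw [if_pos (by omega)]
        have : E - (E - rowDeg N i) = rowDeg N i := by omega
        rw [this]
        rfl
    rw [Finset.sum_congr rfl fun i _ => hterm i]
    have := congrFun hg0 col
    simpa [Finset.sum_apply] using this
  have hdegw : ∀ col, (w col).degree ≤ (E : ℕ) := by
    intro col
    rw [hw]
    apply le_trans (Polynomial.degree_sum_le _ _)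
    rw [Finset.sup_le_iff]
    intro i _
    by_cases hgi : g i = 0
    · rw [hgi, zero_smul, Polynomial.degree_zero]
      exact bot_le
    · apply le_trans (Polynomial.degree_smul_le _ _)
      apply le_trans (Polynomial.degree_mul_le _ _)
      have h1 : (N i col).degree ≤ (rowDeg N i : ℕ) := by
        apply le_trans (Polynomial.degree_le_natDegree)
        exact_mod_cast Nat.cast_le.2 (natDegree_le_vdeg (N i) col)
      apply le_trans (add_le_add h1 (Polynomial.degree_X_pow_le _))
      have h2 : rowDeg N i + (E - rowDeg N i) = E := by have := hjle i hgi; omega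
      rw [← Nat.cast_add, h2]
  by_cases hE0 : E = 0
  · have hw0 : w = 0 := by
      funext col
      show w col = (0 : F[X])
      have h1 : (w col).degree ≤ 0 := by simpa [hE0] using hdegw col
      have h2 := Polynomial.eq_C_of_degree_le_zero h1
      rw [h2]
      have h3 := hcoeffE col
      rw [hE0] at h3
      rw [h3, map_zero]
    rw [hw0] at hx
    have : ratVec (0 : Fin q → F[X]) = 0 := by
      funext col; exact map_zero _
    rw [this] at hx
    have := Fintype.linearIndependent_iff.1 hmin.1 c hx.symm j
    exact hcj this
  · have hvw : vdeg w ≤ E - 1 := by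
      rw [vdeg, Finset.sup_le_iff]
      intro col _
      by_cases h0 : w col = 0
      · rw [h0, Polynomial.natDegree_zero]; omega
      · have h1 : (w col).natDegree ≤ E :=
          Polynomial.natDegree_le_iff_degree_le.2 (hdegw col)
        have h2 : (w col).natDegree ≠ E := by
          intro hcon
          have := hcoeffE col
          rw [← hcon] at this
          exact h0 (Polynomial.leadingCoeff_eq_zero.1 this)
        omega
    have := min_exchange hmin hx hcj
    rw [← hE] at this
    omega

lemma pred_degree {N : Matrix (Fin n) (Fin q) F[X]}
    (hrr : LinearIndependent F (fun i => highRowMat N i))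
    {s : F[X]} {p : Fin n → F[X]} {x : Fin q → F[X]} {δ : ℕ}
    (heq : ∀ col, s * x col = ∑ i, p i * N i col)
    (hdx : ∀ col, (x col).natDegree ≤ δ) :
    ∀ i, p i ≠ 0 → (p i).natDegree + rowDeg N i ≤ s.natDegree + δ := by
  classical
  by_contra hcon
  push_neg at hcon
  obtain ⟨i0, hp0, hgt⟩ := hcon
  set S : Finset (Fin n) := Finset.univ.filter (fun i => p i ≠ 0) with hS
  have hi0S : i0 ∈ S := by simp [hS, hp0]
  set D := S.sup (fun i => (p i).natDegree + rowDeg N i) with hD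
  have hDub : ∀ i, p i ≠ 0 → (p i).natDegree + rowDeg N i ≤ D := by
    intro i hi
    exact Finset.le_sup (f := fun i => (p i).natDegree + rowDeg N i) (by simp [hS, hi])
  have hD1 : s.natDegree + δ < D := lt_of_lt_of_le hgt (Finset.le_sup (f := fun i => (p i).natDegree + rowDeg N i) hi0S)
  obtain ⟨i1, hi1S, hi1⟩ := Finset.exists_mem_eq_sup S ⟨i0, hi0S⟩
    (fun i => (p i).natDegree + rowDeg N i)
  have hcoeff : ∀ col, ∑ i, (p i).coeff (D - rowDeg N i) * highRowMat N i col = 0 := by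
    intro col
    have h1 : (s * x col).coeff D = 0 := by
      apply Polynomial.coeff_eq_zero_of_natDegree_lt
      have := Polynomial.natDegree_mul_le (p := s) (q := x col)
      have := hdx col
      omega
    have h2 : (∑ i, p i * N i col).coeff D
        = ∑ i, (p i).coeff (D - rowDeg N i) * (N i col).coeff (rowDeg N i) := by
      rw [Polynomial.finset_sum_coeff]
      apply Finset.sum_congr rfl
      intro i _
      by_cases hp : p i = 0
      · rw [hp]; simp
      · exact coeff_mul_of_deg_le (by have := hDub i hp; omega)
          (natDegree_le_vdeg (N i) col) (by have := hDub i hp; omega)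
    rw [heq col, h2] at h1
    exact h1
  have hzero : ∑ i, ((p i).coeff (D - rowDeg N i)) • (fun i' => highRowMat N i') i = 0 := by
    funext col
    rw [Finset.sum_apply]
    simp only [Pi.smul_apply, smul_eq_mul]
    exact hcoeff col
  have hall := Fintype.linearIndependent_iff.1 hrr
    (fun i => (p i).coeff (D - rowDeg N i)) hzero i1
  have hpi1 : p i1 ≠ 0 := (Finset.mem_filter.1 hi1S).2
  have hDi1 : D = (p i1).natDegree + rowDeg N i1 := hi1
  have : (p i1).coeff ((p i1).natDegree) = 0 := by
    have heqidx : D - rowDeg N i1 = (p i1).natDegree := by omega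
    rw [← heqidx]
    exact hall
  exact hpi1 (Polynomial.leadingCoeff_eq_zero.1 this)

def shiftRow (N : Matrix (Fin n) (Fin q) F[X]) (i : Fin n) (a : ℕ) : Fin q → F[X] :=
  fun col => X ^ a * N i col

def shiftSpan (N : Matrix (Fin n) (Fin q) F[X]) (δ : ℕ) : Submodule F (Fin q → F[X]) :=
  Submodule.span F {y | ∃ i a, a + rowDeg N i < δ ∧ y = shiftRow N i a}

lemma shiftSpan_mono {N : Matrix (Fin n) (Fin q) F[X]} {δ δ' : ℕ} (h : δ ≤ δ') :
    shiftSpan N δ ≤ shiftSpan N δ' :=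
  Submodule.span_mono (fun y ⟨i, a, hy, he⟩ => ⟨i, a, by omega, he⟩)

lemma ratVec_shiftRow {N : Matrix (Fin n) (Fin q) F[X]} (i : Fin n) (a : ℕ) :
    ratVec (shiftRow N i a) = (algebraMap F[X] (RatFunc F) (X ^ a)) • ratRow N i := by
  funext col
  show algebraMap F[X] (RatFunc F) (X ^ a * N i col) = _
  rw [_root_.map_mul]
  rfl

lemma degree_lt_of_coeff_top {P : F[X]} {δ : ℕ} (h1 : P.degree < ((δ : ℕ) + 1 : ℕ))
    (h2 : P.coeff δ = 0) : P.degree < (δ : ℕ) := by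
  rw [Polynomial.degree_lt_iff_coeff_zero] at h1 ⊢
  intro r hr
  rcases eq_or_lt_of_le hr with h | h
  · rw [← h]; exact h2
  · exact h1 r (by omega)

lemma lemmaA {N : Matrix (Fin n) (Fin q) F[X]}
    {V : Submodule (RatFunc F) (Fin q → RatFunc F)} (hmin : IsMinimalBasisOf V N) :
    ∀ δ : ℕ, ∀ x : Fin q → F[X], ratVec x ∈ V → (∀ col, (x col).degree < (δ : ℕ)) →
      x ∈ shiftSpan N δ := by
  classical
  have hrr := highRow_linearIndependent hmin
  intro δ
  induction δ with
  | zero =>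
    intro x hxV hxd
    have hx0 : x = 0 := by
      funext col
      show x col = (0 : F[X])
      by_contra h0
      have := (Polynomial.zero_le_degree_iff.2 h0)
      have h2 := hxd col
      simp only [Nat.cast_zero] at h2
      exact absurd (lt_of_le_of_lt this h2) (lt_irrefl _)
    rw [hx0]
    exact Submodule.zero_mem _
  | succ δ ih =>
    intro x hxV hxd
    by_cases hx0 : x = 0
    · rw [hx0]; exact Submodule.zero_mem _
    have hvd : ∀ col, (x col).natDegree ≤ δ := by
      intro col
      by_cases h0 : x col = 0
      · rw [h0, Polynomial.natDegree_zero]; omega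
      · have := (Polynomial.natDegree_lt_iff_degree_lt h0).2 (by exact_mod_cast hxd col)
        omega
    have hx' : ratVec x ∈ Submodule.span (RatFunc F) (Set.range (ratRow N)) := by
      rw [show Submodule.span (RatFunc F) (Set.range (ratRow N)) = rowSpan N from rfl,
        hmin.2.1]
      exact hxV
    obtain ⟨c, hc⟩ := (Submodule.mem_span_range_iff_exists_fun (RatFunc F)).1 hx'
    obtain ⟨s, pp, hs, hp⟩ := clear_denoms c
    have hpoly : ∀ col, s * x col = ∑ i, pp i * N i col := by
      intro col
      apply algMap_injective
      rw [_root_.map_mul, map_sum]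
      rw [show algebraMap F[X] (RatFunc F) (x col) = ratVec x col from rfl, ← hc]
      rw [Finset.sum_apply, Finset.mul_sum]
      apply Finset.sum_congr rfl
      intro i _
      rw [_root_.map_mul, hp i]
      show algebraMap F[X] (RatFunc F) s * (c i • ratRow N i) col = _
      rw [Pi.smul_apply, smul_eq_mul,
        show ratRow N i col = algebraMap F[X] (RatFunc F) (N i col) from rfl]
      ring
    have hph : ∀ i, δ < rowDeg N i → pp i = 0 := by
      intro i hi
      by_contra hne
      have hci : c i ≠ 0 := by
        intro h0
        apply hne
        apply algMap_eq_zero_iff.1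
        rw [hp i, h0, mul_zero]
      have hle := min_exchange hmin hc.symm hci
      have : vdeg x ≤ δ := by
        rw [vdeg, Finset.sup_le_iff]; intro col _; exact hvd col
      omega
    have hpd := pred_degree hrr hpoly hvd
    have hlc : s.leadingCoeff ≠ 0 := Polynomial.leadingCoeff_ne_zero.2 hs
    set e := s.natDegree with he
    set coef : Fin n → F :=
      fun i => (s.leadingCoeff)⁻¹ * (pp i).coeff (e + δ - rowDeg N i) with hcoef
    have hcoefhigh : ∀ i, δ < rowDeg N i → coef i = 0 := by
      intro i hi
      rw [hcoef]
      simp only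
      rw [hph i hi, Polynomial.coeff_zero, mul_zero]
    have htop : ∀ col, (x col).coeff δ = ∑ i, coef i * highRowMat N i col := by
      intro col
      have h1 : (s * x col).coeff (e + δ) = s.leadingCoeff * (x col).coeff δ :=
        coeff_mul_of_deg_le (le_refl _) (hvd col) rfl
      have h2 : (∑ i, pp i * N i col).coeff (e + δ)
          = ∑ i, (pp i).coeff (e + δ - rowDeg N i) * (N i col).coeff (rowDeg N i) := by
        rw [Polynomial.finset_sum_coeff]
        apply Finset.sum_congr rfl
        intro i _
        by_cases hpi : pp i = 0
        · rw [hpi]; simp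
        · exact coeff_mul_of_deg_le (by have := hpd i hpi; omega)
            (natDegree_le_vdeg (N i) col) (by have := hpd i hpi; omega)
      have h3 : s.leadingCoeff * (x col).coeff δ
          = ∑ i, (pp i).coeff (e + δ - rowDeg N i) * (N i col).coeff (rowDeg N i) := by
        rw [← h1, ← h2, hpoly col]
      have h4 := congrArg (fun t => (s.leadingCoeff)⁻¹ * t) h3
      rw [← mul_assoc, inv_mul_cancel₀ hlc, one_mul] at h4
      rw [h4, Finset.mul_sum]
      apply Finset.sum_congr rfl
      intro i _
      rw [hcoef]
      show _ = (s.leadingCoeff)⁻¹ * (pp i).coeff (e + δ - rowDeg N i) * highRowMat N i col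
      rw [mul_assoc]
      rfl
    set y : Fin q → F[X] :=
      fun col => x col - ∑ i, coef i • (X ^ (δ - rowDeg N i) * N i col) with hy
    have hyV : ratVec y ∈ V := by
      have hyexp : ratVec y = ratVec x - ∑ i,
          ((algebraMap F[X] (RatFunc F) (Polynomial.C (coef i) * X ^ (δ - rowDeg N i)))
            • ratRow N i) := by
        funext col
        rw [Pi.sub_apply, Finset.sum_apply]
        show algebraMap F[X] (RatFunc F) (y col) = _
        rw [hy]
        simp only
        rw [map_sub, map_sum]
        congr 1
        apply Finset.sum_congr rfl
        intro i _
        rw [Pi.smul_apply, smul_eq_mul,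
          show ratRow N i col = algebraMap F[X] (RatFunc F) (N i col) from rfl,
          ← _root_.map_mul]
        congr 1
        rw [Polynomial.smul_eq_C_mul]
        ring
      rw [hyexp]
      apply Submodule.sub_mem _ hxV
      apply Submodule.sum_mem
      intro i _
      apply Submodule.smul_mem
      rw [← hmin.2.1]
      exact Submodule.subset_span (Set.mem_range_self i)
    have hyd : ∀ col, (y col).degree < (δ : ℕ) := by
      intro col
      have hdle : (y col).degree < ((δ : ℕ) + 1 : ℕ) := by
        rw [hy]
        simp only
        apply lt_of_le_of_lt (Polynomial.degree_sub_le _ _)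
        rw [max_lt_iff]
        constructor
        · exact_mod_cast hxd col
        · apply lt_of_le_of_lt (Polynomial.degree_sum_le _ _)
          rw [Finset.sup_lt_iff (by exact WithBot.bot_lt_coe _)]
          intro i _
          by_cases hi : rowDeg N i ≤ δ
          · apply lt_of_le_of_lt (Polynomial.degree_smul_le _ _)
            apply lt_of_le_of_lt (Polynomial.degree_mul_le _ _)
            have h1 : (N i col).degree ≤ ((rowDeg N i : ℕ) : WithBot ℕ) := by
              apply le_trans (Polynomial.degree_le_natDegree)
              exact_mod_cast Nat.cast_le.2 (natDegree_le_vdeg (N i) col)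
            apply lt_of_le_of_lt (add_le_add (Polynomial.degree_X_pow_le _) h1)
            have h2 : (δ - rowDeg N i) + rowDeg N i = δ := by omega
            rw [← Nat.cast_add, h2]
            exact_mod_cast Nat.lt_succ_self δ
          · rw [hcoefhigh i (by omega), zero_smul, Polynomial.degree_zero]
            exact WithBot.bot_lt_coe _
      apply degree_lt_of_coeff_top hdle
      rw [hy]
      simp only
      rw [Polynomial.coeff_sub, Polynomial.finset_sum_coeff]
      have hterm : ∀ i, (coef i • (X ^ (δ - rowDeg N i) * N i col)).coeff δ
          = coef i * highRowMat N i col := by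
        intro i
        rw [Polynomial.coeff_smul, smul_eq_mul]
        by_cases hi : rowDeg N i ≤ δ
        · rw [mul_comm (X ^ (δ - rowDeg N i)) (N i col), Polynomial.coeff_mul_X_pow']
          rw [if_pos (by omega)]
          have : δ - (δ - rowDeg N i) = rowDeg N i := by omega
          rw [this]
          rfl
        · rw [hcoefhigh i (by omega), zero_mul, zero_mul]
      rw [Finset.sum_congr rfl fun i _ => hterm i, ← htop col, sub_self]
    have hymem := ih y hyV hyd
    have hxy : x = y + ∑ i, coef i • shiftRow N i (δ - rowDeg N i) := by
      funext col
      rw [Pi.add_apply, Finset.sum_apply, hy]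
      simp only
      have : ∑ i, (coef i • shiftRow N i (δ - rowDeg N i)) col
          = ∑ i, coef i • (X ^ (δ - rowDeg N i) * N i col) := by
        apply Finset.sum_congr rfl
        intro i _
        rfl
      rw [this, sub_add_cancel]
    rw [hxy]
    apply Submodule.add_mem
    · exact shiftSpan_mono (by omega) hymem
    · apply Submodule.sum_mem
      intro i _
      by_cases hi : rowDeg N i ≤ δ
      · apply Submodule.smul_mem
        apply Submodule.subset_span
        exact ⟨i, δ - rowDeg N i, by omega, rfl⟩
      · rw [hcoefhigh i (by omega), zero_smul]
        exact Submodule.zero_mem _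

lemma sigma_sum {ν : ℕ} {K : Fin ν → ℕ} {β : Type*} [AddCommMonoid β]
    (f : (Σ l : Fin ν, Fin (K l)) → β) :
    ∑ x : (Σ l : Fin ν, Fin (K l)), f x = ∑ l : Fin ν, ∑ a : Fin (K l), f ⟨l, a⟩ := by
  rw [← Finset.univ_sigma_univ, Finset.sum_sigma]

lemma shift_indep {ν : ℕ} {z : Fin ν → Fin q → F[X]}
    (hind : LinearIndependent (RatFunc F) (fun l => ratVec (z l))) (K : Fin ν → ℕ) :
    LinearIndependent F
      (fun ia : (Σ l : Fin ν, Fin (K l)) => fun col => X ^ (ia.2 : ℕ) * z ia.1 col) := by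
  classical
  rw [Fintype.linearIndependent_iff]
  intro g hg
  have h0 : ∀ col, ∑ ia : (Σ l : Fin ν, Fin (K l)),
      g ia • (X ^ (ia.2 : ℕ) * z ia.1 col) = 0 := by
    intro col
    have h1 := congrFun hg col
    rw [Finset.sum_apply] at h1
    simpa using h1
  have hrel : ∀ col,
      ∑ l, (∑ a : Fin (K l), Polynomial.monomial (a : ℕ) (g ⟨l, a⟩)) * z l col = 0 := by
    intro col
    have e : ∀ l, (∑ a : Fin (K l), Polynomial.monomial (a : ℕ) (g ⟨l, a⟩)) * z l col
        = ∑ a : Fin (K l), g ⟨l, a⟩ • (X ^ (a : ℕ) * z l col) := by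
      intro l
      rw [Finset.sum_mul]
      apply Finset.sum_congr rfl
      intro a _
      rw [← Polynomial.C_mul_X_pow_eq_monomial, Polynomial.smul_eq_C_mul, mul_assoc]
    rw [Finset.sum_congr rfl fun l _ => e l,
      ← sigma_sum (fun ia : (Σ l : Fin ν, Fin (K l)) => g ia • (X ^ (ia.2 : ℕ) * z ia.1 col))]
    exact h0 col
  have hratrel : ∑ l, (algebraMap F[X] (RatFunc F)
      (∑ a : Fin (K l), Polynomial.monomial (a : ℕ) (g ⟨l, a⟩))) • (ratVec (z l)) = 0 := by
    funext col
    rw [Finset.sum_apply]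
    rw [show (0 : Fin q → RatFunc F) col = 0 from rfl]
    have e : ∀ l, ((algebraMap F[X] (RatFunc F)
        (∑ a : Fin (K l), Polynomial.monomial (a : ℕ) (g ⟨l, a⟩))) • ratVec (z l)) col
        = algebraMap F[X] (RatFunc F)
            ((∑ a : Fin (K l), Polynomial.monomial (a : ℕ) (g ⟨l, a⟩)) * z l col) := by
      intro l
      rw [Pi.smul_apply, smul_eq_mul, _root_.map_mul]
      rfl
    rw [Finset.sum_congr rfl fun l _ => e l, ← map_sum, hrel col, map_zero]
  have hP0 : ∀ l, (∑ a : Fin (K l), Polynomial.monomial (a : ℕ) (g ⟨l, a⟩)) = 0 := by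
    intro l
    have := Fintype.linearIndependent_iff.1 hind
      (fun l => algebraMap F[X] (RatFunc F)
        (∑ a : Fin (K l), Polynomial.monomial (a : ℕ) (g ⟨l, a⟩))) hratrel l
    exact algMap_eq_zero_iff.1 this
  rintro ⟨l, a⟩
  have h2 := congrArg (fun t => Polynomial.coeff t (a : ℕ)) (hP0 l)
  simp only [Polynomial.coeff_zero] at h2
  rw [coeff_sum_monomial (fun a => g ⟨l, a⟩) (a : ℕ), dif_pos a.isLt] at h2
  simpa using h2

lemma rows_in_polyker {M : Matrix (Fin m) (Fin q) F[X]} {N : Matrix (Fin n) (Fin q) F[X]}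
    (hrow : ∀ i, ratRow N i ∈ rightNullSpace M) :
    ∀ i i', ∑ j, M i' j * N i j = 0 := by
  intro i i'
  apply algMap_injective
  rw [map_sum, map_zero]
  have h0 : ratRow N i ∈ LinearMap.ker (ratMat M).mulVecLin := hrow i
  rw [LinearMap.mem_ker, Matrix.mulVecLin_apply] at h0
  have h1 := congrFun h0 i'
  rw [show (0 : Fin m → RatFunc F) i' = 0 from rfl] at h1
  rw [← h1]
  simp only [Matrix.mulVec, dotProduct, ratMat, Matrix.map_apply]
  apply Finset.sum_congr rfl
  intro j _
  rw [_root_.map_mul]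
  rfl

lemma finrank_PK_of_minimal {M : Matrix (Fin m) (Fin q) F[X]}
    {N : Matrix (Fin n) (Fin q) F[X]} (hmin : IsMinimalBasisOf (rightNullSpace M) N)
    (k : ℕ) : Module.finrank F (PK M k) = ∑ i, (k - rowDeg N i) := by
  classical
  have hrowmem : ∀ i, ratRow N i ∈ rightNullSpace M := by
    intro i; rw [← hmin.2.1]; exact Submodule.subset_span (Set.mem_range_self i)
  have hker := rows_in_polyker hrowmem
  have hmemPK : ∀ ia : (Σ i : Fin n, Fin (k - rowDeg N i)),
      (fun col => X ^ (ia.2 : ℕ) * N ia.1 col) ∈ PK M k := by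
    rintro ⟨i, a⟩
    constructor
    · intro col
      apply lt_of_le_of_lt (Polynomial.degree_mul_le _ _)
      have h1 : (N i col).degree ≤ ((rowDeg N i : ℕ) : WithBot ℕ) := by
        apply le_trans (Polynomial.degree_le_natDegree)
        exact_mod_cast Nat.cast_le.2 (natDegree_le_vdeg (N i) col)
      apply lt_of_le_of_lt (add_le_add (Polynomial.degree_X_pow_le _) h1)
      rw [← Nat.cast_add]
      have h2 : (a : ℕ) + rowDeg N i < k := by have := a.isLt; omega
      exact_mod_cast h2
    · intro i'
      have h3 : ∑ j, M i' j * (X ^ (a : ℕ) * N i j)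
          = X ^ (a : ℕ) * ∑ j, M i' j * N i j := by
        rw [Finset.mul_sum]
        apply Finset.sum_congr rfl
        intro j _
        ring
      rw [h3, hker i i', mul_zero]
  have hspan : PK M k = Submodule.span F (Set.range
      (fun ia : (Σ i : Fin n, Fin (k - rowDeg N i)) =>
        fun col => X ^ (ia.2 : ℕ) * N ia.1 col)) := by
    apply le_antisymm
    · intro x hx
      have hxmem := lemmaA hmin k x (ratVec_mem_rightNullSpace hx.2) hx.1
      refine Submodule.span_le.2 ?_ hxmem
      rintro y ⟨i, a, hlt, rfl⟩
      apply Submodule.subset_span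
      exact ⟨⟨i, ⟨a, by omega⟩⟩, rfl⟩
    · rw [Submodule.span_le]
      rintro y ⟨ia, rfl⟩
      exact hmemPK ia
  have hind : LinearIndependent (RatFunc F) (fun l : Fin n => ratVec (N l)) := hmin.1
  have h2 := finrank_span_eq_card (shift_indep hind (fun i => k - rowDeg N i))
  rw [hspan, h2, Fintype.card_sigma]
  apply Finset.sum_congr rfl
  intro i _
  rw [Fintype.card_fin]

lemma rank_ratMat_add (M : Matrix (Fin m) (Fin q) F[X]) :
    (ratMat M).rank + Module.finrank (RatFunc F) (rightNullSpace M) = q := by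
  have h := LinearMap.finrank_range_add_finrank_ker ((ratMat M).mulVecLin)
  rw [Module.finrank_fintype_fun_eq_card, Fintype.card_fin] at h
  exact h

lemma exists_poly_rows {W : Submodule (RatFunc F) (Fin q → RatFunc F)} {ν : ℕ}
    (b : Fin ν → (Fin q → RatFunc F)) (hb : ∀ l, b l ∈ W)
    (hbind : LinearIndependent (RatFunc F) b) :
    ∃ z : Fin ν → Fin q → F[X],
      (∀ l, ratVec (z l) ∈ W) ∧ LinearIndependent (RatFunc F) (fun l => ratVec (z l)) := by
  classical
  have hcd : ∀ l, ∃ (s : F[X]) (zz : Fin q → F[X]), s ≠ 0 ∧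
      ∀ j, algebraMap F[X] (RatFunc F) (zz j) = algebraMap F[X] (RatFunc F) s * b l j := by
    intro l
    obtain ⟨s, p, hs, hp⟩ := clear_denoms (b l)
    exact ⟨s, p, hs, hp⟩
  choose s zz hs hzz using hcd
  have hzv : ∀ l, ratVec (zz l) = (algebraMap F[X] (RatFunc F) (s l)) • b l := by
    intro l
    funext j
    rw [Pi.smul_apply, smul_eq_mul]
    exact hzz l j
  refine ⟨zz, ?_, ?_⟩
  · intro l
    rw [hzv l]
    exact Submodule.smul_mem _ _ (hb l)
  · rw [Fintype.linearIndependent_iff]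
    intro g hg l
    have h1 : ∑ l, (g l * algebraMap F[X] (RatFunc F) (s l)) • b l = 0 := by
      rw [← hg]
      apply Finset.sum_congr rfl
      intro l' _
      rw [hzv l', smul_smul]
    have h2 := Fintype.linearIndependent_iff.1 hbind _ h1 l
    have hne : algebraMap F[X] (RatFunc F) (s l) ≠ 0 := by
      rw [Ne, algMap_eq_zero_iff]; exact hs l
    exact (mul_eq_zero.1 h2).resolve_right hne

lemma exists_minimal_basis {V : Submodule (RatFunc F) (Fin q → RatFunc F)}
    (hV : Module.finrank (RatFunc F) V = n) :
    ∃ N : Matrix (Fin n) (Fin q) F[X], IsMinimalBasisOf V N := by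
  classical
  have hfd : FiniteDimensional (RatFunc F) V := inferInstance
  let bb := Module.finBasisOfFinrankEq (RatFunc F) V hV
  have hbmem : ∀ l, (bb l : Fin q → RatFunc F) ∈ V := fun l => (bb l).2
  have hbind : LinearIndependent (RatFunc F) (fun l => (bb l : Fin q → RatFunc F)) :=
    bb.linearIndependent.map' V.subtype V.ker_subtype
  obtain ⟨z, hzmem, hzind⟩ := exists_poly_rows _ hbmem hbind
  set N₁ : Matrix (Fin n) (Fin q) F[X] := Matrix.of z with hN₁
  have hind₁ : LinearIndependent (RatFunc F) (ratRow N₁) := hzind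
  have hspan₁ : rowSpan N₁ = V := by
    apply Submodule.eq_of_le_of_finrank_le
    · rw [rowSpan, Submodule.span_le]
      rintro y ⟨l, rfl⟩
      exact hzmem l
    · rw [hV]
      have := finrank_of_basis hind₁ rfl
      omega
  have hPex : ∃ D, ∃ N : Matrix (Fin n) (Fin q) F[X],
      LinearIndependent (RatFunc F) (ratRow N) ∧ rowSpan N = V ∧ ∑ i, rowDeg N i = D :=
    ⟨∑ i, rowDeg N₁ i, N₁, hind₁, hspan₁, rfl⟩
  obtain ⟨N, hNi, hNs, hND⟩ := Nat.find_spec hPex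
  refine ⟨N, hNi, hNs, ?_⟩
  intro M' hMi hMs
  rw [hND]
  exact Nat.find_min' hPex ⟨M', hMi, hMs, rfl⟩

lemma kprime_facts {m n d k' t : ℕ} (hm : 0 < m) (hn : 0 < n) (hd : 0 < d)
    (hk' : k' = ⌈(m * d : ℚ) / (n : ℚ)⌉₊) (ht : t = n * k' - m * d) :
    1 ≤ k' ∧ m * d ≤ n * k' ∧ (k' - 1) * n < m * d := by
  have hq : (0 : ℚ) < (n : ℚ) := by exact_mod_cast hn
  have hmd : (0 : ℚ) < (m : ℚ) * (d : ℚ) := by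
    have : (0 : ℚ) < (m : ℚ) := by exact_mod_cast hm
    have : (0 : ℚ) < (d : ℚ) := by exact_mod_cast hd
    positivity
  have hk1 : 1 ≤ k' := by
    rw [hk']
    exact Nat.ceil_pos.2 (div_pos hmd hq)
  constructor
  · exact hk1
  constructor
  · have h1 : ((m * d : ℕ) : ℚ) / (n : ℚ) ≤ (k' : ℚ) := by
      rw [hk']
      have := Nat.le_ceil ((m * d : ℚ) / (n : ℚ))
      push_cast at this ⊢
      exact this
    rw [div_le_iff₀ hq] at h1
    have h2 : ((m * d : ℕ) : ℚ) ≤ ((k' * n : ℕ) : ℚ) := by push_cast at h1 ⊢; linarith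
    have h3 : m * d ≤ k' * n := by exact_mod_cast h2
    rw [mul_comm n k']
    exact h3
  · have h1 : (k' - 1 : ℕ) < k' := by omega
    have h1' : k' - 1 < ⌈(m * d : ℚ) / (n : ℚ)⌉₊ := by rw [← hk']; exact h1
    have h2 : ((k' - 1 : ℕ) : ℚ) < (m * d : ℚ) / (n : ℚ) := Nat.lt_ceil.1 h1'
    rw [lt_div_iff₀ hq] at h2
    have h3 : (((k' - 1) * n : ℕ) : ℚ) < ((m * d : ℕ) : ℚ) := by push_cast at h2 ⊢; linarith
    exact_mod_cast h3

lemma rank_eq_of_full {m n d : ℕ} (hn : 0 < n)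
    (M : Matrix (Fin m) (Fin (m + n)) F[X]) (hdeg : ∀ i j, (M i j).natDegree ≤ d)
    (H : HasFullSylvesterRank d M) : (ratMat M).rank = m := by
  classical
  have hrnk := rank_ratMat_add (q := m + n) M
  have hrle : (ratMat M).rank ≤ m := by
    have := Matrix.rank_le_card_height (ratMat M)
    rwa [Fintype.card_fin] at this
  set ν := Module.finrank (RatFunc F) (rightNullSpace M) with hν
  have hνge : n ≤ ν := by omega
  by_contra hne
  have hνgt : n + 1 ≤ ν := by omega
  -- polynomial vectors spanning the null space
  let bb := Module.finBasis (RatFunc F) (rightNullSpace M)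
  have hbmem : ∀ l, (bb l : Fin (m + n) → RatFunc F) ∈ rightNullSpace M := fun l => (bb l).2
  have hbind : LinearIndependent (RatFunc F) (fun l => (bb l : Fin (m + n) → RatFunc F)) :=
    bb.linearIndependent.map' (rightNullSpace M).subtype (rightNullSpace M).ker_subtype
  obtain ⟨z, hzmem, hzind⟩ := exists_poly_rows _ hbmem hbind
  set D := Finset.univ.sup (fun l => vdeg (z l)) with hD
  set k := (n + 1) * D + m * d + 1 with hk
  have hk1 : 1 ≤ k := by omega
  have hkD : D < k := by
    have : D ≤ (n+1) * D := Nat.le_mul_of_pos_left D (by omega)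
    omega
  -- the shifted family lies in PK M k
  have hker := rows_in_polyker (N := Matrix.of z) (fun l => hzmem l)
  have hmem : ∀ ia : (Σ l : Fin ν, Fin (k - D)),
      (fun col => X ^ (ia.2 : ℕ) * z ia.1 col) ∈ PK M k := by
    rintro ⟨l, a⟩
    constructor
    · intro col
      apply lt_of_le_of_lt (Polynomial.degree_mul_le _ _)
      have h1 : (z l col).degree ≤ ((D : ℕ) : WithBot ℕ) := by
        apply le_trans (Polynomial.degree_le_natDegree)
        have h2 : (z l col).natDegree ≤ D := by
          apply le_trans (natDegree_le_vdeg (z l) col)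
          exact Finset.le_sup (f := fun l => vdeg (z l)) (Finset.mem_univ l)
        exact_mod_cast Nat.cast_le.2 h2
      apply lt_of_le_of_lt (add_le_add (Polynomial.degree_X_pow_le _) h1)
      rw [← Nat.cast_add]
      have h3 : (a : ℕ) + D < k := by have := a.isLt; omega
      exact_mod_cast h3
    · intro i'
      have h3 : ∑ j, M i' j * (X ^ (a : ℕ) * z l j)
          = X ^ (a : ℕ) * ∑ j, M i' j * z l j := by
        rw [Finset.mul_sum]
        apply Finset.sum_congr rfl
        intro j _
        ring
      have h4 : ∑ j, M i' j * z l j = 0 := hker l i'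
      rw [h3, h4, mul_zero]
  -- finrank bound
  have hfd : FiniteDimensional F (PK M k) := by
    rw [← map_ker_sylv d k M hdeg]
    infer_instance
  have hindshift := shift_indep hzind (fun _ => k - D)
  have hindsub : LinearIndependent F
      (fun ia : (Σ l : Fin ν, Fin (k - D)) =>
        (⟨fun col => X ^ (ia.2 : ℕ) * z ia.1 col, hmem ia⟩ : PK M k)) := by
    apply LinearIndependent.of_comp (PK M k).subtype
    exact hindshift
  have hcard := hindsub.fintype_card_le_finrank
  rw [Fintype.card_sigma] at hcard
  have hcard2 : ν * (k - D) ≤ Module.finrank F (PK M k) := by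
    have : ∑ _l : Fin ν, Fintype.card (Fin (k - D)) = ν * (k - D) := by
      rw [Finset.sum_const, Finset.card_univ, Fintype.card_fin, Fintype.card_fin, smul_eq_mul]
    omega
  -- compute finrank PK from full Sylvester rank
  have hsylv := rank_sylv_add_finrank_PK d k M hdeg
  have hrk := H k hk1
  have hmin : min ((k + d) * m) (k * (m + n)) = (k + d) * m := by
    apply Nat.min_eq_left
    have : m * d ≤ k * n := by nlinarith [hk]
    nlinarith [this]
  rw [hrk, hmin] at hsylv
  have hPK : Module.finrank F (PK M k) + m * d = k * n := by nlinarith [hsylv]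
  have h1 : (n + 1) * (k - D) ≤ ν * (k - D) := Nat.mul_le_mul_right _ hνgt
  have h2 : (n + 1) * (k - D) ≤ Module.finrank F (PK M k) := le_trans h1 hcard2
  zify [le_of_lt hkD] at h2
  zify at hPK hk
  nlinarith [h2, hPK, hk]

end FS

theorem main_thm {F : Type*} [Field F]
    {m n d : ℕ} (hm : 0 < m) (hn : 0 < n) (hd : 0 < d)
    (M : Matrix (Fin m) (Fin (m + n)) F[X]) (hdeg : ∀ i j, (M i j).natDegree ≤ d)
    (k' t : ℕ) (hk' : k' = ⌈(m * d : ℚ) / (n : ℚ)⌉₊) (ht : t = n * k' - m * d) :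
    HasFullSylvesterRank d M ↔
      ((ratMat M).rank = m ∧
        ∀ N : Matrix (Fin n) (Fin (m + n)) F[X],
          IsMinimalBasisOf (rightNullSpace M) N →
          (Finset.univ.filter fun i => rowDeg N i = k' - 1).card = t ∧
          (Finset.univ.filter fun i => rowDeg N i = k').card = n - t ∧
          ∀ j : ℕ, j ≠ k' - 1 → j ≠ k' →
            (Finset.univ.filter fun i => rowDeg N i = j).card = 0) := by
  classical
  obtain ⟨hk1, hmdle, hltn⟩ := FS.kprime_facts hm hn hd hk' ht
  have htq : t + m * d = n * k' := by rw [ht]; exact Nat.sub_add_cancel hmdle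
  have hk'n : (k' - 1) * n + n = k' * n := by
    have h0 : (k' - 1) + 1 = k' := by omega
    calc (k' - 1) * n + n = ((k' - 1) + 1) * n := by ring
    _ = k' * n := by rw [h0]
  have htn : t < n := by nlinarith [htq, hk'n, hltn]
  constructor
  · -- forward
    intro H
    have hrank := FS.rank_eq_of_full hn M hdeg H
    refine ⟨hrank, ?_⟩
    intro N hminb
    have hfr : ∀ k, Module.finrank F (FS.PK M k) = ∑ i, (k - rowDeg N i) :=
      fun k => FS.finrank_PK_of_minimal hminb k
    have hcore : ∀ k, (sylv d k M).rank + ∑ i, (k - rowDeg N i) = k * (m + n) := by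
      intro k
      rw [← hfr k]
      exact FS.rank_sylv_add_finrank_PK d k M hdeg
    have hmin1 : min ((k' + d) * m) (k' * (m + n)) = (k' + d) * m := by
      apply Nat.min_eq_left
      nlinarith [htq]
    have hS1 : ∑ i, (k' - rowDeg N i) = t := by
      have h1 := hcore k'
      rw [H k' hk1, hmin1] at h1
      nlinarith [h1, htq]
    have hmin2 : min ((k' + 1 + d) * m) ((k' + 1) * (m + n)) = (k' + 1 + d) * m := by
      apply Nat.min_eq_left
      nlinarith [htq]
    have hS2 : ∑ i, (k' + 1 - rowDeg N i) = n + t := by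
      have h1 := hcore (k' + 1)
      rw [H (k' + 1) (by omega), hmin2] at h1
      nlinarith [h1, htq]
    have hge : ∀ i, k' - 1 ≤ rowDeg N i := by
      by_cases hc : k' = 1
      · intro i; omega
      · have hk2 : 1 ≤ k' - 1 := by omega
        have hmin0 : min ((k' - 1 + d) * m) ((k' - 1) * (m + n)) = (k' - 1) * (m + n) := by
          apply Nat.min_eq_right
          nlinarith [hltn]
        have h1 := hcore (k' - 1)
        rw [H (k' - 1) hk2, hmin0] at h1
        have h2 : ∑ i, (k' - 1 - rowDeg N i) = 0 := by omega
        intro i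
        have h3 := Finset.sum_eq_zero_iff.1 h2 i (Finset.mem_univ i)
        omega
    have hcardA : (Finset.univ.filter fun i => rowDeg N i = k' - 1).card = t := by
      rw [Finset.card_filter, ← hS1]
      apply Finset.sum_congr rfl
      intro i _
      have := hge i
      by_cases hi : rowDeg N i = k' - 1
      · rw [if_pos hi]; omega
      · rw [if_neg hi]; omega
    have hcardB : (Finset.univ.filter fun i => rowDeg N i = k').card = n - t := by
      have hsplit : ∑ i, (k' + 1 - rowDeg N i)
          = ∑ i, ((if rowDeg N i = k' - 1 then 2 else 0)
              + (if rowDeg N i = k' then 1 else 0)) := by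
        apply Finset.sum_congr rfl
        intro i _
        have := hge i
        by_cases h1 : rowDeg N i = k' - 1
        · rw [if_pos h1, if_neg (by omega)]; omega
        · rw [if_neg h1]
          by_cases h2 : rowDeg N i = k'
          · rw [if_pos h2]; omega
          · rw [if_neg h2]; omega
      rw [hsplit, Finset.sum_add_distrib] at hS2
      have e1 : ∑ i : Fin n, (if rowDeg N i = k' - 1 then 2 else 0)
          = 2 * (Finset.univ.filter fun i => rowDeg N i = k' - 1).card := by
        rw [Finset.card_filter, Finset.mul_sum]
        apply Finset.sum_congr rfl
        intro i _
        by_cases h1 : rowDeg N i = k' - 1 <;> simp [h1]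
      have e2 : ∑ i : Fin n, (if rowDeg N i = k' then 1 else 0)
          = (Finset.univ.filter fun i => rowDeg N i = k').card := by
        rw [Finset.card_filter]
      rw [e1, e2, hcardA] at hS2
      omega
    refine ⟨hcardA, hcardB, ?_⟩
    intro j hj1 hj2
    rw [Finset.card_eq_zero, Finset.filter_eq_empty_iff]
    intro i _
    have hdisj : Disjoint (Finset.univ.filter fun i => rowDeg N i = k' - 1)
        (Finset.univ.filter fun i => rowDeg N i = k') := by
      rw [Finset.disjoint_left]
      intro i hiA hiB
      rw [Finset.mem_filter] at hiA hiB
      omega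
    have hunion : (Finset.univ.filter fun i => rowDeg N i = k' - 1)
        ∪ (Finset.univ.filter fun i => rowDeg N i = k') = Finset.univ := by
      apply Finset.eq_univ_of_card
      rw [Finset.card_union_of_disjoint hdisj, hcardA, hcardB, Fintype.card_fin]
      omega
    have hmemu := Finset.mem_univ i
    rw [← hunion, Finset.mem_union, Finset.mem_filter, Finset.mem_filter] at hmemu
    rcases hmemu with ⟨_, h⟩ | ⟨_, h⟩ <;> omega
  · -- backward
    rintro ⟨hrank, hcount⟩
    have hν : Module.finrank (RatFunc F) (rightNullSpace M) = n := by
      have := FS.rank_ratMat_add (q := m + n) M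
      omega
    obtain ⟨N, hminb⟩ := FS.exists_minimal_basis hν
    obtain ⟨hA, hB, hC⟩ := hcount N hminb
    have hmem2 : ∀ i, rowDeg N i = k' - 1 ∨ rowDeg N i = k' := by
      intro i
      by_contra hcon
      push_neg at hcon
      have h0 := hC (rowDeg N i) hcon.1 hcon.2
      rw [Finset.card_eq_zero, Finset.filter_eq_empty_iff] at h0
      exact h0 (Finset.mem_univ i) rfl
    have hfr : ∀ k, Module.finrank F (FS.PK M k) = ∑ i, (k - rowDeg N i) :=
      fun k => FS.finrank_PK_of_minimal hminb k
    have hcore : ∀ k, (sylv d k M).rank + ∑ i, (k - rowDeg N i) = k * (m + n) := by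
      intro k
      rw [← hfr k]
      exact FS.rank_sylv_add_finrank_PK d k M hdeg
    intro k hk1'
    by_cases hks : k ≤ k' - 1
    · have hzero : ∑ i, (k - rowDeg N i) = 0 :=
        Finset.sum_eq_zero fun i _ => by have := hmem2 i; omega
      have h1 := hcore k
      rw [hzero, add_zero] at h1
      have hminr : min ((k + d) * m) (k * (m + n)) = k * (m + n) := by
        apply Nat.min_eq_right
        have h2 : k * n ≤ (k' - 1) * n := Nat.mul_le_mul_right n hks
        nlinarith [h2, hltn]
      rw [hminr]
      exact h1
    · have hkk : k' ≤ k := by omega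
      have hBfilter : Finset.univ.filter (fun i => ¬ rowDeg N i = k' - 1)
          = Finset.univ.filter (fun i => rowDeg N i = k') := by
        apply Finset.filter_congr
        intro i _
        constructor
        · intro hne
          rcases hmem2 i with h | h
          · exact absurd h hne
          · exact h
        · intro he heq
          omega
      have hsum : ∑ i, (k - rowDeg N i) = (k - k' + 1) * t + (k - k') * (n - t) := by
        have hsplit : ∑ i, (k - rowDeg N i)
            = ∑ i, (if rowDeg N i = k' - 1 then (k - k' + 1) else (k - k')) := by
          apply Finset.sum_congr rfl
          intro i _
          have := hmem2 i
          by_cases h1 : rowDeg N i = k' - 1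
          · rw [if_pos h1]; omega
          · rw [if_neg h1]; omega
        rw [hsplit, Finset.sum_ite _ _, Finset.sum_const, Finset.sum_const,
          smul_eq_mul, smul_eq_mul, hBfilter, hA, hB]
        ring
      have h1 := hcore k
      rw [hsum] at h1
      have hminr : min ((k + d) * m) (k * (m + n)) = (k + d) * m := by
        apply Nat.min_eq_left
        have h2 : k' * n ≤ k * n := Nat.mul_le_mul_right n hkk
        nlinarith [htq, h2]
      rw [hminr]
      have hkey : (k - k' + 1) * t + (k - k') * (n - t) + (k + d) * m = k * (m + n) := by
        zify [hkk, le_of_lt htn]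
        have htq' : (t : ℤ) + (m : ℤ) * (d : ℤ) = (n : ℤ) * (k' : ℤ) := by
          exact_mod_cast htq
        linear_combination htq'
      have h3 : (k + d) * m + ((k - k' + 1) * t + (k - k') * (n - t)) = k * (m + n) := by
        linarith [hkey]
      exact Nat.add_right_cancel (h1.trans h3.symm)


/-- `M(λ)` has full-Sylvester-rank if and only if it has full row normal rank `m` and
its right minimal indices are `t` copies of `k' - 1` and `n - t` copies of `k'`,
where `k' = ⌈md/n⌉` and `t = nk' - md`. -/
theorem hasFullSylvesterRank_iff_rightMinimalIndices {F : Type*} [Field F]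
    {m n d : ℕ} (hm : 0 < m) (hn : 0 < n) (hd : 0 < d)
    (M : Matrix (Fin m) (Fin (m + n)) F[X]) (hdeg : ∀ i j, (M i j).natDegree ≤ d)
    (k' t : ℕ) (hk' : k' = ⌈(m * d : ℚ) / (n : ℚ)⌉₊) (ht : t = n * k' - m * d) :
    HasFullSylvesterRank d M ↔
      ((ratMat M).rank = m ∧
        ∀ N : Matrix (Fin n) (Fin (m + n)) F[X],
          IsMinimalBasisOf (rightNullSpace M) N →
          (Finset.univ.filter fun i => rowDeg N i = k' - 1).card = t ∧
          (Finset.univ.filter fun i => rowDeg N i = k').card = n - t ∧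
          ∀ j : ℕ, j ≠ k' - 1 → j ≠ k' →
            (Finset.univ.filter fun i => rowDeg N i = j).card = 0) := by
  exact main_thm hm hn hd M hdeg k' t hk' ht

end
end

section
/- Let M(λ) ∈ F[λ]^{p×q} (F = ℝ or ℂ) be any minimal basis with p < q, and let d be any integer with d > deg(M). Then for every ε > 0 there exists a polynomial matrix M̃(λ) ∈ F[λ]^{p×q}_d that is not a minimal basis and satisfies ‖S_1(M) − S_1(M̃)‖_2 < ε, where both M and M̃ are regarded as elements of F[λ]^{p×q}_d; that is, minimal bases are never robust under perturbations that may increase their degree. -/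
open Polynomial Matrix

noncomputable section

variable {F : Type*} [Field F]

variable {𝕜 : Type*} [RCLike 𝕜]

/-- The spectral norm (largest singular value) of a matrix. -/
def sNorm {a b : Type*} [Fintype a] [Fintype b] [DecidableEq b]
    (A : Matrix a b 𝕜) : ℝ :=
  ‖LinearMap.toContinuousLinearMap (Matrix.toEuclideanLin A)‖

/-- The Frobenius norm of a matrix. -/
def fNorm {a b : Type*} [Fintype a] [Fintype b] (A : Matrix a b 𝕜) : ℝ :=
  Real.sqrt (∑ i, ∑ j, ‖A i j‖ ^ 2)

/-- The `j`-th largest singular value of a matrix (`j = 1, 2, …`), via the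
Courant–Fischer variational characterization. -/
def singVal {a b : Type*} [Fintype a] [Fintype b] [DecidableEq b]
    (A : Matrix a b 𝕜) (j : ℕ) : ℝ :=
  sSup {r : ℝ | ∃ V : Submodule 𝕜 (EuclideanSpace 𝕜 b),
    Module.finrank 𝕜 V = j ∧ ∀ x ∈ V, r * ‖x‖ ≤ ‖Matrix.toEuclideanLin A x‖}


set_option synthInstance.maxHeartbeats 1000000
set_option maxHeartbeats 1000000

/-- Minimal bases are never robust under perturbations that may increase the degree:
if `d > deg(M)`, then arbitrarily close to `M` inside the space of polynomial
matrices of degree at most `d` there are matrices that are not minimal bases. -/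
theorem not_robust_of_degree_lt {𝕜 : Type*} [RCLike 𝕜] {p q : ℕ}
    (hp : 0 < p) (hpq : p < q)
    (M : Matrix (Fin p) (Fin q) 𝕜[X]) (hmb : IsMinimalBasis M)
    (d : ℕ) (hd : Finset.univ.sup (fun i => rowDeg M i) < d) :
    ∀ ε : ℝ, 0 < ε →
      ∃ M' : Matrix (Fin p) (Fin q) 𝕜[X],
        (∀ i j, (M' i j).natDegree ≤ d) ∧ ¬ IsMinimalBasis M' ∧
        sNorm (sylv d 1 M - sylv d 1 M') < ε := by
  intro ε hε
  obtain ⟨hli, -, -⟩ := hmb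
  set i0 : Fin p := ⟨0, hp⟩ with hi0
  set d0 : ℕ := rowDeg M i0 with hd0def
  have hd0lt : d0 < d := lt_of_le_of_lt (Finset.le_sup (f := fun i => rowDeg M i) (Finset.mem_univ i0)) hd
  set s : ℕ := d - d0 with hsdef
  have hs1 : 1 ≤ s := by omega
  have hsd : s + d0 = d := by omega
  have hrow0 : ratRow M i0 ≠ 0 := hli.ne_zero i0
  obtain ⟨j0, hj0⟩ : ∃ j, M i0 j ≠ 0 := by
    by_contra h
    push_neg at h
    apply hrow0
    funext j
    simp [ratRow, h j]
  set N : Matrix (Fin p) (Fin q) 𝕜[X] :=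
    fun i j => if i = i0 then X ^ s * M i j else 0 with hN
  set K : ℝ := sNorm (sylv d 1 N) with hK
  have hK0 : 0 ≤ K := norm_nonneg _
  set δr : ℝ := ε / (2 * (K + 1)) with hδr
  have hδrpos : 0 < δr := by positivity
  set δ : 𝕜 := (δr : 𝕜) with hδ
  have hδne : δ ≠ 0 := by
    rw [hδ]
    exact_mod_cast hδrpos.ne'
  set u : 𝕜[X] := 1 + C δ * X ^ s with hu
  have hcxs : (C δ * X ^ s).natDegree = s := natDegree_C_mul_X_pow s δ hδne
  have hudeg : u.natDegree = s := by
    rw [hu, natDegree_add_eq_right_of_natDegree_lt]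
    · exact hcxs
    · rw [hcxs]; simp only [natDegree_one]; exact hs1
  have hune : u ≠ 0 := by
    intro h
    rw [h, natDegree_zero] at hudeg
    omega
  set M' : Matrix (Fin p) (Fin q) 𝕜[X] :=
    fun i j => if i = i0 then u * M i j else M i j with hM'
  -- degree bounds
  have hdegle : ∀ i j, (M' i j).natDegree ≤ d := by
    intro i j
    have hle : (M i j).natDegree ≤ rowDeg M i := by
      unfold rowDeg
      exact Finset.le_sup (f := fun j => (M i j).natDegree) (Finset.mem_univ j)
    have hle2 : rowDeg M i ≤ Finset.univ.sup (fun i => rowDeg M i) := by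
      exact Finset.le_sup (f := fun i => rowDeg M i) (s := Finset.univ) (Finset.mem_univ i)
    by_cases h : i = i0
    · rw [hM']
      simp only [if_pos h]
      calc (u * M i j).natDegree ≤ u.natDegree + (M i j).natDegree := natDegree_mul_le
        _ ≤ s + d0 := by rw [hudeg]; subst h; omega
        _ = d := hsd
    · rw [hM']
      simp only [if_neg h]
      omega
  -- row degrees of M'
  have hrowdeg_ne : ∀ i, i ≠ i0 → rowDeg M' i = rowDeg M i := by
    intro i h
    unfold rowDeg
    apply Finset.sup_congr rfl
    intro j _
    rw [hM']
    simp [if_neg h]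
  have hrowdeg0 : rowDeg M' i0 = d := by
    apply le_antisymm
    · exact Finset.sup_le fun j _ => hdegle i0 j
    · haveI : Nonempty (Fin q) := ⟨⟨0, by omega⟩⟩
      obtain ⟨j1, hj1ne, hj1deg⟩ : ∃ j, M i0 j ≠ 0 ∧ (M i0 j).natDegree = d0 := by
        obtain ⟨js, -, hjs⟩ := Finset.exists_mem_eq_sup (Finset.univ : Finset (Fin q))
          Finset.univ_nonempty (fun j => (M i0 j).natDegree)
        by_cases hz : M i0 js = 0
        · have hz0 : d0 = 0 := by
            rw [hd0def]; unfold rowDeg; rw [hjs, hz, natDegree_zero]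
          have hb : (M i0 j0).natDegree ≤ d0 := by
            rw [hd0def]; unfold rowDeg
            exact Finset.le_sup (f := fun j => (M i0 j).natDegree) (Finset.mem_univ j0)
          exact ⟨j0, hj0, by omega⟩
        · exact ⟨js, hz, by rw [hd0def]; unfold rowDeg; rw [hjs]⟩
      have hM'01 : M' i0 j1 = u * M i0 j1 := by simp [hM']
      have hkey : (M' i0 j1).natDegree = d := by
        rw [hM'01, natDegree_mul hune hj1ne, hudeg, hj1deg, hsd]
      calc d = (M' i0 j1).natDegree := hkey.symm
        _ ≤ rowDeg M' i0 := by
          unfold rowDeg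
          exact Finset.le_sup (f := fun j => (M' i0 j).natDegree) (Finset.mem_univ j1)
  -- rows of M' are unit multiples of rows of M
  have hune' : (algebraMap 𝕜[X] (RatFunc 𝕜)) u ≠ 0 := fun h =>
    hune ((map_eq_zero_iff _ (RatFunc.algebraMap_injective 𝕜)).mp h)
  set c : Fin p → (RatFunc 𝕜)ˣ :=
    fun i => if i = i0 then Units.mk0 _ hune' else 1 with hc
  have hrr : ratRow M' = c • ratRow M := by
    funext i j
    rw [hc, hM']
    by_cases h : i = i0
    · simp only [if_pos h, Pi.smul_apply', Units.smul_def, Units.val_mk0, Pi.smul_apply,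
        smul_eq_mul, ratRow, _root_.map_mul]
    · simp only [if_neg h, Pi.smul_apply', Units.smul_def, Units.val_one, Pi.smul_apply,
        smul_eq_mul, ratRow, one_mul]
  have hli' : LinearIndependent (RatFunc 𝕜) (ratRow M') := by
    rw [hrr]; exact hli.units_smul c
  have hspan : rowSpan M = rowSpan M' := by
    apply le_antisymm
    · rw [rowSpan, Submodule.span_le]
      rintro _ ⟨i, rfl⟩
      have : ratRow M i = (c i)⁻¹ • ratRow M' i := by
        rw [hrr, Pi.smul_apply', inv_smul_smul]
      rw [this, Units.smul_def]
      exact Submodule.smul_mem _ _ (Submodule.subset_span ⟨i, rfl⟩)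
    · rw [rowSpan, Submodule.span_le]
      rintro _ ⟨i, rfl⟩
      rw [hrr, Pi.smul_apply', Units.smul_def]
      exact Submodule.smul_mem _ _ (Submodule.subset_span ⟨i, rfl⟩)
  -- M' is not a minimal basis
  have hnotmin : ¬ IsMinimalBasis M' := by
    rintro ⟨-, -, hopt⟩
    have hle := hopt M hli hspan
    have hlt : ∑ i, rowDeg M i < ∑ i, rowDeg M' i := by
      apply Finset.sum_lt_sum
      · intro i _
        by_cases h : i = i0
        · subst h; rw [hrowdeg0, ← hd0def]; omega
        · rw [hrowdeg_ne i h]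
      · exact ⟨i0, Finset.mem_univ i0, by rw [hrowdeg0, ← hd0def]; omega⟩
    omega
  -- the perturbation identity
  have hsub : sylv d 1 M - sylv d 1 M' = (-δ) • sylv d 1 N := by
    funext r cc
    simp only [Matrix.sub_apply, Matrix.smul_apply, smul_eq_mul, sylv, hN, hM']
    by_cases hcond : ((cc.1 : ℕ) ≤ (r.1 : ℕ) ∧ (r.1 : ℕ) ≤ (cc.1 : ℕ) + d)
    · rw [if_pos hcond, if_pos hcond, if_pos hcond]
      by_cases h : r.2 = i0
      · rw [if_pos h, if_pos h, hu]
        simp only [add_mul, one_mul, coeff_add, ← mul_assoc]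
        rw [mul_assoc (C δ), coeff_C_mul]
        ring
      · rw [if_neg h, if_neg h]
        simp
    · rw [if_neg hcond, if_neg hcond, if_neg hcond]
      ring
  -- norm estimate
  have hnorm : sNorm (sylv d 1 M - sylv d 1 M') = δr * K := by
    rw [hsub, sNorm, _root_.map_smul, _root_.map_smul,
      norm_smul (-δ) (LinearMap.toContinuousLinearMap (toEuclideanLin (sylv d 1 N)))]
    rw [hK, sNorm]
    congr 1
    rw [norm_neg, hδ, RCLike.norm_ofReal, abs_of_pos hδrpos]
  refine ⟨M', hdegle, hnotmin, ?_⟩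
  rw [hnorm]
  have h1 : δr * K ≤ δr * (K + 1) := by nlinarith
  have h2 : δr * (K + 1) = ε / 2 := by
    rw [hδr]
    field_simp
  nlinarith


end
end

section
/- Let F = ℝ or ℂ, let M(λ) ∈ F[λ]^{m×(m+n)}_d have full-Sylvester-rank and let k' = ⌈md/n⌉ and t = nk' − md. Then: (a) if k' > 1 and t > 0, every M̃(λ) ∈ F[λ]^{m×(m+n)}_d with ‖S_1(M) − S_1(M̃)‖_2 < min{ σ_{(k'−1)(m+n)}(S_{k'−1}(M))/√(k'−1), σ_{(k'+d)m}(S_{k'}(M))/√k' } has full-Sylvester-rank; (b) if k' = 1 or t = 0, every M̃(λ) ∈ F[λ]^{m×(m+n)}_d with ‖S_1(M) − S_1(M̃)‖_2 < σ_{(k'+d)m}(S_{k'}(M))/√k' has full-Sylvester-rank. -/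
open Polynomial Matrix

noncomputable section

variable {F : Type*} [Field F]

lemma sum_fin_window {α : Type*} [AddCommMonoid α] {K L s : ℕ} (h : s + L ≤ K)
    (f : ℕ → α) (hf : ∀ t, t < s ∨ s + L ≤ t → f t = 0) :
    ∑ t : Fin K, f t = ∑ t : Fin L, f (s + t) := by
  rw [Fin.sum_univ_eq_sum_range, Fin.sum_univ_eq_sum_range (fun t => f (s + t)) L]
  have h2 : ∑ t ∈ Finset.range L, f (s + t) = ∑ t ∈ Finset.Ico s (s + L), f t := by
    rw [Finset.sum_Ico_eq_sum_range]; simp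
  rw [h2]
  apply (Finset.sum_subset _ _).symm
  · intro t ht
    simp only [Finset.mem_Ico] at ht
    exact Finset.mem_range.2 (lt_of_lt_of_le ht.2 h)
  · intro t _ ht
    simp only [Finset.mem_Ico, not_and, not_lt] at ht
    rcases lt_or_ge t s with h'|h'
    · exact hf t (Or.inl h')
    · exact hf t (Or.inr (ht h'))

lemma sylv_mulVec {p q : ℕ} (e k : ℕ) (N : Matrix (Fin p) (Fin q) F[X])
    (x : Fin k × Fin q → F) (s : Fin (k + e)) (i : Fin p) (X : ℕ → Fin q → F)
    (hX : ∀ (j : Fin k) (c : Fin q), X (j : ℕ) c = x (j, c)) :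
    (sylv e k N *ᵥ x) (s, i)
      = ∑ j : Fin k, ∑ c : Fin q,
          (if (j:ℕ) ≤ (s:ℕ) ∧ (s:ℕ) ≤ (j:ℕ) + e then (N i c).coeff ((s:ℕ) - (j:ℕ)) else 0)
            * X (j:ℕ) c := by
  show ∑ jc : Fin k × Fin q, sylv e k N (s, i) jc * x jc = _
  rw [Fintype.sum_prod_type]
  exact Finset.sum_congr rfl fun j _ => Finset.sum_congr rfl fun c _ => by
    rw [hX j c]; rfl

/-- Padding: injectivity of `S_K` on columns gives injectivity of `S_k` for `k ≤ K`. -/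
lemma sylv_pad_inj {p q : ℕ} (e : ℕ) {k K : ℕ} (hkK : k ≤ K)
    (N : Matrix (Fin p) (Fin q) F[X])
    (h : ∀ x : Fin K × Fin q → F, (sylv e K N) *ᵥ x = 0 → x = 0) :
    ∀ x : Fin k × Fin q → F, (sylv e k N) *ᵥ x = 0 → x = 0 := by
  intro x hx
  set X : ℕ → Fin q → F := fun j c => if h : j < k then x (⟨j, h⟩, c) else 0 with hXdef
  have hX : ∀ (j : Fin k) (c : Fin q), X (j : ℕ) c = x (j, c) := by
    intro j c; simp only [hXdef]; rw [dif_pos j.isLt]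
  have hXK : ∀ (j : Fin K) (c : Fin q), X (j : ℕ) c
      = (fun jc : Fin K × Fin q => X jc.1 jc.2) (j, c) := fun _ _ => rfl
  set g : Fin p → ℕ → ℕ → F := fun i S J =>
    ∑ c : Fin q, (if J ≤ S ∧ S ≤ J + e then (N i c).coeff (S - J) else 0) * X J c with hg
  have hpad : (sylv e K N) *ᵥ (fun jc : Fin K × Fin q => X jc.1 jc.2) = 0 := by
    funext r
    obtain ⟨s, i⟩ := r
    rw [sylv_mulVec e K N _ s i X hXK]
    show ∑ j : Fin K, g i (s:ℕ) (j:ℕ) = (0 : _)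
    rcases Nat.lt_or_ge (s : ℕ) (k + e) with hs | hs
    · have step : ∑ j : Fin K, g i (s:ℕ) (j:ℕ) = ∑ j : Fin k, g i (s:ℕ) (j:ℕ) := by
        rw [sum_fin_window (s := 0) (L := k) (by omega) (g i (s:ℕ))]
        · simp
        · intro t ht
          have htk : k ≤ t := by omega
          simp only [hg]
          apply Finset.sum_eq_zero
          intro c _
          have : X t c = 0 := by simp only [hXdef]; rw [dif_neg (by omega)]
          rw [this, mul_zero]
      rw [step]
      have := congrFun hx (⟨(s:ℕ), hs⟩, i)
      rw [sylv_mulVec e k N x ⟨(s:ℕ), hs⟩ i X hX] at this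
      exact this
    · apply Finset.sum_eq_zero
      intro j _
      simp only [hg]
      apply Finset.sum_eq_zero
      intro c _
      rcases Nat.lt_or_ge (j : ℕ) k with hJ | hJ
      · rw [if_neg (by omega), zero_mul]
      · have : X (j:ℕ) c = 0 := by simp only [hXdef]; rw [dif_neg (by omega)]
        rw [this, mul_zero]
  have h0 := h _ hpad
  funext jc
  obtain ⟨j, c⟩ := jc
  have := congrFun h0 (⟨(j:ℕ), lt_of_lt_of_le j.isLt hkK⟩, c)
  rw [← hX j c]
  simpa using this

lemma sylv_vecMul {p q : ℕ} (e k : ℕ) (N : Matrix (Fin p) (Fin q) F[X])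
    (y : Fin (k + e) × Fin p → F) (j : Fin k) (c : Fin q) (Y : ℕ → Fin p → F)
    (hY : ∀ (r : Fin (k + e)) (i : Fin p), Y (r : ℕ) i = y (r, i)) :
    (Matrix.vecMul y (sylv e k N)) (j, c)
      = ∑ r : Fin (k + e), ∑ i : Fin p,
          Y (r:ℕ) i *
          (if (j:ℕ) ≤ (r:ℕ) ∧ (r:ℕ) ≤ (j:ℕ) + e then (N i c).coeff ((r:ℕ) - (j:ℕ)) else 0) := by
  show ∑ ri : Fin (k + e) × Fin p, y ri * sylv e k N ri (j, c) = _
  rw [Fintype.sum_prod_type]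
  exact Finset.sum_congr rfl fun r _ => Finset.sum_congr rfl fun i _ => by
    rw [hY r i]; rfl

/-- Windows: left-kernel triviality of `S_{k'}` gives it for all `k ≥ k'`. -/
lemma sylv_window_inj {p q : ℕ} (e : ℕ) {k' k : ℕ} (hk' : 1 ≤ k') (hkk : k' ≤ k)
    (N : Matrix (Fin p) (Fin q) F[X])
    (h : ∀ y : Fin (k' + e) × Fin p → F, Matrix.vecMul y (sylv e k' N) = 0 → y = 0) :
    ∀ y : Fin (k + e) × Fin p → F, Matrix.vecMul y (sylv e k N) = 0 → y = 0 := by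
  intro y hy
  set Y : ℕ → Fin p → F := fun r i => if h : r < k + e then y (⟨r, h⟩, i) else 0 with hYdef
  have hY : ∀ (r : Fin (k + e)) (i : Fin p), Y (r : ℕ) i = y (r, i) := by
    intro r i; simp only [hYdef]; rw [dif_pos r.isLt]
  have hwin : ∀ s : ℕ, s ≤ k - k' →
      (fun ri : Fin (k' + e) × Fin p => Y (s + (ri.1 : ℕ)) ri.2) = 0 := by
    intro s hs
    apply h
    funext jc
    obtain ⟨j, c⟩ := jc
    set Ys : ℕ → Fin p → F := fun r i => Y (s + r) i with hYs
    have hYs' : ∀ (r : Fin (k' + e)) (i : Fin p), Ys (r:ℕ) i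
        = (fun ri : Fin (k' + e) × Fin p => Y (s + (ri.1 : ℕ)) ri.2) (r, i) := fun _ _ => rfl
    rw [sylv_vecMul e k' N _ j c Ys hYs']
    set f : ℕ → F := fun r => ∑ i : Fin p,
        Y r i * (if s + (j:ℕ) ≤ r ∧ r ≤ s + (j:ℕ) + e then (N i c).coeff (r - (s + (j:ℕ))) else 0)
      with hf
    have step1 : ∑ r : Fin (k' + e), ∑ i : Fin p,
        Ys (r:ℕ) i * (if (j:ℕ) ≤ (r:ℕ) ∧ (r:ℕ) ≤ (j:ℕ) + e then (N i c).coeff ((r:ℕ) - (j:ℕ)) else 0)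
        = ∑ r : Fin (k' + e), f (s + (r:ℕ)) := by
      apply Finset.sum_congr rfl
      intro r _
      apply Finset.sum_congr rfl
      intro i _
      simp only [hf, hYs]
      congr 1
      have hcond : (s + (j:ℕ) ≤ s + (r:ℕ) ∧ s + (r:ℕ) ≤ s + (j:ℕ) + e)
          ↔ ((j:ℕ) ≤ (r:ℕ) ∧ (r:ℕ) ≤ (j:ℕ) + e) := by omega
      by_cases hc : (j:ℕ) ≤ (r:ℕ) ∧ (r:ℕ) ≤ (j:ℕ) + e
      · rw [if_pos hc, if_pos (hcond.2 hc)]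
        congr 1
        omega
      · rw [if_neg hc, if_neg (fun hx => hc (hcond.1 hx))]
    rw [step1, ← sum_fin_window (K := k + e) (by omega) f]
    · have hsj : s + (j:ℕ) < k := by omega
      have := congrFun hy (⟨s + (j:ℕ), hsj⟩, c)
      rw [sylv_vecMul e k N y ⟨s + (j:ℕ), hsj⟩ c Y hY] at this
      simp only [Pi.zero_apply] at this
      simp only [Pi.zero_apply]
      rw [← this]
    · intro t ht
      simp only [hf]
      apply Finset.sum_eq_zero
      intro i _
      rcases ht with ht | ht
      · rw [if_neg (by omega), mul_zero]
      · rcases Nat.lt_or_ge t (k + e) with h2 | h2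
        · rw [if_neg (by omega), mul_zero]
        · have : Y t i = 0 := by simp only [hYdef]; rw [dif_neg (by omega)]
          rw [this, zero_mul]
  funext ri
  obtain ⟨r, i⟩ := ri
  set s : ℕ := min (r : ℕ) (k - k') with hs
  have h1 : s ≤ k - k' := min_le_right _ _
  have h2 : (r : ℕ) - s < k' + e := by
    have := r.isLt; omega
  have := congrFun (hwin s h1) (⟨(r:ℕ) - s, h2⟩, i)
  simp only at this
  rw [← hY r i]
  have hsr : s + ((r:ℕ) - s) = (r:ℕ) := by omega
  rw [← hsr]
  exact this


lemma sylv_sub {p q : ℕ} (e k : ℕ) (M M' : Matrix (Fin p) (Fin q) F[X]) :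
    sylv e k M - sylv e k M' = sylv e k (M - M') := by
  funext r c
  show sylv e k M r c - sylv e k M' r c = sylv e k (M - M') r c
  by_cases h : (c.1 : ℕ) ≤ (r.1 : ℕ) ∧ (r.1 : ℕ) ≤ (c.1 : ℕ) + e
  · simp only [sylv, if_pos h, Matrix.sub_apply, Polynomial.coeff_sub]
  · simp only [sylv, if_neg h, sub_zero]

variable {𝕜 : Type*} [RCLike 𝕜]

lemma norm_toEuclideanLin_apply_le {a b : Type*} [Fintype a] [Fintype b] [DecidableEq b]
    (A : Matrix a b 𝕜) (x : EuclideanSpace 𝕜 b) :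
    ‖Matrix.toEuclideanLin A x‖ ≤ sNorm A * ‖x‖ := by
  have := (LinearMap.toContinuousLinearMap (Matrix.toEuclideanLin A)).le_opNorm x
  rwa [LinearMap.coe_toContinuousLinearMap'] at this

lemma rank_eq_finrank_range_toEuclideanLin {a b : Type*} [Fintype a] [Fintype b]
    [DecidableEq b] (A : Matrix a b 𝕜) :
    A.rank = Module.finrank 𝕜 (LinearMap.range (Matrix.toEuclideanLin A)) := by
  rw [Matrix.rank_eq_finrank_range_toLin A (PiLp.basisFun 2 𝕜 a) (PiLp.basisFun 2 𝕜 b)]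
  rfl

/-- Weyl-type robustness: if `‖A - B‖₂ < σ_j(A)` then `rank B ≥ j`. -/
lemma le_rank_of_sNorm_lt_singVal {a b : Type*} [Fintype a] [Fintype b] [DecidableEq b]
    (A B : Matrix a b 𝕜) (j : ℕ) (h : sNorm (A - B) < singVal A j) : j ≤ B.rank := by
  obtain ⟨r, hrmem, hr⟩ : ∃ r ∈ {r : ℝ | ∃ V : Submodule 𝕜 (EuclideanSpace 𝕜 b),
      Module.finrank 𝕜 V = j ∧ ∀ x ∈ V, r * ‖x‖ ≤ ‖Matrix.toEuclideanLin A x‖},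
      sNorm (A - B) < r := by
    by_contra hc
    push_neg at hc
    have := Real.sSup_le (fun x hx => hc x hx) (norm_nonneg _)
    rw [← singVal] at this
    exact absurd h (not_lt.2 this)
  obtain ⟨V, hV, hVb⟩ := hrmem
  set f := Matrix.toEuclideanLin B with hf
  have hinj : ∀ x ∈ V, f x = 0 → x = 0 := by
    intro x hx hfx
    have h1 : r * ‖x‖ ≤ ‖Matrix.toEuclideanLin A x‖ := hVb x hx
    have h2 : Matrix.toEuclideanLin A x = Matrix.toEuclideanLin (A - B) x + f x := by
      rw [map_sub]; simp [hf]
    have h3 : ‖Matrix.toEuclideanLin (A - B) x‖ ≤ sNorm (A - B) * ‖x‖ :=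
      norm_toEuclideanLin_apply_le _ x
    rw [h2, hfx, add_zero] at h1
    have h4 : r * ‖x‖ ≤ sNorm (A - B) * ‖x‖ := le_trans h1 h3
    have h5 : ‖x‖ = 0 := by nlinarith [norm_nonneg x]
    exact norm_eq_zero.1 h5
  have hker : LinearMap.ker (f.domRestrict V) = ⊥ := by
    rw [LinearMap.ker_eq_bot']
    intro x hx
    have := hinj x.1 x.2 hx
    exact Subtype.ext this
  have h6 := LinearMap.finrank_range_add_finrank_ker (f.domRestrict V)
  rw [hker, finrank_bot 𝕜 _, add_zero, hV] at h6
  have h7 : LinearMap.range (f.domRestrict V) ≤ LinearMap.range f := by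
    rintro z ⟨x, rfl⟩; exact ⟨x.1, rfl⟩
  calc j = Module.finrank 𝕜 (LinearMap.range (f.domRestrict V)) := h6.symm
    _ ≤ Module.finrank 𝕜 (LinearMap.range f) := Submodule.finrank_mono h7
    _ = B.rank := (rank_eq_finrank_range_toEuclideanLin B).symm

/-- Full column rank iff `mulVec` injective-at-zero. -/
lemma rank_eq_card_of_mulVec_inj {a b : Type*} [Fintype a] [Fintype b] [DecidableEq b]
    (A : Matrix a b 𝕜) (h : ∀ x : b → 𝕜, A *ᵥ x = 0 → x = 0) :
    A.rank = Fintype.card b := by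
  have hker : LinearMap.ker A.mulVecLin = ⊥ := by
    rw [LinearMap.ker_eq_bot']
    intro x hx
    exact h x hx
  have h6 := LinearMap.finrank_range_add_finrank_ker A.mulVecLin
  rw [hker, finrank_bot 𝕜 _, add_zero, Module.finrank_fintype_fun_eq_card] at h6
  exact h6

lemma mulVec_inj_of_rank_eq_card {a b : Type*} [Fintype a] [Fintype b] [DecidableEq b]
    (A : Matrix a b 𝕜) (h : Fintype.card b ≤ A.rank) :
    ∀ x : b → 𝕜, A *ᵥ x = 0 → x = 0 := by
  have h6 := LinearMap.finrank_range_add_finrank_ker A.mulVecLin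
  rw [Module.finrank_fintype_fun_eq_card] at h6
  have hrank : A.rank = Module.finrank 𝕜 (LinearMap.range A.mulVecLin) := rfl
  have hker0 : Module.finrank 𝕜 (LinearMap.ker A.mulVecLin) = 0 := by omega
  have hker : LinearMap.ker A.mulVecLin = ⊥ :=
    Submodule.finrank_eq_zero.1 hker0
  intro x hx
  have : x ∈ LinearMap.ker A.mulVecLin := hx
  rw [hker] at this
  exact this

lemma vecMul_inj_of_rank_eq_card {a b : Type*} [Fintype a] [Fintype b] [DecidableEq a]
    [DecidableEq b] (A : Matrix a b 𝕜) (h : Fintype.card a ≤ A.rank) :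
    ∀ y : a → 𝕜, Matrix.vecMul y A = 0 → y = 0 := by
  intro y hy
  have ht : Fintype.card a ≤ Aᵀ.rank := by rwa [Matrix.rank_transpose]
  refine mulVec_inj_of_rank_eq_card Aᵀ ht y ?_
  rwa [Matrix.mulVec_transpose]

lemma rank_eq_card_of_vecMul_inj {a b : Type*} [Fintype a] [Fintype b] [DecidableEq a]
    [DecidableEq b] (A : Matrix a b 𝕜)
    (h : ∀ y : a → 𝕜, Matrix.vecMul y A = 0 → y = 0) :
    A.rank = Fintype.card a := by
  rw [← Matrix.rank_transpose]
  apply rank_eq_card_of_mulVec_inj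
  intro y hy
  rw [Matrix.mulVec_transpose] at hy
  exact h y hy

lemma sNorm_nonneg {a b : Type*} [Fintype a] [Fintype b] [DecidableEq b]
    (A : Matrix a b 𝕜) : 0 ≤ sNorm A := norm_nonneg _

/-- Block-column bound: `‖S_k(Δ)‖₂ ≤ √k ‖S_1(Δ)‖₂`. -/
lemma sNorm_sylv_le {p q : ℕ} (e : ℕ) {k : ℕ} (hk : 1 ≤ k)
    (Δ : Matrix (Fin p) (Fin q) 𝕜[X]) :
    sNorm (sylv e k Δ) ≤ Real.sqrt k * sNorm (sylv e 1 Δ) := by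
  rw [show sNorm (sylv e k Δ)
      = ‖LinearMap.toContinuousLinearMap (Matrix.toEuclideanLin (sylv e k Δ))‖ from rfl]
  apply ContinuousLinearMap.opNorm_le_bound _
    (mul_nonneg (Real.sqrt_nonneg _) (sNorm_nonneg _))
  intro x
  rw [LinearMap.coe_toContinuousLinearMap']
  -- the block components of x
  set xh : Fin k → EuclideanSpace 𝕜 (Fin 1 × Fin q) := fun j => WithLp.toLp 2 (fun oc : Fin 1 × Fin q => x (j, oc.2)) with hxh
  -- the shifted images
  set w : Fin k → EuclideanSpace 𝕜 (Fin (k + e) × Fin p) := fun j => WithLp.toLp 2 (fun (si : Fin (k + e) × Fin p) =>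
    if h : (j : ℕ) ≤ (si.1 : ℕ) ∧ (si.1 : ℕ) ≤ (j : ℕ) + e then
      (Matrix.toEuclideanLin (sylv e 1 Δ) (xh j))
        (⟨(si.1 : ℕ) - (j : ℕ), by omega⟩, si.2)
    else 0) with hw
  have hS1 : ∀ (j : Fin k) (t : Fin (1 + e)) (i : Fin p),
      (Matrix.toEuclideanLin (sylv e 1 Δ) (xh j)) (t, i)
        = ∑ c : Fin q, (Δ i c).coeff (t : ℕ) * x (j, c) := by
    intro j t i
    show ∑ oc : Fin 1 × Fin q, sylv e 1 Δ (t, i) oc * xh j oc = _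
    rw [Fintype.sum_prod_type]
    rw [Finset.sum_eq_single (0 : Fin 1)]
    · apply Finset.sum_congr rfl
      intro c _
      have hcond : ((0 : Fin 1) : ℕ) ≤ (t : ℕ) ∧ (t : ℕ) ≤ ((0 : Fin 1) : ℕ) + e := by
        constructor
        · exact Nat.zero_le _
        · have := t.isLt; omega
      show (if _ then (Δ i c).coeff ((t:ℕ) - ((0 : Fin 1):ℕ)) else 0) * xh j (0, c) = _
      rw [if_pos hcond]
      simp [hxh]
    · intro o _ ho
      exact absurd (Subsingleton.elim o 0) ho
    · intro hno
      exact absurd (Finset.mem_univ _) hno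
  have claim1 : Matrix.toEuclideanLin (sylv e k Δ) x = ∑ j : Fin k, w j := by
    refine PiLp.ext fun si => ?_
    obtain ⟨s, i⟩ := si
    have hsum : (∑ j : Fin k, w j) (s, i) = ∑ j : Fin k, w j (s, i) := by
      rw [WithLp.ofLp_sum]; exact Finset.sum_apply _ _ _
    rw [hsum]
    show ∑ jc : Fin k × Fin q, sylv e k Δ (s, i) jc * x jc = _
    rw [Fintype.sum_prod_type]
    apply Finset.sum_congr rfl
    intro j _
    by_cases hc : (j : ℕ) ≤ (s : ℕ) ∧ (s : ℕ) ≤ (j : ℕ) + e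
    · rw [show w j (s, i) = (Matrix.toEuclideanLin (sylv e 1 Δ) (xh j))
          (⟨(s : ℕ) - (j : ℕ), by omega⟩, i) from dif_pos hc]
      rw [hS1]
      apply Finset.sum_congr rfl
      intro c _
      show (if _ then (Δ i c).coeff ((s:ℕ) - (j:ℕ)) else 0) * x (j, c) = _
      rw [if_pos hc]
    · rw [show w j (s, i) = 0 from dif_neg hc]
      apply Finset.sum_eq_zero
      intro c _
      show (if _ then (Δ i c).coeff ((s:ℕ) - (j:ℕ)) else 0) * x (j, c) = 0
      rw [if_neg hc, zero_mul]
  have claim2 : ∀ j : Fin k, ‖w j‖ ≤ sNorm (sylv e 1 Δ) * ‖xh j‖ := by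
    intro j
    have heq : ‖w j‖ = ‖Matrix.toEuclideanLin (sylv e 1 Δ) (xh j)‖ := by
      rw [EuclideanSpace.norm_eq, EuclideanSpace.norm_eq]
      congr 1
      rw [Fintype.sum_prod_type, Fintype.sum_prod_type]
      set f : ℕ → ℝ := fun t => if h : t < k + e then ∑ i : Fin p, ‖w j (⟨t, h⟩, i)‖ ^ 2 else 0
        with hfdef
      have h1 : ∑ s : Fin (k + e), ∑ i : Fin p, ‖w j (s, i)‖ ^ 2 = ∑ s : Fin (k + e), f (s : ℕ) := by
        apply Finset.sum_congr rfl
        intro s _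
        rw [hfdef]
        simp only [dif_pos s.isLt]
      rw [h1, sum_fin_window (s := (j : ℕ)) (L := 1 + e) (by omega) f]
      · apply Finset.sum_congr rfl
        intro t _
        rw [hfdef]
        simp only []
        rw [dif_pos (show (j : ℕ) + (t : ℕ) < k + e by have := t.isLt; have := j.isLt; omega)]
        apply Finset.sum_congr rfl
        intro i _
        congr 1
        have hc : (j : ℕ) ≤ (j : ℕ) + (t : ℕ) ∧ (j : ℕ) + (t : ℕ) ≤ (j : ℕ) + e := by
          have := t.isLt; omega
        rw [show w j (⟨(j:ℕ) + (t:ℕ), _⟩, i) = (Matrix.toEuclideanLin (sylv e 1 Δ) (xh j))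
            (⟨(j : ℕ) + (t : ℕ) - (j : ℕ), by omega⟩, i) from dif_pos hc]
        rw [hS1 j _ i, hS1 j t i]
        simp only [Fin.val_mk, Nat.add_sub_cancel_left]
      · intro t ht
        rw [hfdef]
        simp only []
        by_cases h2 : t < k + e
        · rw [dif_pos h2]
          apply Finset.sum_eq_zero
          intro i _
          have hc : ¬ ((j : ℕ) ≤ t ∧ t ≤ (j : ℕ) + e) := by omega
          rw [show w j (⟨t, h2⟩, i) = 0 from dif_neg hc]
          simp
        · rw [dif_neg h2]
    rw [heq]
    exact norm_toEuclideanLin_apply_le _ _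
  have claim3 : ∑ j : Fin k, ‖xh j‖ ≤ Real.sqrt k * ‖x‖ := by
    have hx2 : ∑ j : Fin k, ‖xh j‖ ^ 2 = ‖x‖ ^ 2 := by
      rw [EuclideanSpace.norm_eq]
      rw [Real.sq_sqrt (by positivity)]
      rw [Fintype.sum_prod_type]
      apply Finset.sum_congr rfl
      intro j _
      rw [EuclideanSpace.norm_eq, Real.sq_sqrt (by positivity)]
      rw [Fintype.sum_prod_type]
      rw [Finset.sum_eq_single (0 : Fin 1)]
      · intro o _ ho
        exact absurd (Subsingleton.elim o 0) ho
      · intro hno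
        exact absurd (Finset.mem_univ _) hno
    have hcs : (∑ j : Fin k, ‖xh j‖) ^ 2 ≤ (k : ℝ) * ∑ j : Fin k, ‖xh j‖ ^ 2 := by
      have := sq_sum_le_card_mul_sum_sq (s := (Finset.univ : Finset (Fin k)))
        (f := fun j => ‖xh j‖)
      simpa using this
    rw [hx2] at hcs
    have h0 : (0:ℝ) ≤ ∑ j : Fin k, ‖xh j‖ := Finset.sum_nonneg fun _ _ => norm_nonneg _
    have h1 : (0:ℝ) ≤ Real.sqrt k * ‖x‖ := by positivity
    nlinarith [Real.sq_sqrt (show (0:ℝ) ≤ k by positivity), Real.sqrt_nonneg (k:ℝ),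
      norm_nonneg x]
  calc ‖Matrix.toEuclideanLin (sylv e k Δ) x‖ = ‖∑ j : Fin k, w j‖ := by rw [claim1]
    _ ≤ ∑ j : Fin k, ‖w j‖ := norm_sum_le _ _
    _ ≤ ∑ j : Fin k, sNorm (sylv e 1 Δ) * ‖xh j‖ := Finset.sum_le_sum fun j _ => claim2 j
    _ = sNorm (sylv e 1 Δ) * ∑ j : Fin k, ‖xh j‖ := by rw [Finset.mul_sum]
    _ ≤ sNorm (sylv e 1 Δ) * (Real.sqrt k * ‖x‖) :=
        mul_le_mul_of_nonneg_left claim3 (sNorm_nonneg _)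
    _ = Real.sqrt k * sNorm (sylv e 1 Δ) * ‖x‖ := by ring


/-- Core: full row rank of `S_{k'}` plus (for `k' > 1`) full column rank of `S_{k'-1}`
imply full-Sylvester-rank. -/
lemma core_full {𝕜 : Type*} [RCLike 𝕜] {m n d : ℕ} {k' : ℕ} (hk'1 : 1 ≤ k')
    (hge : m * d ≤ n * k') (hlt : n * (k' - 1) < m * d)
    (M' : Matrix (Fin m) (Fin (m + n)) 𝕜[X])
    (hrow : ∀ y : Fin (k' + d) × Fin m → 𝕜, Matrix.vecMul y (sylv d k' M') = 0 → y = 0)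
    (hcol : 1 < k' → ∀ x : Fin (k' - 1) × Fin (m + n) → 𝕜,
      sylv d (k' - 1) M' *ᵥ x = 0 → x = 0) :
    HasFullSylvesterRank d M' := by
  intro k hk
  rcases le_or_gt k' k with hkk | hkk
  · have hinj := sylv_window_inj d hk'1 hkk M' hrow
    have hrank := rank_eq_card_of_vecMul_inj _ hinj
    have hmin : (k + d) * m ≤ k * (m + n) := by
      have h1 : m * d ≤ n * k := le_trans hge (Nat.mul_le_mul_left n hkk)
      calc (k + d) * m = k * m + m * d := by ring
        _ ≤ k * m + n * k := Nat.add_le_add_left h1 _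
        _ = k * (m + n) := by ring
    rw [hrank, Nat.min_eq_left hmin]
    simp
  · have h1k' : 1 < k' := by omega
    have hpad := sylv_pad_inj d (show k ≤ k' - 1 by omega) M' (hcol h1k')
    have hrank := rank_eq_card_of_mulVec_inj _ hpad
    have hmin : k * (m + n) ≤ (k + d) * m := by
      have h1 : k * n ≤ n * (k' - 1) := by
        rw [mul_comm]
        exact Nat.mul_le_mul_left n (by omega)
      have h2 : k * n ≤ m * d := le_trans h1 (le_of_lt hlt)
      calc k * (m + n) = k * m + k * n := by ring
        _ ≤ k * m + m * d := Nat.add_le_add_left h2 _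
        _ = (k + d) * m := by ring
    rw [hrank, Nat.min_eq_right hmin]
    simp

lemma weyl_helper {𝕜 : Type*} [RCLike 𝕜] {m n d : ℕ} {K : ℕ} (hK : 1 ≤ K)
    (M M' : Matrix (Fin m) (Fin (m + n)) 𝕜[X]) (j : ℕ)
    (h : sNorm (sylv d 1 M - sylv d 1 M') < singVal (sylv d K M) j / Real.sqrt K) :
    j ≤ (sylv d K M').rank := by
  apply le_rank_of_sNorm_lt_singVal (sylv d K M) (sylv d K M') j
  have hs : (0:ℝ) < Real.sqrt K := Real.sqrt_pos.2 (by exact_mod_cast hK)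
  have h2 : sNorm (sylv d 1 M - sylv d 1 M') * Real.sqrt K < singVal (sylv d K M) j :=
    (lt_div_iff₀ hs).1 h
  calc sNorm (sylv d K M - sylv d K M') = sNorm (sylv d K (M - M')) := by rw [sylv_sub]
    _ ≤ Real.sqrt K * sNorm (sylv d 1 (M - M')) := sNorm_sylv_le d hK _
    _ = sNorm (sylv d 1 M - sylv d 1 M') * Real.sqrt K := by rw [← sylv_sub]; ring
    _ < _ := h2

/-- Robustness of full-Sylvester-rank matrices, with `k' = ⌈md/n⌉` and
`t = nk' - md`: (a) if `k' > 1` and `t > 0`, every `M̃` of degree at most `d` with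
`‖S_1(M) - S_1(M̃)‖_2 < min{σ_{(k'-1)(m+n)}(S_{k'-1}(M))/√(k'-1),
σ_{(k'+d)m}(S_{k'}(M))/√k'}` has full-Sylvester-rank; (b) if `k' = 1` or `t = 0`,
every `M̃` with `‖S_1(M) - S_1(M̃)‖_2 < σ_{(k'+d)m}(S_{k'}(M))/√k'` has
full-Sylvester-rank. -/
theorem robust_hasFullSylvesterRank {𝕜 : Type*} [RCLike 𝕜] {m n d : ℕ}
    (hm : 0 < m) (hn : 0 < n) (hd : 0 < d)
    (M : Matrix (Fin m) (Fin (m + n)) 𝕜[X]) (hdeg : ∀ i j, (M i j).natDegree ≤ d)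
    (hfull : HasFullSylvesterRank d M)
    (k' t : ℕ) (hk' : k' = ⌈(m * d : ℚ) / (n : ℚ)⌉₊) (ht : t = n * k' - m * d) :
    (1 < k' → 0 < t →
      ∀ M' : Matrix (Fin m) (Fin (m + n)) 𝕜[X], (∀ i j, (M' i j).natDegree ≤ d) →
        sNorm (sylv d 1 M - sylv d 1 M') <
          min (singVal (sylv d (k' - 1) M) ((k' - 1) * (m + n)) / Real.sqrt (k' - 1))
              (singVal (sylv d k' M) ((k' + d) * m) / Real.sqrt k') →
        HasFullSylvesterRank d M') ∧
    (k' = 1 ∨ t = 0 →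
      ∀ M' : Matrix (Fin m) (Fin (m + n)) 𝕜[X], (∀ i j, (M' i j).natDegree ≤ d) →
        sNorm (sylv d 1 M - sylv d 1 M') <
          singVal (sylv d k' M) ((k' + d) * m) / Real.sqrt k' →
        HasFullSylvesterRank d M') := by
  have hmd : 0 < m * d := Nat.mul_pos hm hd
  have hnQ : (0:ℚ) < (n:ℚ) := by exact_mod_cast hn
  have hk'pos : 1 ≤ k' := by
    rw [hk']
    have : (0:ℚ) < (m * d : ℚ) / (n : ℚ) := by
      apply div_pos _ hnQ
      exact_mod_cast hmd
    have := Nat.ceil_pos.2 this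
    omega
  have hge : m * d ≤ n * k' := by
    have h1 : (m * d : ℚ) / (n : ℚ) ≤ (k' : ℚ) := by
      rw [hk']; exact Nat.le_ceil _
    have h2 : (m * d : ℚ) ≤ (k' : ℚ) * (n : ℚ) := (div_le_iff₀ hnQ).1 h1
    have h3 : ((m * d : ℕ) : ℚ) ≤ ((n * k' : ℕ) : ℚ) := by push_cast; linarith
    exact_mod_cast h3
  have hlt : n * (k' - 1) < m * d := by
    have h3 : (k' - 1 : ℕ) < k' := by omega
    have h4 : ((k' - 1 : ℕ) : ℚ) < (m * d : ℚ) / (n : ℚ) := by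
      nth_rewrite 2 [hk'] at h3
      exact Nat.lt_ceil.1 h3
    have h5 : ((k' - 1 : ℕ) : ℚ) * (n : ℚ) < (m * d : ℚ) := (lt_div_iff₀ hnQ).1 h4
    have h6 : ((n * (k' - 1) : ℕ) : ℚ) < ((m * d : ℕ) : ℚ) := by push_cast; linarith
    exact_mod_cast h6
  constructor
  · intro hk'gt _ M' _ hbound
    rw [lt_min_iff] at hbound
    obtain ⟨hb1, hb2⟩ := hbound
    have hrow_rank := weyl_helper hk'pos M M' ((k' + d) * m) hb2
    have hrow : ∀ y : Fin (k' + d) × Fin m → 𝕜, Matrix.vecMul y (sylv d k' M') = 0 → y = 0 := by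
      apply vecMul_inj_of_rank_eq_card
      simpa using hrow_rank
    have hk'm1 : 1 ≤ k' - 1 := by omega
    rw [show ((k' : ℝ) - 1) = ((k' - 1 : ℕ) : ℝ) by
      rw [Nat.cast_sub hk'pos]; norm_num] at hb1
    have hcol_rank := weyl_helper hk'm1 M M' ((k' - 1) * (m + n)) hb1
    have hcol : ∀ x : Fin (k' - 1) × Fin (m + n) → 𝕜, sylv d (k' - 1) M' *ᵥ x = 0 → x = 0 := by
      apply mulVec_inj_of_rank_eq_card
      simpa using hcol_rank
    exact core_full hk'pos hge hlt M' hrow (fun _ => hcol)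
  · intro hcase M' _ hbound
    have hrow_rank := weyl_helper hk'pos M M' ((k' + d) * m) hbound
    have hrow : ∀ y : Fin (k' + d) × Fin m → 𝕜, Matrix.vecMul y (sylv d k' M') = 0 → y = 0 := by
      apply vecMul_inj_of_rank_eq_card
      simpa using hrow_rank
    rcases hcase with h1 | h0
    · exact core_full hk'pos hge hlt M' hrow (fun hgt => absurd hgt (by omega))
    · have heq : n * k' = m * d := by
        have h00 : n * k' - m * d = 0 := by rw [← ht]; exact h0
        omega
      have hsq : (k' + d) * m = k' * (m + n) := by
        calc (k' + d) * m = k' * m + m * d := by ring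
          _ = k' * m + n * k' := by rw [heq]
          _ = k' * (m + n) := by ring
      have hcolk' : ∀ x : Fin k' × Fin (m + n) → 𝕜, sylv d k' M' *ᵥ x = 0 → x = 0 := by
        apply mulVec_inj_of_rank_eq_card
        have h2 : (k' + d) * m ≤ (sylv d k' M').rank := hrow_rank
        rw [hsq] at h2
        simpa using h2
      have hcol := sylv_pad_inj d (Nat.sub_le k' 1) M' hcolk'
      exact core_full hk'pos hge hlt M' hrow (fun _ => hcol)

end
end

section
/- Let F = ℝ or ℂ, let M(λ) ∈ F[λ]^{m×(m+n)}_d have full-Sylvester-rank, let k' = ⌈md/n⌉ and t = nk' − md, and let N(λ) ∈ F[λ]^{n×(m+n)}_{k'} be a minimal basis dual to M(λ). Then N(λ) has full-Sylvester-rank (as a polynomial matrix of degree at most k') if and only if t = 0, i.e., if and only if all the row degrees of N(λ) are equal. -/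
open Polynomial Matrix

noncomputable section

variable {F : Type*} [Field F]

variable {𝕜 : Type*} [RCLike 𝕜]

/-! ### Auxiliary development -/

section AuxDev

set_option maxHeartbeats 1000000
set_option synthInstance.maxHeartbeats 400000

variable {F' : Type*} [Field F']

/-- Polynomial vectors of degree `< k` in the kernel of a polynomial matrix,
as an `F'`-subspace. -/
def pker {p q : ℕ} (k : ℕ) (P : Matrix (Fin p) (Fin q) F'[X]) :
    Submodule F' (Fin q → F'[X]) where
  carrier := {v | (∀ a, (v a).degree < (k : ℕ)) ∧ ∀ b, ∑ a, P b a * v a = 0}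
  add_mem' := by
    rintro v w ⟨hv1, hv2⟩ ⟨hw1, hw2⟩
    refine ⟨fun a => lt_of_le_of_lt (Polynomial.degree_add_le _ _) (max_lt (hv1 a) (hw1 a)),
      fun b => ?_⟩
    simp only [Pi.add_apply, mul_add, Finset.sum_add_distrib, hv2 b, hw2 b, add_zero]
  zero_mem' := by
    refine ⟨fun a => ?_, fun b => by simp⟩
    simp only [Pi.zero_apply, Polynomial.degree_zero]
    exact WithBot.bot_lt_coe _
  smul_mem' := by
    rintro c v ⟨hv1, hv2⟩
    refine ⟨fun a => lt_of_le_of_lt (Polynomial.degree_smul_le _ _) (hv1 a), fun b => ?_⟩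
    have : ∀ a, P b a * (c • v) a = c • (P b a * v a) := by
      intro a; simp [Polynomial.smul_eq_C_mul]; ring
    simp only [this, ← Finset.smul_sum, hv2 b, smul_zero]

lemma sum_C_mul_X_pow_coeff {t : ℕ} (x : Fin t → F') (u : ℕ) :
    (∑ j : Fin t, Polynomial.C (x j) * X ^ (j : ℕ)).coeff u =
      if h : u < t then x ⟨u, h⟩ else 0 := by
  rw [Polynomial.finset_sum_coeff]
  by_cases h : u < t
  · rw [dif_pos h, Finset.sum_eq_single (⟨u, h⟩ : Fin t)]
    · simp
    · intro j _ hj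
      have hne : (j : ℕ) ≠ u := by
        intro hju; apply hj; apply Fin.ext; simp [hju]
      simp only [Polynomial.coeff_C_mul, Polynomial.coeff_X_pow]
      rw [if_neg (by omega), mul_zero]
    · intro hmem; exact absurd (Finset.mem_univ _) hmem
  · rw [dif_neg h]
    apply Finset.sum_eq_zero
    intro j _
    have hne : (j : ℕ) ≠ u := by omega
    simp only [Polynomial.coeff_C_mul, Polynomial.coeff_X_pow]
    rw [if_neg (by omega), mul_zero]

lemma degree_sum_C_mul_X_pow_lt {t : ℕ} (x : Fin t → F') :
    (∑ j : Fin t, Polynomial.C (x j) * X ^ (j : ℕ)).degree < ((t : ℕ) : WithBot ℕ) := by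
  rw [Polynomial.degree_lt_iff_coeff_zero]
  intro u hu
  rw [sum_C_mul_X_pow_coeff]
  rw [dif_neg (by omega)]

lemma poly_eq_sum_coeff {p : F'[X]} {t : ℕ} (h : p.degree < (t : ℕ)) :
    p = ∑ j : Fin t, Polynomial.C (p.coeff j) * X ^ (j : ℕ) := by
  ext u
  rw [sum_C_mul_X_pow_coeff]
  by_cases hu : u < t
  · rw [dif_pos hu]
  · rw [dif_neg hu]
    exact Polynomial.coeff_eq_zero_of_degree_lt (lt_of_lt_of_le h (by exact_mod_cast not_lt.mp hu))

/-- The coefficient-interleaving linear map. -/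
def phiL (k q' : ℕ) : ((Fin k × Fin q') → F') →ₗ[F'] (Fin q' → F'[X]) where
  toFun x := fun a => ∑ j : Fin k, Polynomial.C (x (j, a)) * X ^ (j : ℕ)
  map_add' x y := by
    funext a
    simp only [Pi.add_apply, map_add, add_mul, Finset.sum_add_distrib]
  map_smul' c x := by
    funext a
    simp only [Pi.smul_apply, smul_eq_mul, RingHom.id_apply, Finset.smul_sum]
    congr 1; funext j
    rw [Polynomial.smul_eq_C_mul, Polynomial.C_mul, mul_assoc]

lemma coeff_phiL {k q' : ℕ} (x : (Fin k × Fin q') → F') (a : Fin q') (u : ℕ) :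
    ((phiL k q' x) a).coeff u = if h : u < k then x (⟨u, h⟩, a) else 0 := by
  simpa [phiL] using sum_C_mul_X_pow_coeff (fun j : Fin k => x (j, a)) u

lemma degree_phiL_lt {k q' : ℕ} (x : (Fin k × Fin q') → F') (a : Fin q') :
    ((phiL k q' x) a).degree < (k : ℕ) :=
  degree_sum_C_mul_X_pow_lt (fun j : Fin k => x (j, a))

lemma coeff_mul_zero_of_degree {p r : F'[X]} {e k : ℕ} (hp : p.natDegree ≤ e)
    (hr : r.degree < (k : ℕ)) {i : ℕ} (hi : k + e ≤ i) : (p * r).coeff i = 0 := by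
  rcases eq_or_ne r 0 with rfl | h
  · simp
  rcases eq_or_ne p 0 with rfl | h'
  · simp
  apply Polynomial.coeff_eq_zero_of_natDegree_lt
  have h1 : r.natDegree < k := (Polynomial.natDegree_lt_iff_degree_lt h).mpr hr
  have h2 := Polynomial.natDegree_mul_le (p := p) (q := r)
  omega

lemma sylv_mulVec_s18 {p q : ℕ} {e k : ℕ} (P : Matrix (Fin p) (Fin q) F'[X])
    (hP : ∀ b a, (P b a).natDegree ≤ e) (x : (Fin k × Fin q) → F')
    (i : Fin (k + e)) (b : Fin p) :
    (sylv e k P).mulVec x (i, b) = (∑ a, P b a * phiL k q x a).coeff (i : ℕ) := by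
  rw [Polynomial.finset_sum_coeff]
  rw [Matrix.mulVec, dotProduct, Fintype.sum_prod_type]
  rw [Finset.sum_comm]
  congr 1; funext a
  have expand : P b a * phiL k q x a
      = ∑ j : Fin k, Polynomial.C (x (j, a)) * P b a * X ^ (j : ℕ) := by
    show P b a * ∑ j : Fin k, Polynomial.C (x (j, a)) * X ^ (j : ℕ) = _
    rw [Finset.mul_sum]; congr 1; funext j; ring
  rw [expand, Polynomial.finset_sum_coeff]
  congr 1; funext j
  rw [Polynomial.coeff_mul_X_pow', Polynomial.coeff_C_mul, sylv]
  simp only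
  by_cases h1 : (j : ℕ) ≤ (i : ℕ)
  · by_cases h2 : (i : ℕ) ≤ (j : ℕ) + e
    · rw [if_pos ⟨h1, h2⟩, if_pos h1]; ring
    · rw [if_neg (by tauto), if_pos h1]
      have : (P b a).coeff ((i : ℕ) - (j : ℕ)) = 0 := by
        apply Polynomial.coeff_eq_zero_of_natDegree_lt
        have := hP b a; omega
      rw [this, mul_zero, zero_mul]
  · rw [if_neg (by tauto), if_neg h1, zero_mul]

lemma mem_pker_phiL {p q : ℕ} {e k : ℕ} {P : Matrix (Fin p) (Fin q) F'[X]}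
    (hP : ∀ b a, (P b a).natDegree ≤ e) {x : (Fin k × Fin q) → F'}
    (hx : x ∈ LinearMap.ker (sylv e k P).mulVecLin) : phiL k q x ∈ pker k P := by
  refine ⟨fun a => degree_phiL_lt x a, fun b => ?_⟩
  have hx' : (sylv e k P).mulVec x = 0 := hx
  ext u
  rw [Polynomial.coeff_zero]
  by_cases hu : u < k + e
  · have := congrFun hx' (⟨u, hu⟩, b)
    rw [sylv_mulVec_s18 P hP x ⟨u, hu⟩ b] at this
    exact this
  · rw [Polynomial.finset_sum_coeff]
    apply Finset.sum_eq_zero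
    intro a _
    exact coeff_mul_zero_of_degree (hP b a) (degree_phiL_lt x a) (by omega)

lemma rank_sylv_add_pker {p q : ℕ} (e k : ℕ) (P : Matrix (Fin p) (Fin q) F'[X])
    (hP : ∀ b a, (P b a).natDegree ≤ e) :
    (sylv e k P).rank + Module.finrank F' (pker k P) = k * q := by
  have hker : Module.finrank F' (LinearMap.ker (sylv e k P).mulVecLin)
      = Module.finrank F' (pker k P) := by
    refine LinearEquiv.finrank_eq (LinearEquiv.ofBijective
      (((phiL k q).comp (Submodule.subtype _)).codRestrict _ ?_) ⟨?_, ?_⟩)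
    · rintro ⟨x, hx⟩
      exact mem_pker_phiL hP hx
    · rintro ⟨x, hx⟩ ⟨y, hy⟩ hxy
      have : phiL k q x = phiL k q y := congrArg Subtype.val hxy
      apply Subtype.ext
      funext ⟨j, a⟩
      have := congrArg (fun v => (v a).coeff (j : ℕ)) this
      simpa [coeff_phiL, j.isLt] using this
    · rintro ⟨v, hv1, hv2⟩
      refine ⟨⟨fun ja => (v ja.2).coeff (ja.1 : ℕ), ?_⟩, ?_⟩
      · show (sylv e k P).mulVec _ = 0
        funext ⟨i, b⟩
        rw [sylv_mulVec_s18 P hP _ i b]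
        have : phiL k q (fun ja => (v ja.2).coeff (ja.1 : ℕ)) = v := by
          funext a
          exact (poly_eq_sum_coeff (hv1 a)).symm
        rw [this]
        simp [hv2 b]
      · apply Subtype.ext
        show phiL k q _ = v
        funext a
        exact (poly_eq_sum_coeff (hv1 a)).symm
  have h2 := LinearMap.finrank_range_add_finrank_ker (sylv e k P).mulVecLin
  rw [hker] at h2
  have hdom : Module.finrank F' ((Fin k × Fin q) → F') = k * q := by
    rw [Module.finrank_pi]; simp
  rw [Matrix.rank, h2, hdom]

lemma exists_right_inverse_of_rank {r c : Type*} [Fintype r] [Fintype c] [DecidableEq r]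
    [DecidableEq c] {A : Matrix r c F'} (h : A.rank = Fintype.card r) :
    ∃ B : Matrix c r F', A * B = 1 := by
  have hsurj : Function.Surjective A.mulVecLin := by
    rw [← LinearMap.range_eq_top]
    apply Submodule.eq_top_of_finrank_eq
    rw [Matrix.rank] at h
    rw [h, Module.finrank_pi]
  choose g hg using hsurj
  refine ⟨Matrix.of fun i j => g (Pi.single j (1 : F')) i, ?_⟩
  ext i j
  have h1 : A.mulVec (fun x => g (Pi.single j (1 : F')) x) i
      = (Pi.single j (1 : F') : r → F') i := by
    have := hg (Pi.single j (1 : F'))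
    rw [Matrix.mulVecLin_apply] at this
    exact congrFun this i
  rw [Matrix.mul_apply]
  rw [Matrix.mulVec, dotProduct] at h1
  rw [Matrix.one_apply]
  simp only [Matrix.of_apply]
  rw [h1, Pi.single_apply]

lemma left_null_zero_of_rank {r c : Type*} [Fintype r] [Fintype c] [DecidableEq r]
    [DecidableEq c] {A : Matrix r c F'} (h : A.rank = Fintype.card r)
    {L : Type*} [CommRing L] (f : F' →+* L) (y : r → L)
    (hy : y ᵥ* (A.map f) = 0) : y = 0 := by
  obtain ⟨B, hB⟩ := exists_right_inverse_of_rank h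
  have hmap : (A.map f) * (B.map f) = 1 := by
    rw [← Matrix.map_mul, hB, Matrix.map_one f f.map_zero f.map_one]
  calc y = y ᵥ* 1 := (Matrix.vecMul_one y).symm
    _ = y ᵥ* ((A.map f) * (B.map f)) := by rw [hmap]
    _ = (y ᵥ* A.map f) ᵥ* B.map f := (Matrix.vecMul_vecMul _ _ _).symm
    _ = 0 := by rw [hy, Matrix.zero_vecMul]

section Mside

variable {m n d : ℕ} {M : Matrix (Fin m) (Fin (m + n)) F'[X]}

lemma rank_sylv_M_full (hn : 0 < n) (hfull : HasFullSylvesterRank d M)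
    {k : ℕ} (hk : d * m ≤ k) (hk1 : 1 ≤ k) :
    (sylv d k M).rank = Fintype.card (Fin (k + d) × Fin m) := by
  have h1 : (k + d) * m ≤ k * (m + n) := by nlinarith
  have := hfull k hk1
  rw [this, min_eq_left h1]
  simp

/-- Key divisibility lemma: combinations of the rows of a full-Sylvester-rank `M`
divisible by `g` have all coefficients divisible by `g`. -/
lemma dvd_coeffs_of_dvd_comb (hn : 0 < n) (hdeg : ∀ b a, (M b a).natDegree ≤ d)
    (hfull : HasFullSylvesterRank d M) (g : F'[X]) (y : Fin m → F'[X])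
    (hy : ∀ a, g ∣ ∑ b, y b * M b a) : ∀ b, g ∣ y b := by
  classical
  set k := d * m + 1 with hk
  have hrank := rank_sylv_M_full hn hfull (k := k) (by omega) (by omega)
  set L := F'[X] ⧸ Ideal.span {g} with hL
  let mk : F'[X] →+* L := Ideal.Quotient.mk (Ideal.span {g})
  let f : F' →+* L := mk.comp Polynomial.C
  set lam : L := mk X with hlam
  set Y : (Fin (k + d) × Fin m) → L := fun ib => lam ^ (ib.1 : ℕ) * mk (y ib.2) with hY
  have hmk_eval : ∀ p : F'[X], mk p = ∑ s ∈ Finset.range (d + 1 + p.natDegree),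
      f (p.coeff s) * lam ^ s := by
    intro p
    have h1 : mk p = Polynomial.eval₂ f lam p := by
      conv_lhs => rw [← Polynomial.eval₂_C_X (p := p)]
      rw [Polynomial.hom_eval₂]
    rw [h1, Polynomial.eval₂_eq_sum_range' f (n := d + 1 + p.natDegree) (by omega) lam]
  have hYnull : Y ᵥ* ((sylv d k M).map f) = 0 := by
    funext ja
    obtain ⟨j, a⟩ := ja
    show ∑ ib : Fin (k + d) × Fin m, Y ib * ((sylv d k M).map f) ib (j, a) = 0
    rw [Fintype.sum_prod_type, Finset.sum_comm]
    have hinner : ∀ b : Fin m, ∑ i : Fin (k + d), Y (i, b) * ((sylv d k M).map f) (i, b) (j, a)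
        = mk (y b) * (lam ^ (j : ℕ) * mk (M b a)) := by
      intro b
      have hterm : ∀ i : Fin (k + d), Y (i, b) * ((sylv d k M).map f) (i, b) (j, a)
          = (if (j : ℕ) ≤ (i : ℕ) ∧ (i : ℕ) ≤ (j : ℕ) + d then
              mk (y b) * (lam ^ (i : ℕ) * f ((M b a).coeff ((i : ℕ) - (j : ℕ)))) else 0) := by
        intro i
        rw [Matrix.map_apply, sylv]
        simp only [hY]
        split_ifs with hcond
        · ring
        · rw [map_zero, mul_zero]
      calc ∑ i : Fin (k + d), Y (i, b) * ((sylv d k M).map f) (i, b) (j, a)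
          = ∑ i : Fin (k + d), (if (j : ℕ) ≤ (i : ℕ) ∧ (i : ℕ) ≤ (j : ℕ) + d then
              mk (y b) * (lam ^ (i : ℕ) * f ((M b a).coeff ((i : ℕ) - (j : ℕ)))) else 0) :=
            Finset.sum_congr rfl (fun i _ => hterm i)
        _ = ∑ i ∈ Finset.range (k + d), (if (j : ℕ) ≤ i ∧ i ≤ (j : ℕ) + d then
              mk (y b) * (lam ^ i * f ((M b a).coeff (i - (j : ℕ)))) else 0) := by
            rw [← Fin.sum_univ_eq_sum_range]
        _ = ∑ i ∈ Finset.Ico (j : ℕ) ((j : ℕ) + d + 1), (if (j : ℕ) ≤ i ∧ i ≤ (j : ℕ) + d then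
              mk (y b) * (lam ^ i * f ((M b a).coeff (i - (j : ℕ)))) else 0) := by
            symm
            apply Finset.sum_subset
            · intro u hu
              rw [Finset.mem_Ico] at hu
              rw [Finset.mem_range]
              have : (j : ℕ) < k := j.isLt
              omega
            · intro u _ hu
              rw [Finset.mem_Ico] at hu
              rw [if_neg (by omega)]
        _ = ∑ s ∈ Finset.range ((j : ℕ) + d + 1 - (j : ℕ)), (if (j : ℕ) ≤ (j : ℕ) + s ∧
              (j : ℕ) + s ≤ (j : ℕ) + d then
              mk (y b) * (lam ^ ((j : ℕ) + s) * f ((M b a).coeff ((j : ℕ) + s - (j : ℕ)))) else 0)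
            := Finset.sum_Ico_eq_sum_range ..
        _ = ∑ s ∈ Finset.range (d + 1), mk (y b) * (lam ^ ((j : ℕ) + s) * f ((M b a).coeff s))
            := by
            have hre : (j : ℕ) + d + 1 - (j : ℕ) = d + 1 := by omega
            rw [hre]
            apply Finset.sum_congr rfl
            intro s hs
            rw [Finset.mem_range] at hs
            rw [if_pos (by omega)]
            have hss : (j : ℕ) + s - (j : ℕ) = s := by omega
            rw [hss]
        _ = mk (y b) * (lam ^ (j : ℕ) * mk (M b a)) := by
            rw [hmk_eval (M b a), Finset.mul_sum, Finset.mul_sum]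
            refine (Finset.sum_congr rfl ?_).trans (Finset.sum_subset
              (Finset.range_subset_range.mpr (by omega : d + 1 ≤ d + 1 + (M b a).natDegree)) ?_)
            · intro s _
              rw [pow_add]; ring
            · intro s _ hs
              rw [Finset.mem_range] at hs
              have hc : (M b a).coeff s = 0 :=
                Polynomial.coeff_eq_zero_of_natDegree_lt (by have := hdeg b a; omega)
              rw [hc, map_zero]
              ring
    calc ∑ b : Fin m, ∑ i : Fin (k + d), Y (i, b) * ((sylv d k M).map f) (i, b) (j, a)
        = ∑ b : Fin m, mk (y b) * (lam ^ (j : ℕ) * mk (M b a)) :=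
          Finset.sum_congr rfl (fun b _ => hinner b)
      _ = lam ^ (j : ℕ) * mk (∑ b, y b * M b a) := by
          rw [map_sum, Finset.mul_sum]
          apply Finset.sum_congr rfl
          intro b _
          rw [_root_.map_mul]; ring
      _ = 0 := by
          have : mk (∑ b, y b * M b a) = 0 := by
            rw [Ideal.Quotient.eq_zero_iff_mem, Ideal.mem_span_singleton]
            exact hy a
          rw [this, mul_zero]
  have hY0 : Y = 0 := left_null_zero_of_rank hrank f Y hYnull
  intro b
  have : Y (⟨0, by omega⟩, b) = 0 := by rw [hY0]; rfl
  simp only [hY, pow_zero, one_mul] at this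
  exact Ideal.mem_span_singleton.mp (Ideal.Quotient.eq_zero_iff_mem.mp this)

/-- The rows of a full-Sylvester-rank matrix are linearly independent over `F'[X]`. -/
lemma M_rows_poly_indep (hn : 0 < n) (hdeg : ∀ b a, (M b a).natDegree ≤ d)
    (hfull : HasFullSylvesterRank d M) (y : Fin m → F'[X])
    (hy : ∀ a, ∑ b, y b * M b a = 0) : y = 0 := by
  funext b
  have := dvd_coeffs_of_dvd_comb hn hdeg hfull 0 y (fun a => by rw [hy a]) b
  exact zero_dvd_iff.mp this

/-- The degree-`d` coefficient matrix of a full-Sylvester-rank `M` has independent rows. -/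
lemma M_top_coeff_indep (hn : 0 < n) (hfull : HasFullSylvesterRank d M)
    (x : Fin m → F') (hx : ∀ a, ∑ b, x b * (M b a).coeff d = 0) : x = 0 := by
  classical
  set k := d * m + 1 with hk
  have hrank := rank_sylv_M_full hn hfull (k := k) (by omega) (by omega)
  have hlast : k + d - 1 < k + d := by omega
  set Y : (Fin (k + d) × Fin m) → F' :=
    fun ib => if (ib.1 : ℕ) = k + d - 1 then x ib.2 else 0 with hYdef
  have hYnull : Y ᵥ* ((sylv d k M).map (RingHom.id F')) = 0 := by
    funext ja
    obtain ⟨j, a⟩ := ja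
    show ∑ ib : Fin (k + d) × Fin m, Y ib * ((sylv d k M).map (RingHom.id F')) ib (j, a) = 0
    rw [Fintype.sum_prod_type, Finset.sum_comm]
    have hinner : ∀ b : Fin m,
        ∑ i : Fin (k + d), Y (i, b) * ((sylv d k M).map (RingHom.id F')) (i, b) (j, a)
        = x b * (sylv d k M) (⟨k + d - 1, hlast⟩, b) (j, a) := by
      intro b
      rw [Finset.sum_eq_single (⟨k + d - 1, hlast⟩ : Fin (k + d))]
      · have hY1 : Y (⟨k + d - 1, hlast⟩, b) = x b := if_pos rfl
        rw [hY1, Matrix.map_apply, RingHom.id_apply]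
      · intro i _ hi
        have hine : (i : ℕ) ≠ k + d - 1 := by
          intro hie; exact hi (Fin.ext hie)
        have hY0 : Y (i, b) = 0 := if_neg hine
        rw [hY0, zero_mul]
      · intro hmem; exact absurd (Finset.mem_univ _) hmem
    rw [Finset.sum_congr rfl (fun b _ => hinner b)]
    by_cases hj : (j : ℕ) = k - 1
    · have : ∀ b, (sylv d k M) (⟨k + d - 1, hlast⟩, b) (j, a) = (M b a).coeff d := by
        intro b
        rw [sylv]
        simp only
        rw [if_pos (by omega)]
        congr 1
        omega
      rw [Finset.sum_congr rfl (fun b _ => by rw [this b])]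
      exact hx a
    · have hjk : (j : ℕ) < k := j.isLt
      have : ∀ b, (sylv d k M) (⟨k + d - 1, hlast⟩, b) (j, a) = 0 := by
        intro b
        rw [sylv]
        simp only
        rw [if_neg (by omega)]
      rw [Finset.sum_congr rfl (fun b _ => by rw [this b])]
      simp
  have hY0 : Y = 0 := left_null_zero_of_rank hrank (RingHom.id F') Y hYnull
  funext b
  have := congrFun hY0 (⟨k + d - 1, hlast⟩, b)
  simpa [hYdef] using this

/-- Saturation: rational combinations of the rows of `M` that are polynomial are
polynomial combinations. -/
lemma M_saturation (hn : 0 < n) (hdeg : ∀ b a, (M b a).natDegree ≤ d)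
    (hfull : HasFullSylvesterRank d M) {g : F'[X]} (hg : g ≠ 0)
    (v : Fin (m + n) → F'[X]) (p : Fin m → F'[X])
    (h : ∀ a, g * v a = ∑ b, p b * M b a) :
    ∃ q : Fin m → F'[X], ∀ a, v a = ∑ b, q b * M b a := by
  have hdvd : ∀ b, g ∣ p b :=
    dvd_coeffs_of_dvd_comb hn hdeg hfull g p (fun a => ⟨v a, (h a).symm⟩)
  choose q hq using hdvd
  refine ⟨q, fun a => ?_⟩
  apply mul_left_cancel₀ hg
  rw [h a, Finset.mul_sum]
  apply Finset.sum_congr rfl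
  intro b _
  rw [hq b]; ring

/-- Predictable-degree property. -/
lemma pred_deg_gen {r q : ℕ} (P : Matrix (Fin r) (Fin q) F'[X]) (e : Fin r → ℕ)
    (hPdeg : ∀ i a, (P i a).natDegree ≤ e i)
    (hhigh : ∀ x : Fin r → F', (∀ a, ∑ i, x i * (P i a).coeff (e i) = 0) → x = 0)
    {k : ℕ} (v : Fin q → F'[X]) (hv : ∀ a, (v a).degree < ((k : ℕ) : WithBot ℕ))
    (q' : Fin r → F'[X]) (heq : ∀ a, v a = ∑ i, q' i * P i a) :
    ∀ i, q' i ≠ 0 → (q' i).natDegree + e i < k := by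
  classical
  by_contra hcon
  push_neg at hcon
  obtain ⟨i₁, hi₁ne, hi₁⟩ := hcon
  have hmem1 : i₁ ∈ Finset.univ.filter (fun i => q' i ≠ 0) := by simp [hi₁ne]
  obtain ⟨i₀, hi₀s, hi₀⟩ := Finset.exists_mem_eq_sup (Finset.univ.filter (fun i => q' i ≠ 0))
    ⟨i₁, hmem1⟩ (fun i => (q' i).natDegree + e i)
  have hi₀ne : q' i₀ ≠ 0 := by
    exact (Finset.mem_filter.mp hi₀s).2
  have hle : ∀ i, q' i ≠ 0 → (q' i).natDegree + e i ≤ (q' i₀).natDegree + e i₀ := by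
    intro i hi
    rw [← hi₀]
    exact Finset.le_sup (f := fun j => (q' j).natDegree + e j)
      (Finset.mem_filter.mpr ⟨Finset.mem_univ i, hi⟩)
  set D : ℕ := (q' i₀).natDegree + e i₀ with hD
  have hkD : k ≤ D := le_trans hi₁ (hle i₁ hi₁ne)
  have hcoeff : ∀ a, (v a).coeff D = 0 := by
    intro a
    apply Polynomial.coeff_eq_zero_of_degree_lt
    exact lt_of_lt_of_le (hv a) (by exact_mod_cast hkD)
  have hterm : ∀ i, ∀ a, (q' i * P i a).coeff D = (q' i).coeff (D - e i) * (P i a).coeff (e i)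
      := by
    intro i a
    by_cases his : q' i = 0
    · rw [his]; simp
    · have h1 : (q' i).natDegree + e i ≤ D := hle i his
      have h3 : D - e i + e i = D := by omega
      have hco := Polynomial.coeff_mul_add_eq_of_natDegree_le (f := q' i) (g := P i a)
        (df := D - e i) (dg := e i) (by omega) (hPdeg i a)
      rwa [h3] at hco
  have hzero : ∀ a, ∑ i, (q' i).coeff (D - e i) * (P i a).coeff (e i) = 0 := by
    intro a
    have hca := hcoeff a
    rw [heq a, Polynomial.finset_sum_coeff] at hca
    rw [← hca]
    exact (Finset.sum_congr rfl (fun i _ => (hterm i a).symm))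
  have hx0 := hhigh (fun i => (q' i).coeff (D - e i)) hzero
  have hq0 : (q' i₀).coeff (D - e i₀) = 0 := congrFun hx0 i₀
  have he0 : D - e i₀ = (q' i₀).natDegree := by omega
  rw [he0] at hq0
  exact hi₀ne (Polynomial.leadingCoeff_eq_zero.mp hq0)

end Mside

section RatBridge

lemma ratRow_li_iff {r q : ℕ} (P : Matrix (Fin r) (Fin q) F'[X]) :
    LinearIndependent (RatFunc F') (ratRow P) ↔
      ∀ y : Fin r → F'[X], (∀ a, ∑ i, y i * P i a = 0) → y = 0 := by
  have hinj : Function.Injective (algebraMap F'[X] (RatFunc F')) :=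
    IsFractionRing.injective F'[X] (RatFunc F')
  constructor
  · intro hli y hy
    have hmain := Fintype.linearIndependent_iff.mp hli
      (fun i => algebraMap F'[X] (RatFunc F') (y i)) ?_
    · funext i
      apply hinj
      rw [Pi.zero_apply, map_zero, hmain i]
    · funext a
      rw [Finset.sum_apply, Pi.zero_apply]
      have hterm : ∀ i, (algebraMap F'[X] (RatFunc F') (y i) • ratRow P i) a
          = algebraMap F'[X] (RatFunc F') (y i * P i a) := by
        intro i
        rw [Pi.smul_apply, smul_eq_mul, ratRow, _root_.map_mul]
      rw [Finset.sum_congr rfl (fun i _ => hterm i), ← map_sum, hy a, map_zero]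
  · intro hpoly
    rw [Fintype.linearIndependent_iff]
    intro g hg
    obtain ⟨b, hb⟩ := IsLocalization.exist_integer_multiples (nonZeroDivisors F'[X])
      Finset.univ g
    choose p hp using fun i => hb i (Finset.mem_univ i)
    have hrel : ∀ a, ∑ i, p i * P i a = 0 := by
      intro a
      apply hinj
      rw [map_sum, map_zero]
      have : ∀ i, algebraMap F'[X] (RatFunc F') (p i * P i a)
          = (algebraMap F'[X] (RatFunc F') (b : F'[X])) * (g i * ratRow P i a) := by
        intro i
        rw [_root_.map_mul, hp i, Algebra.smul_def, ratRow]
        ring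
      rw [Finset.sum_congr rfl (fun i _ => this i), ← Finset.mul_sum]
      have : ∑ i, g i * ratRow P i a = 0 := by
        have := congrFun hg a
        rw [Finset.sum_apply] at this
        simpa [Pi.smul_apply, smul_eq_mul] using this
      rw [this, mul_zero]
    have hp0 := hpoly _ hrel
    intro i
    have : algebraMap F'[X] (RatFunc F') (p i) = 0 := by
      rw [congrFun hp0 i, Pi.zero_apply, map_zero]
    rw [hp i] at this
    have hbne : (algebraMap F'[X] (RatFunc F') (b : F'[X])) ≠ 0 := by
      intro h0
      exact nonZeroDivisors.ne_zero b.2 (hinj (by rw [h0, map_zero]))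
    rw [Algebra.smul_def] at this
    rcases mul_eq_zero.mp this with h | h
    · exact absurd h hbne
    · exact h

lemma ker_ratMat_eq_span {p₁ p₂ q : ℕ} (hq : q = p₁ + p₂)
    (A : Matrix (Fin p₁) (Fin q) F'[X]) (B : Matrix (Fin p₂) (Fin q) F'[X])
    (hA : LinearIndependent (RatFunc F') (ratRow A))
    (hB : LinearIndependent (RatFunc F') (ratRow B))
    (hAB : ∀ i j, ∑ a, A i a * B j a = 0) :
    LinearMap.ker (ratMat A).mulVecLin
      = Submodule.span (RatFunc F') (Set.range (ratRow B)) := by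
  have hinj : Function.Injective (algebraMap F'[X] (RatFunc F')) :=
    IsFractionRing.injective F'[X] (RatFunc F')
  have hle : Submodule.span (RatFunc F') (Set.range (ratRow B))
      ≤ LinearMap.ker (ratMat A).mulVecLin := by
    rw [Submodule.span_le]
    rintro _ ⟨j, rfl⟩
    rw [SetLike.mem_coe, LinearMap.mem_ker, Matrix.mulVecLin_apply]
    funext i
    rw [Matrix.mulVec, dotProduct, Pi.zero_apply]
    have hterm : ∀ a, ratMat A i a * ratRow B j a
        = algebraMap F'[X] (RatFunc F') (A i a * B j a) := by
      intro a
      rw [ratMat, Matrix.map_apply, ratRow, _root_.map_mul]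
    rw [Finset.sum_congr rfl (fun a _ => hterm a), ← map_sum, hAB i j, map_zero]
  have hrowsA : ∀ i, (ratMat A) i = ratRow A i := by
    intro i; funext a; rfl
  have hrankA : (ratMat A).rank = p₁ := by
    rw [← Matrix.rank_transpose, Matrix.rank, Matrix.range_mulVecLin]
    have : (ratMat A)ᵀᵀ = ratMat A := Matrix.transpose_transpose _
    rw [show (ratMat A)ᵀ.col = ratMat A from this]
    have : Set.range (ratMat A) = Set.range (ratRow A) := by
      have hfun : (ratMat A : Fin p₁ → (Fin q → RatFunc F')) = ratRow A := funext hrowsA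
      rw [hfun]
    rw [this, finrank_span_eq_card hA]
    exact Fintype.card_fin _
  have hkerA : Module.finrank (RatFunc F') (LinearMap.ker (ratMat A).mulVecLin) = p₂ := by
    have hsum := LinearMap.finrank_range_add_finrank_ker (ratMat A).mulVecLin
    have hdom : Module.finrank (RatFunc F') ((Fin q) → RatFunc F') = q := by
      rw [Module.finrank_pi, Fintype.card_fin]
    rw [hdom] at hsum
    have : Module.finrank (RatFunc F') (LinearMap.range (ratMat A).mulVecLin) = p₁ := hrankA
    omega
  have hspanB : Module.finrank (RatFunc F')
      (Submodule.span (RatFunc F') (Set.range (ratRow B))) = p₂ := by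
    rw [finrank_span_eq_card hB, Fintype.card_fin]
  exact (Submodule.eq_of_le_of_finrank_le hle (by rw [hkerA, hspanB])).symm

lemma ratVec_mem_ker {p q : ℕ} (P : Matrix (Fin p) (Fin q) F'[X]) (v : Fin q → F'[X])
    (hv : ∀ b, ∑ a, P b a * v a = 0) :
    (fun a => algebraMap F'[X] (RatFunc F') (v a)) ∈ LinearMap.ker (ratMat P).mulVecLin := by
  rw [LinearMap.mem_ker, Matrix.mulVecLin_apply]
  funext b
  rw [Matrix.mulVec, dotProduct, Pi.zero_apply]
  have hterm : ∀ a, ratMat P b a * algebraMap F'[X] (RatFunc F') (v a)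
      = algebraMap F'[X] (RatFunc F') (P b a * v a) := by
    intro a; rw [ratMat, Matrix.map_apply, _root_.map_mul]
  rw [Finset.sum_congr rfl (fun a _ => hterm a), ← map_sum, hv b, map_zero]

end RatBridge

section Nside

variable {n q : ℕ}

lemma minimal_swap (hq : 0 < q) {N : Matrix (Fin n) (Fin q) F'[X]} (hmb : IsMinimalBasis N)
    (i₀ : Fin n) (f : Fin n → RatFunc F') (hf0 : f i₀ ≠ 0) (r : Fin q → F'[X])
    (hr : ∀ a, algebraMap F'[X] (RatFunc F') (r a)
      = ∑ i, f i * algebraMap F'[X] (RatFunc F') (N i a))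
    (hrdeg : ∀ a, (r a).natDegree < rowDeg N i₀) : False := by
  classical
  obtain ⟨hli, hspan, hmin⟩ := hmb
  have hrfun : (fun a => algebraMap F'[X] (RatFunc F') (r a)) = ∑ i, f i • ratRow N i := by
    funext a
    rw [Finset.sum_apply, hr a]
    exact Finset.sum_congr rfl (fun i _ => by rw [Pi.smul_apply, smul_eq_mul, ratRow])
  set N' : Matrix (Fin n) (Fin q) F'[X] := Function.update N i₀ r with hN'
  have hrow' : ∀ i, ratRow N' i = if i = i₀ then
      (fun a => algebraMap F'[X] (RatFunc F') (r a)) else ratRow N i := by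
    intro i
    by_cases hi : i = i₀
    · subst hi; rw [if_pos rfl]; funext a
      show algebraMap F'[X] (RatFunc F') (N' i a) = _
      erw [hN', Function.update_self]
    · rw [if_neg hi]; funext a
      show algebraMap F'[X] (RatFunc F') (N' i a) = algebraMap F'[X] (RatFunc F') (N i a)
      erw [hN', Function.update_of_ne hi]
  have key : ∀ g : Fin n → RatFunc F',
      ∑ i, g i • ratRow N' i
      = ∑ i, ((if i = i₀ then 0 else g i) + g i₀ * f i) • ratRow N i := by
    intro g
    have e1 : ∑ i, g i • ratRow N' i
        = (∑ i ∈ Finset.univ.erase i₀, g i • ratRow N i) + g i₀ • ∑ i, f i • ratRow N i := by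
      rw [← Finset.sum_erase_add Finset.univ _ (Finset.mem_univ i₀)]
      congr 1
      · exact Finset.sum_congr rfl (fun i hi => by
          rw [hrow' i, if_neg (Finset.ne_of_mem_erase hi)])
      · rw [hrow' i₀, if_pos rfl, hrfun]
    have e2 : ∑ i, ((if i = i₀ then 0 else g i) + g i₀ * f i) • ratRow N i
        = (∑ i ∈ Finset.univ.erase i₀, g i • ratRow N i) + g i₀ • ∑ i, f i • ratRow N i := by
      have h4 : ∀ i : Fin n, ((if i = i₀ then 0 else g i) + g i₀ * f i) • ratRow N i
          = (if i = i₀ then (0 : RatFunc F') else g i) • ratRow N i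
            + g i₀ • (f i • ratRow N i) := by
        intro i; rw [add_smul, smul_smul]
      rw [Finset.sum_congr rfl (fun i _ => h4 i), Finset.sum_add_distrib, Finset.smul_sum]
      congr 1
      rw [← Finset.sum_erase_add Finset.univ _ (Finset.mem_univ i₀), if_pos rfl, zero_smul,
        add_zero]
      exact Finset.sum_congr rfl (fun i hi => by rw [if_neg (Finset.ne_of_mem_erase hi)])
    rw [e1, e2]
  have hli' : LinearIndependent (RatFunc F') (ratRow N') := by
    rw [Fintype.linearIndependent_iff]
    intro g hg
    have hc := Fintype.linearIndependent_iff.mp hli _ ((key g).symm.trans hg)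
    have hgi₀ : g i₀ = 0 := by
      have := hc i₀
      rw [if_pos rfl, zero_add] at this
      exact (mul_eq_zero.mp this).resolve_right hf0
    intro i
    by_cases hi : i = i₀
    · rw [hi]; exact hgi₀
    · have := hc i
      rw [if_neg hi, hgi₀, zero_mul, add_zero] at this
      exact this
  have hspan' : rowSpan N' = rowSpan N := by
    apply le_antisymm
    · rw [rowSpan, Submodule.span_le]
      rintro _ ⟨i, rfl⟩
      by_cases hi : i = i₀
      · rw [hi, hrow' i₀, if_pos rfl, hrfun]
        exact Submodule.sum_mem _ (fun j _ => Submodule.smul_mem _ _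
          (Submodule.subset_span ⟨j, rfl⟩))
      · rw [hrow' i, if_neg hi]
        exact Submodule.subset_span ⟨i, rfl⟩
    · rw [rowSpan, Submodule.span_le]
      rintro _ ⟨i, rfl⟩
      by_cases hi : i = i₀
      · subst hi
        have hexp : ratRow N' i = f i • ratRow N i
            + ∑ j ∈ Finset.univ.erase i, f j • ratRow N j := by
          rw [hrow' i, if_pos rfl, hrfun,
            ← Finset.sum_erase_add Finset.univ _ (Finset.mem_univ i), add_comm]
        have hNval : ratRow N i = (f i)⁻¹ • (ratRow N' i
            - ∑ j ∈ Finset.univ.erase i, f j • ratRow N' j) := by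
          have hEq : ∑ j ∈ Finset.univ.erase i, f j • ratRow N' j
              = ∑ j ∈ Finset.univ.erase i, f j • ratRow N j :=
            Finset.sum_congr rfl (fun j hj => by
              rw [hrow' j, if_neg (Finset.ne_of_mem_erase hj)])
          rw [hEq, hexp, add_sub_cancel_right, smul_smul, inv_mul_cancel₀ hf0, one_smul]
        rw [hNval]
        apply Submodule.smul_mem
        apply Submodule.sub_mem
        · exact Submodule.subset_span ⟨i, rfl⟩
        · exact Submodule.sum_mem _ (fun j _ => Submodule.smul_mem _ _
            (Submodule.subset_span ⟨j, rfl⟩))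
      · have : ratRow N i = ratRow N' i := by rw [hrow' i, if_neg hi]
        rw [this]
        exact Submodule.subset_span ⟨i, rfl⟩
  have hrd' : rowDeg N' i₀ < rowDeg N i₀ := by
    have hpos : 0 < rowDeg N i₀ := lt_of_le_of_lt (Nat.zero_le _) (hrdeg ⟨0, hq⟩)
    rw [rowDeg]
    rw [Finset.sup_lt_iff (by exact_mod_cast hpos)]
    intro a _
    have : N' i₀ a = r a := by erw [hN', Function.update_self]
    rw [this]
    exact hrdeg a
  have hrd'' : ∀ i, i ≠ i₀ → rowDeg N' i = rowDeg N i := by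
    intro i hi
    rw [rowDeg, rowDeg]
    apply Finset.sup_congr rfl
    intro a _
    erw [hN', Function.update_of_ne hi]
  have hsum' : ∑ i, rowDeg N' i < ∑ i, rowDeg N i := by
    apply Finset.sum_lt_sum
    · intro i _
      by_cases hi : i = i₀
      · subst hi; exact le_of_lt hrd'
      · rw [hrd'' i hi]
    · exact ⟨i₀, Finset.mem_univ _, hrd'⟩
  have := hmin N' hli' hspan'
  omega

/-- The highest-row-degree coefficient matrix of a minimal basis has
linearly independent rows. -/
lemma highRowMat_indep_of_minimal (hq : 0 < q) {N : Matrix (Fin n) (Fin q) F'[X]}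
    (hmb : IsMinimalBasis N) (x : Fin n → F')
    (hx : ∀ a, ∑ i, x i * (N i a).coeff (rowDeg N i) = 0) : x = 0 := by
  classical
  by_contra hxne
  have hex : ∃ i, x i ≠ 0 := by
    by_contra h; push_neg at h; exact hxne (funext h)
  obtain ⟨i₁, hi₁⟩ := hex
  obtain ⟨i₀, hi₀s, hi₀⟩ := Finset.exists_mem_eq_sup (Finset.univ.filter (fun i => x i ≠ 0))
    ⟨i₁, Finset.mem_filter.mpr ⟨Finset.mem_univ _, hi₁⟩⟩ (rowDeg N)
  have hxi₀ : x i₀ ≠ 0 := (Finset.mem_filter.mp hi₀s).2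
  have hle : ∀ i, x i ≠ 0 → rowDeg N i ≤ rowDeg N i₀ := by
    intro i hi
    rw [← hi₀]
    exact Finset.le_sup (f := rowDeg N) (Finset.mem_filter.mpr ⟨Finset.mem_univ i, hi⟩)
  have hinj : Function.Injective (algebraMap F'[X] (RatFunc F')) :=
    IsFractionRing.injective F'[X] (RatFunc F')
  by_cases he0 : rowDeg N i₀ = 0
  · have hrel : ∑ i, (algebraMap F'[X] (RatFunc F') (Polynomial.C (x i))) • ratRow N i = 0 := by
      funext a
      rw [Finset.sum_apply, Pi.zero_apply]
      have hterm : ∀ i, ((algebraMap F'[X] (RatFunc F') (Polynomial.C (x i))) • ratRow N i) a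
          = algebraMap F'[X] (RatFunc F') (Polynomial.C (x i) * N i a) := by
        intro i; rw [Pi.smul_apply, smul_eq_mul, ratRow, _root_.map_mul]
      rw [Finset.sum_congr rfl (fun i _ => hterm i), ← map_sum]
      have hzero : ∑ i, Polynomial.C (x i) * N i a = 0 := by
        have hconst : ∀ i, x i ≠ 0 → N i a = Polynomial.C ((N i a).coeff (rowDeg N i)) := by
          intro i hi
          have h1 : (N i a).natDegree ≤ rowDeg N i :=
            Finset.le_sup (f := fun a => (N i a).natDegree) (Finset.mem_univ a)
          have h2 : rowDeg N i = 0 := le_antisymm (he0 ▸ hle i hi) (Nat.zero_le _)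
          rw [h2] at h1 ⊢
          exact Polynomial.eq_C_of_natDegree_le_zero h1
        calc ∑ i, Polynomial.C (x i) * N i a
            = ∑ i, Polynomial.C (x i * (N i a).coeff (rowDeg N i)) := by
              apply Finset.sum_congr rfl
              intro i _
              by_cases hi : x i = 0
              · rw [hi]; simp
              · rw [Polynomial.C_mul, ← hconst i hi]
          _ = Polynomial.C (∑ i, x i * (N i a).coeff (rowDeg N i)) := by rw [← map_sum]
          _ = 0 := by rw [hx a, map_zero]
      rw [hzero, map_zero]
    have := Fintype.linearIndependent_iff.mp hmb.1 _ hrel i₀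
    have hC0 : Polynomial.C (x i₀) = 0 := hinj (by rw [this, map_zero])
    exact hxi₀ (by simpa using hC0)
  · set e₀ := rowDeg N i₀ with he₀
    set f : Fin n → RatFunc F' := fun i =>
      algebraMap F'[X] (RatFunc F') (Polynomial.C (x i) * X ^ (e₀ - rowDeg N i)) with hf
    set r : Fin q → F'[X] := fun a =>
      ∑ i, Polynomial.C (x i) * X ^ (e₀ - rowDeg N i) * N i a with hrdef
    have hf0 : f i₀ ≠ 0 := by
      intro hcon
      have hcon' : algebraMap F'[X] (RatFunc F')
          (Polynomial.C (x i₀) * X ^ (e₀ - rowDeg N i₀)) = 0 := hcon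
      have h0 : Polynomial.C (x i₀) * X ^ (e₀ - rowDeg N i₀) = 0 :=
        hinj (by rw [hcon', map_zero])
      rw [← he₀, Nat.sub_self, pow_zero, mul_one] at h0
      exact hxi₀ (by simpa using h0)
    have hr : ∀ a, algebraMap F'[X] (RatFunc F') (r a)
        = ∑ i, f i * algebraMap F'[X] (RatFunc F') (N i a) := by
      intro a
      rw [hrdef]
      rw [map_sum]
      exact Finset.sum_congr rfl (fun i _ => by rw [hf, _root_.map_mul])
    have hru : ∀ a u, e₀ ≤ u → (r a).coeff u = 0 := by
      intro a u hu
      rw [hrdef, Polynomial.finset_sum_coeff]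
      have hterm : ∀ i, (Polynomial.C (x i) * X ^ (e₀ - rowDeg N i) * N i a).coeff u
          = x i * (if e₀ - rowDeg N i ≤ u then
              (N i a).coeff (u - (e₀ - rowDeg N i)) else 0) := by
        intro i
        have hre : Polynomial.C (x i) * X ^ (e₀ - rowDeg N i) * N i a
            = Polynomial.C (x i) * (N i a * X ^ (e₀ - rowDeg N i)) := by ring
        rw [hre, Polynomial.coeff_C_mul, Polynomial.coeff_mul_X_pow']
      rw [Finset.sum_congr rfl (fun i _ => hterm i)]
      by_cases hue : u = e₀
      · rw [hue, ← hx a]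
        apply Finset.sum_congr rfl
        intro i _
        by_cases hxi : x i = 0
        · rw [hxi, zero_mul, zero_mul]
        · have hei : rowDeg N i ≤ e₀ := hle i hxi
          rw [if_pos (by omega)]
          have harg : e₀ - (e₀ - rowDeg N i) = rowDeg N i := by omega
          rw [harg]
      · apply Finset.sum_eq_zero
        intro i _
        by_cases hxi : x i = 0
        · rw [hxi, zero_mul]
        · have hei : rowDeg N i ≤ e₀ := hle i hxi
          by_cases hif : e₀ - rowDeg N i ≤ u
          · rw [if_pos hif]
            have hcz : (N i a).coeff (u - (e₀ - rowDeg N i)) = 0 := by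
              apply Polynomial.coeff_eq_zero_of_natDegree_lt
              have hnd : (N i a).natDegree ≤ rowDeg N i :=
                Finset.le_sup (f := fun a => (N i a).natDegree) (Finset.mem_univ a)
              omega
            rw [hcz, mul_zero]
          · rw [if_neg hif, mul_zero]
    have hrdeg : ∀ a, (r a).natDegree < rowDeg N i₀ := by
      intro a
      rw [← he₀]
      rcases eq_or_ne (r a) 0 with h0 | h0
      · rw [h0, Polynomial.natDegree_zero]; omega
      · rw [Polynomial.natDegree_lt_iff_degree_lt h0,
          Polynomial.degree_lt_iff_coeff_zero]
        intro u hu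
        exact hru a u hu
    exact minimal_swap hq hmb i₀ f hf0 r hr hrdeg

/-- Rows of a minimal basis remain independent modulo any monic irreducible polynomial. -/
lemma N_mod_indep (hq : 0 < q) {N : Matrix (Fin n) (Fin q) F'[X]}
    (hmb : IsMinimalBasis N) {π : F'[X]} (hπ : Irreducible π) (hπm : π.Monic)
    (y : Fin n → F'[X]) (hy : ∀ a, π ∣ ∑ i, y i * N i a) : ∀ i, π ∣ y i := by
  classical
  by_contra hcon
  push_neg at hcon
  obtain ⟨i₁, hi₁⟩ := hcon
  have hπ0 : π ≠ 0 := hπ.ne_zero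
  have hinj : Function.Injective (algebraMap F'[X] (RatFunc F')) :=
    IsFractionRing.injective F'[X] (RatFunc F')
  set x : Fin n → F'[X] := fun i => y i %ₘ π with hx
  have hx1 : x i₁ ≠ 0 := by
    intro h0
    exact hi₁ ((Polynomial.modByMonic_eq_zero_iff_dvd hπm).mp h0)
  have hdvd_diff : ∀ i, π ∣ (y i - x i) := by
    intro i
    have := Polynomial.modByMonic_add_div (y i) π
    exact ⟨y i /ₘ π, by linear_combination this.symm⟩
  have hxa : ∀ a, π ∣ ∑ i, x i * N i a := by
    intro a
    have h1 : (∑ i, y i * N i a) - (∑ i, (y i - x i) * N i a) = ∑ i, x i * N i a := by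
      rw [← Finset.sum_sub_distrib]
      apply Finset.sum_congr rfl
      intro i _; ring
    rw [← h1]
    exact dvd_sub (hy a) (Finset.dvd_sum (fun i _ => (hdvd_diff i).mul_right _))
  obtain ⟨i₀, hi₀s, hi₀⟩ := Finset.exists_mem_eq_sup (Finset.univ.filter (fun i => x i ≠ 0))
    ⟨i₁, Finset.mem_filter.mpr ⟨Finset.mem_univ _, hx1⟩⟩ (rowDeg N)
  have hxi₀ : x i₀ ≠ 0 := (Finset.mem_filter.mp hi₀s).2
  have hle : ∀ i, x i ≠ 0 → rowDeg N i ≤ rowDeg N i₀ := by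
    intro i hi
    rw [← hi₀]
    exact Finset.le_sup (f := rowDeg N) (Finset.mem_filter.mpr ⟨Finset.mem_univ i, hi⟩)
  set w : Fin q → F'[X] := fun a => ∑ i, x i * N i a with hw
  choose r hrw using fun a => hxa a
  have hwr : ∀ a, w a = π * r a := fun a => hrw a
  set δ := π.natDegree with hδ
  have hδ1 : 1 ≤ δ := by
    rcases Nat.eq_zero_or_pos δ with h0 | h1
    · exfalso
      have h1 : π = 1 := hπm.natDegree_eq_zero.mp h0
      exact hπ.not_isUnit (h1 ▸ isUnit_one)
    · exact h1
  have hxdeg : ∀ i, x i ≠ 0 → (x i).natDegree < δ := by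
    intro i hi
    have := Polynomial.degree_modByMonic_lt (y i) hπm
    rw [hδ]
    have h2 : (x i).degree < π.degree := this
    rcases Polynomial.degree_eq_natDegree hi with h3
    rw [h3, Polynomial.degree_eq_natDegree hπ0] at h2
    exact_mod_cast h2
  have hwdeg : ∀ a, (w a).natDegree ≤ δ - 1 + rowDeg N i₀ := by
    intro a
    apply Polynomial.natDegree_sum_le_of_forall_le
    intro i _
    by_cases hi : x i = 0
    · rw [hi, zero_mul, Polynomial.natDegree_zero]; omega
    · have h1 := Polynomial.natDegree_mul_le (p := x i) (q := N i a)
      have h2 := hxdeg i hi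
      have h3 : (N i a).natDegree ≤ rowDeg N i :=
        Finset.le_sup (f := fun a => (N i a).natDegree) (Finset.mem_univ a)
      have h4 := hle i hi
      omega
  by_cases hw0 : ∀ a, w a = 0
  · -- direct contradiction with linear independence of the rows of N
    have hrel : ∑ i, (algebraMap F'[X] (RatFunc F') (x i)) • ratRow N i = 0 := by
      funext a
      rw [Finset.sum_apply, Pi.zero_apply]
      have hterm : ∀ i, ((algebraMap F'[X] (RatFunc F') (x i)) • ratRow N i) a
          = algebraMap F'[X] (RatFunc F') (x i * N i a) := by
        intro i; rw [Pi.smul_apply, smul_eq_mul, ratRow, _root_.map_mul]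
      rw [Finset.sum_congr rfl (fun i _ => hterm i), ← map_sum]
      have : ∑ i, x i * N i a = 0 := hw0 a
      rw [this, map_zero]
    have := Fintype.linearIndependent_iff.mp hmb.1 _ hrel i₀
    exact hxi₀ (hinj (by rw [this, map_zero]))
  · push_neg at hw0
    obtain ⟨a₀, ha₀⟩ := hw0
    have hr0 : r a₀ ≠ 0 := by
      intro h0
      exact ha₀ (by rw [hwr a₀, h0, mul_zero])
    have he₀pos : 1 ≤ rowDeg N i₀ := by
      have h1 : (w a₀).natDegree = δ + (r a₀).natDegree := by
        rw [hwr a₀]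
        exact Polynomial.natDegree_mul hπ0 hr0
      have h2 := hwdeg a₀
      omega
    have hrdeg : ∀ a, (r a).natDegree < rowDeg N i₀ := by
      intro a
      rcases eq_or_ne (r a) 0 with h0 | h0
      · rw [h0, Polynomial.natDegree_zero]; omega
      · have h1 : (w a).natDegree = δ + (r a).natDegree := by
          rw [hwr a]
          exact Polynomial.natDegree_mul hπ0 h0
        have h2 := hwdeg a
        omega
    set f : Fin n → RatFunc F' := fun i =>
      algebraMap F'[X] (RatFunc F') (x i) / algebraMap F'[X] (RatFunc F') π with hf
    have hπr0 : algebraMap F'[X] (RatFunc F') π ≠ 0 := by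
      intro h0; exact hπ0 (hinj (by rw [h0, map_zero]))
    have hf0 : f i₀ ≠ 0 := by
      intro hcon
      have hcon' : algebraMap F'[X] (RatFunc F') (x i₀)
          / algebraMap F'[X] (RatFunc F') π = 0 := hcon
      rw [_root_.div_eq_zero_iff] at hcon'
      rcases hcon' with h | h
      · exact hxi₀ (hinj (by rw [h, map_zero]))
      · exact hπr0 h
    have hr : ∀ a, algebraMap F'[X] (RatFunc F') (r a)
        = ∑ i, f i * algebraMap F'[X] (RatFunc F') (N i a) := by
      intro a
      have h1 : ∀ i, f i * algebraMap F'[X] (RatFunc F') (N i a)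
          = algebraMap F'[X] (RatFunc F') (x i * N i a)
            / algebraMap F'[X] (RatFunc F') π := by
        intro i
        rw [hf, _root_.map_mul]
        field_simp
      rw [Finset.sum_congr rfl (fun i _ => h1 i), ← Finset.sum_div, ← map_sum]
      have hsum_w : ∑ i, x i * N i a = w a := rfl
      rw [hsum_w, hwr a, _root_.map_mul]
      field_simp
    exact minimal_swap hq hmb i₀ f hf0 r hr hrdeg

/-- Saturation for the minimal basis: rational combinations that are polynomial are
polynomial combinations. -/
lemma N_saturation (hq : 0 < q) {N : Matrix (Fin n) (Fin q) F'[X]}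
    (hmb : IsMinimalBasis N) :
    ∀ D : ℕ, ∀ g : F'[X], g.natDegree ≤ D → g ≠ 0 →
      ∀ (v : Fin q → F'[X]) (p : Fin n → F'[X]),
      (∀ a, g * v a = ∑ i, p i * N i a) →
      ∃ q' : Fin n → F'[X], ∀ a, v a = ∑ i, q' i * N i a := by
  intro D
  induction D with
  | zero =>
    intro g hgD hg0 v p h
    have hgC : g = Polynomial.C (g.coeff 0) := Polynomial.eq_C_of_natDegree_le_zero hgD
    have hc0 : g.coeff 0 ≠ 0 := by
      intro h0; exact hg0 (by rw [hgC, h0, map_zero])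
    refine ⟨fun i => Polynomial.C (g.coeff 0)⁻¹ * p i, fun a => ?_⟩
    have h1 : Polynomial.C (g.coeff 0)⁻¹ * (g * v a)
        = Polynomial.C (g.coeff 0)⁻¹ * ∑ i, p i * N i a := by rw [h a]
    calc v a = Polynomial.C (g.coeff 0)⁻¹ * (Polynomial.C (g.coeff 0) * v a) := by
          rw [← mul_assoc, ← Polynomial.C_mul, inv_mul_cancel₀ hc0, Polynomial.C_1, one_mul]
      _ = Polynomial.C (g.coeff 0)⁻¹ * (g * v a) := by rw [← hgC]
      _ = Polynomial.C (g.coeff 0)⁻¹ * ∑ i, p i * N i a := h1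
      _ = ∑ i, Polynomial.C (g.coeff 0)⁻¹ * p i * N i a := by
          rw [Finset.mul_sum]
          exact Finset.sum_congr rfl (fun i _ => by ring)
  | succ D ih =>
    intro g hgD hg0 v p h
    by_cases hgdeg : g.natDegree = 0
    · exact ih g (by omega) hg0 v p h
    · have hgnu : ¬ IsUnit g := by
        intro hu
        exact hgdeg (Polynomial.natDegree_eq_zero_of_isUnit hu)
      obtain ⟨π₀, hπ₀, hπ₀dvd⟩ := WfDvdMonoid.exists_irreducible_factor hgnu hg0
      have hπ₀0 : π₀ ≠ 0 := hπ₀.ne_zero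
      set π := π₀ * Polynomial.C (π₀.leadingCoeff)⁻¹ with hπdef
      have hπm : π.Monic := Polynomial.monic_mul_leadingCoeff_inv hπ₀0
      have hπ : Irreducible π := Polynomial.irreducible_mul_leadingCoeff_inv.mpr hπ₀
      have hπdvdg : π ∣ g := by
        obtain ⟨c, hc⟩ := hπ₀dvd
        refine ⟨Polynomial.C (π₀.leadingCoeff) * c, ?_⟩
        rw [hc, hπdef]
        have : Polynomial.C (π₀.leadingCoeff)⁻¹ * Polynomial.C (π₀.leadingCoeff) = 1 := by
          rw [← Polynomial.C_mul, inv_mul_cancel₀ (Polynomial.leadingCoeff_ne_zero.mpr hπ₀0),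
            Polynomial.C_1]
        calc π₀ * c = π₀ * 1 * c := by ring
          _ = π₀ * (Polynomial.C (π₀.leadingCoeff)⁻¹ * Polynomial.C (π₀.leadingCoeff)) * c := by
              rw [this]
          _ = π₀ * Polynomial.C (π₀.leadingCoeff)⁻¹ * (Polynomial.C (π₀.leadingCoeff) * c) := by
              ring
      have hπ0 : π ≠ 0 := hπ.ne_zero
      have hdvdp : ∀ i, π ∣ p i := by
        apply N_mod_indep hq hmb hπ hπm
        intro a
        have hdv : π ∣ g * v a := dvd_mul_of_dvd_left hπdvdg _
        rwa [h a] at hdv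
      obtain ⟨g₁, hg₁⟩ := hπdvdg
      choose p₁ hp₁ using hdvdp
      have hg₁0 : g₁ ≠ 0 := by
        intro h0; exact hg0 (by rw [hg₁, h0, mul_zero])
      have hδ1 : 1 ≤ π.natDegree := by
        rcases Nat.eq_zero_or_pos π.natDegree with h0 | h1
        · exfalso
          have h1 : π = 1 := hπm.natDegree_eq_zero.mp h0
          exact hπ.not_isUnit (h1 ▸ isUnit_one)
        · exact h1
      have hg₁deg : g₁.natDegree ≤ D := by
        have hmul : g.natDegree = π.natDegree + g₁.natDegree := by
          rw [hg₁]; exact Polynomial.natDegree_mul hπ0 hg₁0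
        omega
      have heq : ∀ a, g₁ * v a = ∑ i, p₁ i * N i a := by
        intro a
        apply mul_left_cancel₀ hπ0
        calc π * (g₁ * v a) = g * v a := by rw [hg₁]; ring
          _ = ∑ i, p i * N i a := h a
          _ = ∑ i, π * (p₁ i * N i a) := by
              apply Finset.sum_congr rfl
              intro i _
              rw [hp₁ i]; ring
          _ = π * ∑ i, p₁ i * N i a := by rw [Finset.mul_sum]
      exact ih g₁ hg₁deg hg₁0 v p₁ heq

end Nside

section KerComp

variable {m n d : ℕ}

lemma degree_Xpow_mul_lt {p : F'[X]} {e j k : ℕ} (hp : p.natDegree ≤ e) (hj : j + e < k) :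
    ((X : F'[X]) ^ j * p).degree < ((k : ℕ) : WithBot ℕ) := by
  rcases eq_or_ne p 0 with rfl | h0
  · rw [mul_zero, Polynomial.degree_zero]
    exact WithBot.bot_lt_coe _
  · have h1 : ((X : F'[X]) ^ j * p).natDegree ≤ j + e := by
      have := Polynomial.natDegree_mul_le (p := (X : F'[X]) ^ j) (q := p)
      have h2 : ((X : F'[X]) ^ j).natDegree = j := Polynomial.natDegree_X_pow j
      omega
    calc ((X : F'[X]) ^ j * p).degree ≤ (((X : F'[X]) ^ j * p).natDegree : WithBot ℕ) :=
          Polynomial.degree_le_natDegree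
      _ < ((k : ℕ) : WithBot ℕ) := by exact_mod_cast lt_of_le_of_lt h1 hj

/-- The dimension of the degree-bounded kernel of `N`. -/
lemma pker_N_eq (hn : 0 < n)
    (M : Matrix (Fin m) (Fin (m + n)) F'[X]) (hdeg : ∀ b a, (M b a).natDegree ≤ d)
    (hfull : HasFullSylvesterRank d M)
    (N : Matrix (Fin n) (Fin (m + n)) F'[X])
    (hNli : LinearIndependent (RatFunc F') (ratRow N))
    (hdual : ∀ b i, ∑ a, M b a * N i a = 0) (k : ℕ) :
    Module.finrank F' (pker k N) = m * (k - d) := by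
  classical
  have hinj : Function.Injective (algebraMap F'[X] (RatFunc F')) :=
    IsFractionRing.injective F'[X] (RatFunc F')
  have hMN : ∀ i b, ∑ a, N i a * M b a = 0 := by
    intro i b
    rw [← hdual b i]
    exact Finset.sum_congr rfl (fun a _ => mul_comm _ _)
  have hMpoly : ∀ y : Fin m → F'[X], (∀ a, ∑ b, y b * M b a = 0) → y = 0 :=
    M_rows_poly_indep hn hdeg hfull
  have hMli : LinearIndependent (RatFunc F') (ratRow M) := (ratRow_li_iff M).mpr hMpoly
  set ψ : Fin m × Fin (k - d) → (Fin (m + n) → F'[X]) :=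
    fun bj => fun a => X ^ (bj.2 : ℕ) * M bj.1 a with hψ
  have hmem : ∀ bj, ψ bj ∈ pker k N := by
    rintro ⟨b, j⟩
    constructor
    · intro a
      exact degree_Xpow_mul_lt (hdeg b a) (by have := j.isLt; omega)
    · intro i
      have : ∀ a, N i a * ψ (b, j) a = X ^ (j : ℕ) * (N i a * M b a) := by
        intro a; show N i a * (X ^ (j : ℕ) * M b a) = _; ring
      rw [Finset.sum_congr rfl (fun a _ => this a), ← Finset.mul_sum, hMN i b, mul_zero]
  have hindep : LinearIndependent F' (fun bj => (⟨ψ bj, hmem bj⟩ : pker k N)) := by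
    rw [Fintype.linearIndependent_iff]
    intro c hc
    have hc' : ∑ bj, c bj • ψ bj = 0 := by
      have := congrArg (Submodule.subtype (pker k N)) hc
      simpa using this
    set y : Fin m → F'[X] := fun b => ∑ j : Fin (k - d), Polynomial.C (c (b, j)) * X ^ (j : ℕ)
      with hy
    have hyrel : ∀ a, ∑ b, y b * M b a = 0 := by
      intro a
      have h1 := congrFun hc' a
      rw [Finset.sum_apply, Pi.zero_apply] at h1
      rw [← h1, Fintype.sum_prod_type]
      apply Finset.sum_congr rfl
      intro b _
      rw [hy, Finset.sum_mul]
      apply Finset.sum_congr rfl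
      intro j _
      rw [Pi.smul_apply, Polynomial.smul_eq_C_mul]
      show Polynomial.C (c (b, j)) * X ^ (j : ℕ) * M b a
        = Polynomial.C (c (b, j)) * (X ^ (j : ℕ) * M b a)
      ring
    have hy0 := hMpoly y hyrel
    intro bj
    have := congrArg (fun p => p.coeff (bj.2 : ℕ)) (congrFun hy0 bj.1)
    simp only [hy, Pi.zero_apply, Polynomial.coeff_zero] at this
    rw [sum_C_mul_X_pow_coeff] at this
    rw [dif_pos bj.2.isLt] at this
    simpa using this
  have hspanned : ∀ v ∈ pker k N, v ∈ Submodule.span F' (Set.range ψ) := by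
    rintro v ⟨hv1, hv2⟩
    have hkerN : LinearMap.ker (ratMat N).mulVecLin
        = Submodule.span (RatFunc F') (Set.range (ratRow M)) :=
      ker_ratMat_eq_span (by omega) N M hNli hMli hMN
    have hvmem := ratVec_mem_ker N v hv2
    rw [hkerN] at hvmem
    obtain ⟨c, hc⟩ := (Submodule.mem_span_range_iff_exists_fun (RatFunc F')).mp hvmem
    obtain ⟨den, hden⟩ := IsLocalization.exist_integer_multiples (nonZeroDivisors F'[X])
      Finset.univ c
    choose p hp using fun b => hden b (Finset.mem_univ b)
    have hden0 : (den : F'[X]) ≠ 0 := nonZeroDivisors.ne_zero den.2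
    have hgv : ∀ a, (den : F'[X]) * v a = ∑ b, p b * M b a := by
      intro a
      apply hinj
      rw [map_sum, _root_.map_mul]
      have h1 := congrFun hc a
      rw [Finset.sum_apply] at h1
      have h2 : ∀ b, algebraMap F'[X] (RatFunc F') (p b * M b a)
          = algebraMap F'[X] (RatFunc F') (den : F'[X]) * (c b * ratRow M b a) := by
        intro b
        rw [_root_.map_mul, hp b, Algebra.smul_def, ratRow]
        ring
      rw [Finset.sum_congr rfl (fun b _ => h2 b), ← Finset.mul_sum]
      have h3 : ∑ b, c b * ratRow M b a = algebraMap F'[X] (RatFunc F') (v a) := by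
        rw [← h1]
        exact Finset.sum_congr rfl (fun b _ => by rw [Pi.smul_apply, smul_eq_mul])
      rw [h3]
    obtain ⟨q', hq'⟩ := M_saturation hn hdeg hfull hden0 v p hgv
    have hqdeg : ∀ b, q' b ≠ 0 → (q' b).natDegree + d < k :=
      pred_deg_gen M (fun _ => d) hdeg
        (fun x hx => M_top_coeff_indep hn hfull x hx) v hv1 q' hq'
    have hqdeg' : ∀ b, (q' b).degree < ((k - d : ℕ) : WithBot ℕ) := by
      intro b
      rcases eq_or_ne (q' b) 0 with h0 | h0
      · rw [h0, Polynomial.degree_zero]; exact WithBot.bot_lt_coe _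
      · have h1 := hqdeg b h0
        rw [Polynomial.degree_eq_natDegree h0]
        exact_mod_cast (by omega : (q' b).natDegree < k - d)
    have hvexp : v = ∑ bj : Fin m × Fin (k - d), (q' bj.1).coeff (bj.2 : ℕ) • ψ bj := by
      funext a
      rw [Finset.sum_apply, Fintype.sum_prod_type]
      rw [hq' a]
      apply Finset.sum_congr rfl
      intro b _
      have hqb : q' b = ∑ j : Fin (k - d), Polynomial.C ((q' b).coeff (j : ℕ)) * X ^ (j : ℕ) :=
        poly_eq_sum_coeff (hqdeg' b)
      rw [hqb, Finset.sum_mul]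
      apply Finset.sum_congr rfl
      intro j _
      rw [Pi.smul_apply, Polynomial.smul_eq_C_mul]
      show Polynomial.C ((q' b).coeff (j : ℕ)) * X ^ (j : ℕ) * M b a
        = Polynomial.C ((q' b).coeff (j : ℕ)) * (X ^ (j : ℕ) * M b a)
      ring
    rw [hvexp]
    exact Submodule.sum_mem _ (fun bj _ => Submodule.smul_mem _ _
      (Submodule.subset_span ⟨bj, rfl⟩))
  have heq : pker k N = Submodule.span F' (Set.range ψ) := by
    apply le_antisymm
    · intro v hv; exact hspanned v hv
    · rw [Submodule.span_le]
      rintro _ ⟨bj, rfl⟩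
      exact hmem bj
  rw [heq]
  have hindep' : LinearIndependent F' ψ := by
    have := hindep.map (f := Submodule.subtype (pker k N)) (by simp)
    exact this
  rw [finrank_span_eq_card hindep']
  simp [Fintype.card_prod]

/-- The dimension of the degree-bounded kernel of `M`. -/
lemma pker_M_eq (hm : 0 < m) (hn : 0 < n)
    (M : Matrix (Fin m) (Fin (m + n)) F'[X]) (hdeg : ∀ b a, (M b a).natDegree ≤ d)
    (hfull : HasFullSylvesterRank d M)
    (N : Matrix (Fin n) (Fin (m + n)) F'[X])
    (hNmb : IsMinimalBasis N)
    (hdual : ∀ b i, ∑ a, M b a * N i a = 0) (k : ℕ) :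
    Module.finrank F' (pker k M) = ∑ i, (k - rowDeg N i) := by
  classical
  have hq0 : 0 < m + n := by omega
  have hinj : Function.Injective (algebraMap F'[X] (RatFunc F')) :=
    IsFractionRing.injective F'[X] (RatFunc F')
  have hMpoly : ∀ y : Fin m → F'[X], (∀ a, ∑ b, y b * M b a = 0) → y = 0 :=
    M_rows_poly_indep hn hdeg hfull
  have hMli : LinearIndependent (RatFunc F') (ratRow M) := (ratRow_li_iff M).mpr hMpoly
  have hNli : LinearIndependent (RatFunc F') (ratRow N) := hNmb.1
  have hNpoly : ∀ y : Fin n → F'[X], (∀ a, ∑ i, y i * N i a = 0) → y = 0 :=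
    (ratRow_li_iff N).mp hNli
  have hNdeg' : ∀ i a, (N i a).natDegree ≤ rowDeg N i := by
    intro i a
    exact Finset.le_sup (f := fun a => (N i a).natDegree) (Finset.mem_univ a)
  set ι := (i : Fin n) × Fin (k - rowDeg N i) with hι
  set ψ : ι → (Fin (m + n) → F'[X]) :=
    fun ij => fun a => X ^ (ij.2 : ℕ) * N ij.1 a with hψ
  have hmem : ∀ ij, ψ ij ∈ pker k M := by
    intro ij
    constructor
    · intro a
      have hj : (ij.2 : ℕ) < k - rowDeg N ij.1 := ij.2.isLt
      exact degree_Xpow_mul_lt (hNdeg' ij.1 a) (by omega)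
    · intro b
      have hre : ∀ a, M b a * ψ ij a = X ^ (ij.2 : ℕ) * (M b a * N ij.1 a) := by
        intro a; show M b a * (X ^ (ij.2 : ℕ) * N ij.1 a) = _; ring
      rw [Finset.sum_congr rfl (fun a _ => hre a), ← Finset.mul_sum, hdual b ij.1, mul_zero]
  have hindep' : LinearIndependent F' ψ := by
    rw [Fintype.linearIndependent_iff]
    intro c hc
    set y : Fin n → F'[X] := fun i => ∑ j : Fin (k - rowDeg N i),
      Polynomial.C (c ⟨i, j⟩) * X ^ (j : ℕ) with hy
    have hyrel : ∀ a, ∑ i, y i * N i a = 0 := by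
      intro a
      have h1 := congrFun hc a
      rw [Finset.sum_apply, Pi.zero_apply] at h1
      rw [← h1, ← Finset.univ_sigma_univ, Finset.sum_sigma]
      apply Finset.sum_congr rfl
      intro i _
      rw [hy, Finset.sum_mul]
      apply Finset.sum_congr rfl
      intro j _
      rw [Pi.smul_apply, Polynomial.smul_eq_C_mul]
      show Polynomial.C (c ⟨i, j⟩) * X ^ (j : ℕ) * N i a
        = Polynomial.C (c ⟨i, j⟩) * (X ^ (j : ℕ) * N i a)
      ring
    have hy0 := hNpoly y hyrel
    rintro ⟨i, j⟩
    have hco := congrArg (fun p => p.coeff (j : ℕ)) (congrFun hy0 i)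
    simp only [hy, Pi.zero_apply, Polynomial.coeff_zero] at hco
    rw [sum_C_mul_X_pow_coeff] at hco
    rw [dif_pos j.isLt] at hco
    simpa using hco
  have hspanned : ∀ v ∈ pker k M, v ∈ Submodule.span F' (Set.range ψ) := by
    rintro v ⟨hv1, hv2⟩
    have hkerM : LinearMap.ker (ratMat M).mulVecLin
        = Submodule.span (RatFunc F') (Set.range (ratRow N)) :=
      ker_ratMat_eq_span rfl M N hMli hNli hdual
    have hvmem := ratVec_mem_ker M v hv2
    rw [hkerM] at hvmem
    obtain ⟨c, hc⟩ := (Submodule.mem_span_range_iff_exists_fun (RatFunc F')).mp hvmem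
    obtain ⟨den, hden⟩ := IsLocalization.exist_integer_multiples (nonZeroDivisors F'[X])
      Finset.univ c
    choose p hp using fun i => hden i (Finset.mem_univ i)
    have hden0 : (den : F'[X]) ≠ 0 := nonZeroDivisors.ne_zero den.2
    have hgv : ∀ a, (den : F'[X]) * v a = ∑ i, p i * N i a := by
      intro a
      apply hinj
      rw [map_sum, _root_.map_mul]
      have h1 := congrFun hc a
      rw [Finset.sum_apply] at h1
      have h2 : ∀ i, algebraMap F'[X] (RatFunc F') (p i * N i a)
          = algebraMap F'[X] (RatFunc F') (den : F'[X]) * (c i * ratRow N i a) := by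
        intro i
        rw [_root_.map_mul, hp i, Algebra.smul_def, ratRow]
        ring
      rw [Finset.sum_congr rfl (fun i _ => h2 i), ← Finset.mul_sum]
      have h3 : ∑ i, c i * ratRow N i a = algebraMap F'[X] (RatFunc F') (v a) := by
        rw [← h1]
        exact Finset.sum_congr rfl (fun i _ => by rw [Pi.smul_apply, smul_eq_mul])
      rw [h3]
    obtain ⟨q', hq'⟩ := N_saturation hq0 hNmb (den : F'[X]).natDegree (den : F'[X])
      le_rfl hden0 v p hgv
    have hqdeg : ∀ i, q' i ≠ 0 → (q' i).natDegree + rowDeg N i < k :=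
      pred_deg_gen N (rowDeg N) hNdeg'
        (fun x hx => highRowMat_indep_of_minimal hq0 hNmb x hx) v hv1 q' hq'
    have hqdeg' : ∀ i, (q' i).degree < ((k - rowDeg N i : ℕ) : WithBot ℕ) := by
      intro i
      rcases eq_or_ne (q' i) 0 with h0 | h0
      · rw [h0, Polynomial.degree_zero]; exact WithBot.bot_lt_coe _
      · have h1 := hqdeg i h0
        rw [Polynomial.degree_eq_natDegree h0]
        exact_mod_cast (by omega : (q' i).natDegree < k - rowDeg N i)
    have hvexp : v = ∑ ij : ι, (q' ij.1).coeff (ij.2 : ℕ) • ψ ij := by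
      funext a
      rw [Finset.sum_apply, ← Finset.univ_sigma_univ, Finset.sum_sigma]
      rw [hq' a]
      apply Finset.sum_congr rfl
      intro i _
      have hqb : q' i = ∑ j : Fin (k - rowDeg N i),
          Polynomial.C ((q' i).coeff (j : ℕ)) * X ^ (j : ℕ) :=
        poly_eq_sum_coeff (hqdeg' i)
      rw [hqb, Finset.sum_mul]
      apply Finset.sum_congr rfl
      intro j _
      rw [Pi.smul_apply, Polynomial.smul_eq_C_mul]
      show Polynomial.C ((q' i).coeff (j : ℕ)) * X ^ (j : ℕ) * N i a
        = Polynomial.C ((q' i).coeff (j : ℕ)) * (X ^ (j : ℕ) * N i a)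
      ring
    rw [hvexp]
    exact Submodule.sum_mem _ (fun ij _ => Submodule.smul_mem _ _
      (Submodule.subset_span ⟨ij, rfl⟩))
  have heq : pker k M = Submodule.span F' (Set.range ψ) := by
    apply le_antisymm
    · intro v hv; exact hspanned v hv
    · rw [Submodule.span_le]
      rintro _ ⟨ij, rfl⟩
      exact hmem ij
  rw [heq, finrank_span_eq_card hindep']
  rw [Fintype.card_sigma]
  simp

end KerComp

end AuxDev

/-- A minimal basis `N(λ)` dual to a full-Sylvester-rank matrix `M(λ)` has
full-Sylvester-rank (as a polynomial matrix of degree at most `k' = ⌈md/n⌉`) if and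
only if `t = nk' - md = 0`, i.e. if and only if all the row degrees of `N(λ)` are
equal. -/
theorem dual_hasFullSylvesterRank_iff {𝕜 : Type*} [RCLike 𝕜] {m n d : ℕ}
    (hm : 0 < m) (hn : 0 < n) (hd : 0 < d)
    (M : Matrix (Fin m) (Fin (m + n)) 𝕜[X]) (hdeg : ∀ i j, (M i j).natDegree ≤ d)
    (hfull : HasFullSylvesterRank d M)
    (k' t : ℕ) (hk' : k' = ⌈(m * d : ℚ) / (n : ℚ)⌉₊) (ht : t = n * k' - m * d)
    (N : Matrix (Fin n) (Fin (m + n)) 𝕜[X]) (hNdeg : ∀ i j, (N i j).natDegree ≤ k')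
    (hNmb : IsMinimalBasis N) (hdual : M * Nᵀ = 0) :
    (HasFullSylvesterRank k' N ↔ t = 0) ∧
    (HasFullSylvesterRank k' N ↔ ∀ i j : Fin n, rowDeg N i = rowDeg N j) := by
  classical
  have hmb : IsMinimalBasisOf (rowSpan N) N := hNmb
  have hNli : LinearIndependent (RatFunc 𝕜) (ratRow N) := hmb.1
  have hdual' : ∀ b i, ∑ a, M b a * N i a = 0 := by
    intro b i
    have h0 := congrFun (congrFun hdual b) i
    rw [Matrix.mul_apply] at h0
    simpa [Matrix.transpose_apply] using h0
  have he_le : ∀ i, rowDeg N i ≤ k' := by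
    intro i
    exact Finset.sup_le (fun a _ => hNdeg i a)
  have hrkN : ∀ k, (sylv k' k N).rank + m * (k - d) = k * (m + n) := by
    intro k
    have h1 := rank_sylv_add_pker k' k N (fun b a => hNdeg b a)
    rw [pker_N_eq hn M hdeg hfull N hNli hdual' k] at h1
    exact h1
  have hsum : ∑ i, rowDeg N i = d * m := by
    set k₀ := d * m + k' + 1 with hk₀
    have h1 := rank_sylv_add_pker d k₀ M (fun b a => hdeg b a)
    rw [pker_M_eq hm hn M hdeg hfull N hNmb hdual' k₀] at h1
    rw [hfull k₀ (by omega)] at h1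
    have hminval : min ((k₀ + d) * m) (k₀ * (m + n)) = (k₀ + d) * m := by
      apply min_eq_left
      have hd0 : d * m ≤ k₀ := by omega
      have h5 : k₀ ≤ k₀ * n := Nat.le_mul_of_pos_right _ hn
      have hdm : d * m ≤ k₀ * n := le_trans hd0 h5
      have e1 : (k₀ + d) * m = k₀ * m + d * m := by ring
      have e2 : k₀ * (m + n) = k₀ * m + k₀ * n := by ring
      omega
    rw [hminval] at h1
    have h2 : ∑ i, (k₀ - rowDeg N i) + ∑ i, rowDeg N i = n * k₀ := by
      rw [← Finset.sum_add_distrib]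
      have hterm : ∀ i : Fin n, (k₀ - rowDeg N i) + rowDeg N i = k₀ := by
        intro i
        have := he_le i
        omega
      rw [Finset.sum_congr rfl (fun i _ => hterm i)]
      rw [Finset.sum_const, Finset.card_univ, Fintype.card_fin, smul_eq_mul]
    have e1 : (k₀ + d) * m = k₀ * m + d * m := by ring
    have e2 : k₀ * (m + n) = k₀ * m + k₀ * n := by ring
    have e3 : n * k₀ = k₀ * n := mul_comm _ _
    omega
  have hnQ : (0 : ℚ) < n := by exact_mod_cast hn
  have hceil1 : m * d ≤ n * k' := by
    have h1 : ((m : ℚ) * d) / n ≤ (k' : ℚ) := hk' ▸ Nat.le_ceil _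
    rw [div_le_iff₀ hnQ] at h1
    have h3 : m * d ≤ k' * n := by exact_mod_cast h1
    have e3 : n * k' = k' * n := mul_comm _ _
    omega
  have hceil2 : n * k' < m * d + n := by
    have h1 : (k' : ℚ) < ((m : ℚ) * d) / n + 1 := by
      rw [hk']
      exact Nat.ceil_lt_add_one (by positivity)
    have h2 := mul_lt_mul_of_pos_right h1 hnQ
    rw [add_mul, one_mul, div_mul_cancel₀ _ (ne_of_gt hnQ)] at h2
    have h3 : k' * n < m * d + n := by exact_mod_cast h2
    have e3 : n * k' = k' * n := mul_comm _ _
    omega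
  have iff1 : HasFullSylvesterRank k' N ↔ t = 0 := by
    constructor
    · intro hfn
      set k₁ := d + k' * n + 1 with hk₁
      have h1 := hfn k₁ (by omega)
      have h2 := hrkN k₁
      have hd_le : d ≤ k₁ := by omega
      have hms : m * (k₁ - d) + m * d = m * k₁ := by
        rw [← Nat.mul_add, Nat.sub_add_cancel hd_le]
      have e1 : (k₁ + k') * n = k₁ * n + k' * n := by ring
      have e2 : k₁ * (m + n) = k₁ * m + k₁ * n := by ring
      have e5 : m * k₁ = k₁ * m := mul_comm _ _
      have hminval : min ((k₁ + k') * n) (k₁ * (m + n)) = (k₁ + k') * n := by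
        apply min_eq_left
        have h5 : k' * n ≤ k₁ := by omega
        have h6 : k₁ ≤ k₁ * m := Nat.le_mul_of_pos_right _ hm
        omega
      rw [hminval] at h1
      have e3 : n * k' = k' * n := mul_comm _ _
      omega
    · intro ht0
      have hnk : n * k' = m * d := by omega
      intro k hk1
      have h2 := hrkN k
      have e1 : (k + k') * n = k * n + k' * n := by ring
      have e2 : k * (m + n) = k * m + k * n := by ring
      have e3 : n * k' = k' * n := mul_comm _ _
      have e4 : m * d = d * m := mul_comm _ _
      by_cases hkd : k ≤ d
      · have hzero : m * (k - d) = 0 := by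
          have hkd0 : k - d = 0 := by omega
          rw [hkd0, mul_zero]
        have hminval : min ((k + k') * n) (k * (m + n)) = k * (m + n) := by
          apply min_eq_right
          have h5 : k * m ≤ d * m := Nat.mul_le_mul hkd (le_refl m)
          omega
        rw [hminval]
        omega
      · push_neg at hkd
        have hd_le : d ≤ k := le_of_lt hkd
        have hms : m * (k - d) + m * d = m * k := by
          rw [← Nat.mul_add, Nat.sub_add_cancel hd_le]
        have e5 : m * k = k * m := mul_comm _ _
        have hminval : min ((k + k') * n) (k * (m + n)) = (k + k') * n := by
          apply min_eq_left
          have h5 : d * m ≤ k * m := Nat.mul_le_mul hd_le (le_refl m)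
          omega
        rw [hminval]
        omega
  have iff2 : t = 0 ↔ ∀ i j : Fin n, rowDeg N i = rowDeg N j := by
    constructor
    · intro ht0
      have hnk : n * k' = m * d := by omega
      have hall : ∀ i, rowDeg N i = k' := by
        have hzs : ∑ i, (k' - rowDeg N i) = 0 := by
          have h2 : ∑ i, (k' - rowDeg N i) + ∑ i, rowDeg N i = n * k' := by
            rw [← Finset.sum_add_distrib]
            have hterm : ∀ i : Fin n, (k' - rowDeg N i) + rowDeg N i = k' := by
              intro i; have := he_le i; omega
            rw [Finset.sum_congr rfl (fun i _ => hterm i)]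
            rw [Finset.sum_const, Finset.card_univ, Fintype.card_fin, smul_eq_mul]
          have e4 : m * d = d * m := mul_comm _ _
          omega
        intro i
        have h3 : k' - rowDeg N i = 0 :=
          (Finset.sum_eq_zero_iff).mp hzs i (Finset.mem_univ i)
        have := he_le i
        omega
      intro i j; rw [hall i, hall j]
    · intro heq
      set s := rowDeg N ⟨0, hn⟩ with hs
      have hsum_s : ∑ i, rowDeg N i = n * s := by
        rw [Finset.sum_congr rfl (fun i _ => heq i ⟨0, hn⟩)]
        rw [Finset.sum_const, Finset.card_univ, Fintype.card_fin, smul_eq_mul]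
      have hns : n * s = d * m := by omega
      have hsk : s ≤ k' := he_le _
      have hk's : k' ≤ s := by
        by_contra hlt
        push_neg at hlt
        have h1 : n * (s + 1) ≤ n * k' := Nat.mul_le_mul (le_refl n) (by omega)
        have h2 : n * (s + 1) = n * s + n := by ring
        have e4 : m * d = d * m := mul_comm _ _
        omega
      have hsk' : s = k' := le_antisymm hsk hk's
      have h1 : n * k' = n * s := by rw [hsk']
      have e4 : m * d = d * m := mul_comm _ _
      omega
  exact ⟨iff1, iff1.trans iff2⟩

end
end
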